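/- arXiv:1504.00769 — 7 statements merged into one kernel-verified Lean document; each statement's English description precedes it below -/
import Mathlib

section
/- Let r, s ≥ 2 be integers and let A ⊆ 𝒫_{r,s} be down-closed with respect to the dominance order. Then the maximum of λ_A over the standard simplex 𝕊_s is attained at the uniform point, i.e., Λ_A = λ_A(1/s, …, 1/s). -/
/-- `𝒫_{r,s}`: non-increasing `s`-tuples of non-negative integers summing to `r`. -/
def Pset (r s : ℕ) : Set (Fin s → ℕ) :=
  {x | (∀ i j : Fin s, i ≤ j → x j ≤ x i) ∧ ∑ i, x i = r}

/-- The dominance order: `x ⪰ y` iff every initial segment of `x` has sum at least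
that of the corresponding initial segment of `y`. -/
def Dominates {s : ℕ} (x y : Fin s → ℕ) : Prop :=
  ∀ k : ℕ, ∑ i ∈ Finset.univ.filter (fun i : Fin s => (i : ℕ) < k), y i ≤
    ∑ i ∈ Finset.univ.filter (fun i : Fin s => (i : ℕ) < k), x i

/-- `A ⊆ 𝒫_{r,s}` is down-closed: `y ∈ A` whenever `x ∈ A`, `y ∈ 𝒫_{r,s}` and `x ⪰ y`. -/
def DownClosed (r s : ℕ) (A : Set (Fin s → ℕ)) : Prop :=
  ∀ x ∈ A, ∀ y ∈ Pset r s, Dominates x y → y ∈ A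

open Classical in
/-- `λ_A(x) = r! · Σ Π_i x_i^{d_i}/d_i!`, summed over all `s`-tuples `d` of non-negative
integers summing to `r` whose non-increasing rearrangement lies in `A` (equivalently,
for `A ⊆ 𝒫_{r,s}`, some rearrangement of `d` lies in `A`). -/
noncomputable def lamA (r s : ℕ) (A : Set (Fin s → ℕ)) (x : Fin s → ℝ) : ℝ :=
  ∑ d : Fin s → Fin (r + 1),
    if (∑ i, (d i : ℕ)) = r ∧ (∃ σ : Equiv.Perm (Fin s), (fun i => (d (σ i) : ℕ)) ∈ A) then
      (r.factorial : ℝ) * ∏ i, (x i) ^ (d i : ℕ) / ((d i : ℕ).factorial : ℝ)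
    else 0

/-- `Λ_A`: the maximum of `λ_A` over the standard simplex `𝕊_s`. -/
noncomputable def LamA (r s : ℕ) (A : Set (Fin s → ℕ)) : ℝ :=
  sSup (lamA r s A '' stdSimplex ℝ (Fin s))


open Finset

private lemma phi_hasDerivAt (m l : ℕ) (hl : 1 ≤ l) (hlm' : 2*l ≤ m) (p : ℝ) :
    HasDerivAt (fun p : ℝ => ∑ k ∈ Finset.Icc l (m - l), (m.choose k : ℝ) * (p^k * (1-p)^(m-k)))
      ((m * (m-1).choose (l-1) : ℕ) * (p^(l-1) * (1-p)^(m-l) - p^(m-l) * (1-p)^(l-1))) p := by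
  have key : ∀ k : ℕ, HasDerivAt (fun p : ℝ => (m.choose k : ℝ) * (p^k * (1-p)^(m-k)))
      (((m.choose k * k : ℕ) : ℝ) * (p^(k-1) * (1-p)^(m-k))
        - ((m.choose k * (m-k) : ℕ) : ℝ) * (p^k * (1-p)^(m-k-1))) p := by
    intro k
    have h1 : HasDerivAt (fun p : ℝ => p^k) (k * p^(k-1)) p := hasDerivAt_pow k p
    have h2' : HasDerivAt (fun p : ℝ => 1 - p) (-1) p := by
      simpa using (hasDerivAt_id p).const_sub (1:ℝ)
    have h2 : HasDerivAt (fun p : ℝ => (1-p)^(m-k))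
        ((((m-k : ℕ) : ℝ) * (1-p)^(m-k-1)) * (-1)) p :=
      (hasDerivAt_pow (m-k) (1-p)).comp p h2'
    have := (h1.fun_mul h2).const_mul ((m.choose k : ℝ))
    refine this.congr_deriv ?_
    push_cast
    ring
  have hD := HasDerivAt.fun_sum (fun k (_ : k ∈ Finset.Icc l (m-l)) => key k)
  set q := 1 - p with hq
  set g : ℕ → ℝ := fun k => ((m.choose k * k : ℕ) : ℝ) * (p^(k-1) * q^(m-k)) with hg
  have hsum : ∑ k ∈ Finset.Icc l (m-l), (((m.choose k * k : ℕ) : ℝ) * (p^(k-1) * q^(m-k))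
        - ((m.choose k * (m-k) : ℕ) : ℝ) * (p^k * q^(m-k-1)))
      = g l - g (m - l + 1) := by
    have hterm : ∀ k ∈ Finset.Icc l (m-l), (((m.choose k * k : ℕ) : ℝ) * (p^(k-1) * q^(m-k))
        - ((m.choose k * (m-k) : ℕ) : ℝ) * (p^k * q^(m-k-1))) = g k - g (k+1) := by
      intro k hk
      simp only [Finset.mem_Icc] at hk
      have hkm : k < m := by omega
      have hB : ((m.choose k * (m-k) : ℕ) : ℝ) * (p^k * q^(m-k-1)) = g (k+1) := by
        have hc : (m.choose (k+1) * (k+1)) = m.choose k * (m - k) := Nat.choose_succ_right_eq m k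
        simp only [hg, hc]
        rw [show (k+1) - 1 = k from rfl, show m - (k+1) = m - k - 1 from by omega]
      rw [hB]
    rw [Finset.sum_congr rfl hterm, ← Finset.Ico_add_one_right_eq_Icc, Finset.sum_Ico_eq_sum_range,
      show m - l + 1 - l = (m - 2*l) + 1 from by omega]
    have htel := Finset.sum_range_sub' (fun t => g (l + t)) (m - 2*l + 1)
    simp only [add_zero] at htel
    calc ∑ t ∈ Finset.range (m - 2*l + 1), (g (l + t) - g (l + t + 1))
        = g l - g (l + (m - 2*l + 1)) := by
          rw [← htel]; exact Finset.sum_congr rfl (fun t _ => by rw [add_assoc])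
      _ = g l - g (m - l + 1) := by rw [show l + (m - 2*l + 1) = m - l + 1 from by omega]
  rw [hsum] at hD
  have hgl : g l = ((m * (m-1).choose (l-1) : ℕ) : ℝ) * (p^(l-1) * q^(m-l)) := by
    simp only [hg]
    congr 2
    obtain ⟨l', rfl⟩ : ∃ l', l = l' + 1 := ⟨l - 1, by omega⟩
    obtain ⟨m', rfl⟩ : ∃ m', m = m' + 1 := ⟨m - 1, by omega⟩
    simpa [Nat.mul_comm] using (Nat.add_one_mul_choose_eq m' l').symm
  have hgu : g (m - l + 1) = ((m * (m-1).choose (l-1) : ℕ) : ℝ) * (p^(m-l) * q^(l-1)) := by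
    simp only [hg]
    have h1 : m.choose (m - l + 1) * (m - l + 1) = m * (m-1).choose (l-1) := by
      obtain ⟨m', rfl⟩ : ∃ m', m = m' + 1 := ⟨m - 1, by omega⟩
      have h0 := Nat.add_one_mul_choose_eq m' (m' - l + 1)
      have e1 : m' + 1 - l + 1 = m' - l + 1 + 1 := by omega
      have h4 : m'.choose (m' - l + 1) = m'.choose (l - 1) := by
        rw [← Nat.choose_symm (by omega : m' - l + 1 ≤ m'), show m' - (m' - l + 1) = l - 1 from by omega]
      rw [e1, ← h0, h4]
      norm_num
    rw [h1, show m - l + 1 - 1 = m - l from by omega, show m - (m - l + 1) = l - 1 from by omega]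
  rw [hgl, hgu] at hD
  refine hD.congr_deriv ?_
  ring

private lemma phi_le (m l : ℕ) (p : ℝ) (hp0 : 0 ≤ p) (hp1 : p ≤ 1) :
    ∑ k ∈ Finset.Icc l (m - l), (m.choose k : ℝ) * (p^k * (1-p)^(m-k))
      ≤ ∑ k ∈ Finset.Icc l (m - l), (m.choose k : ℝ) * ((1/2:ℝ))^m := by
  rcases Nat.lt_or_ge m (2*l) with hml | hml
  · rw [show Finset.Icc l (m-l) = ∅ from by
      apply Finset.Icc_eq_empty; omega]
    simp
  rcases Nat.eq_zero_or_pos l with rfl | hl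
  · -- full sum: both sides equal 1
    have h1 : ∑ k ∈ Finset.Icc 0 (m - 0), (m.choose k : ℝ) * (p^k * (1-p)^(m-k)) = 1 := by
      have := add_pow p (1-p) m
      simp only [add_sub_cancel, one_pow] at this
      rw [show Finset.Icc 0 (m-0) = Finset.range (m+1) from by
        rw [Nat.sub_zero, ← Finset.Ico_add_one_right_eq_Icc, ← Finset.range_eq_Ico]]
      calc ∑ k ∈ Finset.range (m+1), (m.choose k : ℝ) * (p^k * (1-p)^(m-k))
          = ∑ k ∈ Finset.range (m+1), p^k * (1-p)^(m-k) * (m.choose k : ℝ) := by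
            exact Finset.sum_congr rfl (fun k _ => by ring)
        _ = 1 := by rw [← this]
    have h2 : ∑ k ∈ Finset.Icc 0 (m - 0), (m.choose k : ℝ) * ((1/2:ℝ))^m = 1 := by
      have hc : ∑ k ∈ Finset.range (m+1), m.choose k = 2^m := Nat.sum_range_choose m
      rw [show Finset.Icc 0 (m-0) = Finset.range (m+1) from by
        rw [Nat.sub_zero, ← Finset.Ico_add_one_right_eq_Icc, ← Finset.range_eq_Ico]]
      rw [← Finset.sum_mul]
      rw [show ∑ k ∈ Finset.range (m+1), (m.choose k : ℝ) = ((2:ℝ))^m from by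
        rw [← Nat.cast_sum]; rw [hc]; push_cast; ring]
      rw [div_pow, one_pow]
      field_simp
    rw [h1, h2]
  · -- calculus case
    set Φ : ℝ → ℝ := fun p => ∑ k ∈ Finset.Icc l (m - l), (m.choose k : ℝ) * (p^k * (1-p)^(m-k))
      with hΦ
    have hderiv : ∀ p : ℝ, HasDerivAt Φ
        ((m * (m-1).choose (l-1) : ℕ) * (p^(l-1) * (1-p)^(m-l) - p^(m-l) * (1-p)^(l-1))) p :=
      fun p => phi_hasDerivAt m l hl hml p
    have hdiff : ∀ p : ℝ, DifferentiableAt ℝ Φ p := fun p => (hderiv p).differentiableAt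
    have hcont : Continuous Φ := by
      apply continuous_iff_continuousAt.mpr
      exact fun p => (hdiff p).continuousAt
    have hDeq : ∀ p : ℝ, deriv Φ p
        = (m * (m-1).choose (l-1) : ℕ) * (p^(l-1) * (1-p)^(m-l) - p^(m-l) * (1-p)^(l-1)) :=
      fun p => (hderiv p).deriv
    have hexp : m - l = (l-1) + (m - 2*l + 1) := by omega
    have key : Φ p ≤ Φ (1/2) := by
      rcases le_or_gt p (1/2) with hp | hp
      · have hmono : MonotoneOn Φ (Set.Icc 0 (1/2:ℝ)) := by
          apply monotoneOn_of_deriv_nonneg (convex_Icc _ _) hcont.continuousOn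
            (fun x _ => (hdiff x).differentiableWithinAt)
          intro x hx
          rw [interior_Icc] at hx
          rw [hDeq]
          apply mul_nonneg (by positivity)
          rw [sub_nonneg]
          have hx0 : (0:ℝ) ≤ x := le_of_lt hx.1
          have hx1 : x ≤ 1 - x := by linarith [hx.2]
          have h1x : (0:ℝ) ≤ 1 - x := by linarith
          have e1 : x^(m-l) = x^(l-1) * x^(m-2*l+1) := by rw [← pow_add, ← hexp]
          have e2 : (1-x)^(m-l) = (1-x)^(l-1) * (1-x)^(m-2*l+1) := by rw [← pow_add, ← hexp]
          have hd : x^(m-2*l+1) ≤ (1-x)^(m-2*l+1) := pow_le_pow_left₀ hx0 hx1 _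
          rw [e1, e2]
          calc x^(l-1) * x^(m-2*l+1) * (1-x)^(l-1)
              = (x^(l-1) * (1-x)^(l-1)) * x^(m-2*l+1) := by ring
            _ ≤ (x^(l-1) * (1-x)^(l-1)) * (1-x)^(m-2*l+1) :=
                mul_le_mul_of_nonneg_left hd (by positivity)
            _ = x^(l-1) * ((1-x)^(l-1) * (1-x)^(m-2*l+1)) := by ring
        exact hmono ⟨hp0, hp⟩ ⟨by norm_num, le_refl _⟩ hp
      · have hanti : AntitoneOn Φ (Set.Icc (1/2:ℝ) 1) := by
          apply antitoneOn_of_deriv_nonpos (convex_Icc _ _) hcont.continuousOn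
            (fun x _ => (hdiff x).differentiableWithinAt)
          intro x hx
          rw [interior_Icc] at hx
          rw [hDeq]
          apply mul_nonpos_of_nonneg_of_nonpos (by positivity)
          rw [sub_nonpos]
          have h1x : (0:ℝ) ≤ 1 - x := by linarith [hx.2]
          have hx1 : 1 - x ≤ x := by linarith [hx.1]
          have hx0 : (0:ℝ) ≤ x := by linarith
          have e1 : x^(m-l) = x^(l-1) * x^(m-2*l+1) := by rw [← pow_add, ← hexp]
          have e2 : (1-x)^(m-l) = (1-x)^(l-1) * (1-x)^(m-2*l+1) := by rw [← pow_add, ← hexp]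
          have hd : (1-x)^(m-2*l+1) ≤ x^(m-2*l+1) := pow_le_pow_left₀ h1x hx1 _
          rw [e1, e2]
          calc x^(l-1) * ((1-x)^(l-1) * (1-x)^(m-2*l+1))
              = (x^(l-1) * (1-x)^(l-1)) * (1-x)^(m-2*l+1) := by ring
            _ ≤ (x^(l-1) * (1-x)^(l-1)) * x^(m-2*l+1) :=
                mul_le_mul_of_nonneg_left hd (by positivity)
            _ = x^(l-1) * x^(m-2*l+1) * (1-x)^(l-1) := by ring
        exact hanti ⟨le_refl _, by norm_num⟩ ⟨le_of_lt hp, hp1⟩ (le_of_lt hp)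
    calc Φ p ≤ Φ (1/2) := key
      _ = ∑ k ∈ Finset.Icc l (m - l), (m.choose k : ℝ) * ((1/2:ℝ))^m := by
        apply Finset.sum_congr rfl
        intro k hk
        simp only [Finset.mem_Icc] at hk
        congr 1
        rw [show (1:ℝ) - 1/2 = 1/2 from by norm_num, ← pow_add,
          show k + (m - k) = m from by omega]

private lemma key_pair (m l : ℕ) (a b : ℝ) (ha : 0 ≤ a) (hb : 0 ≤ b) :
    ∑ k ∈ Finset.Icc l (m - l), (m.choose k : ℝ) * (a^k * b^(m-k))
      ≤ ∑ k ∈ Finset.Icc l (m - l), (m.choose k : ℝ) * ((a+b)/2)^m := by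
  rcases eq_or_lt_of_le (by positivity : (0:ℝ) ≤ a + b) with hc | hc
  · have ha0 : a = 0 := by linarith
    have hb0 : b = 0 := by linarith
    subst ha0; subst hb0
    apply Finset.sum_le_sum
    intro k hk
    simp only [Finset.mem_Icc] at hk
    rcases Nat.eq_zero_or_pos m with rfl | hm
    · have hk0 : k = 0 := by omega
      simp [hk0]
    · have h1 : (0:ℝ)^k * (0:ℝ)^(m-k) = 0 := by
        rcases Nat.eq_zero_or_pos k with rfl | hkpos
        · rw [zero_pow (by omega : m - 0 ≠ 0)]; ring
        · rw [zero_pow (by omega : k ≠ 0)]; ring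
      rw [h1, show (0:ℝ)+0 = 0 from by ring, show (0:ℝ)/2 = 0 from by ring,
        zero_pow (by omega : m ≠ 0)]
  · set c := a + b with hcdef
    set p := a / c with hpdef
    have hp0 : 0 ≤ p := by positivity
    have hp1 : p ≤ 1 := by rw [hpdef, div_le_one hc]; linarith
    have hap : a = c * p := by rw [hpdef]; field_simp
    have hbp : b = c * (1 - p) := by rw [hpdef]; field_simp; ring
    have hterm : ∀ k ∈ Finset.Icc l (m - l),
        (m.choose k : ℝ) * (a^k * b^(m-k)) = c^m * ((m.choose k : ℝ) * (p^k * (1-p)^(m-k))) := by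
      intro k hk
      simp only [Finset.mem_Icc] at hk
      rw [hap, hbp, mul_pow, mul_pow, show c^k * p^k * (c^(m-k) * (1-p)^(m-k))
        = c^(k + (m-k)) * (p^k * (1-p)^(m-k)) from by rw [pow_add]; ring,
        show k + (m-k) = m from by omega]
      ring
    rw [Finset.sum_congr rfl hterm, ← Finset.mul_sum]
    have hphi := phi_le m l p hp0 hp1
    calc c^m * ∑ k ∈ Finset.Icc l (m - l), (m.choose k : ℝ) * (p^k * (1-p)^(m-k))
        ≤ c^m * ∑ k ∈ Finset.Icc l (m - l), (m.choose k : ℝ) * ((1/2:ℝ))^m :=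
          mul_le_mul_of_nonneg_left hphi (by positivity)
      _ = ∑ k ∈ Finset.Icc l (m - l), (m.choose k : ℝ) * ((a+b)/2)^m := by
          rw [Finset.mul_sum]
          apply Finset.sum_congr rfl
          intro k _
          rw [show ((a+b)/2 : ℝ) = c * (1/2) from by rw [hcdef]; ring, mul_pow]
          ring

private lemma key_pair' (m l : ℕ) (a b : ℝ) (ha : 0 ≤ a) (hb : 0 ≤ b) :
    ∑ k ∈ Finset.Icc l (m - l), a^k * b^(m-k) / ((k.factorial * (m-k).factorial : ℕ) : ℝ)
      ≤ ∑ k ∈ Finset.Icc l (m - l), ((a+b)/2)^m / ((k.factorial * (m-k).factorial : ℕ) : ℝ) := by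
  have hfact : ∀ k ∈ Finset.Icc l (m - l), ∀ X : ℝ,
      X / ((k.factorial * (m-k).factorial : ℕ) : ℝ) = (m.choose k : ℝ) * X / (m.factorial : ℝ) := by
    intro k hk X
    simp only [Finset.mem_Icc] at hk
    have hkm : k ≤ m := le_trans hk.2 (Nat.sub_le _ _)
    have h1 : m.choose k * (k.factorial * (m-k).factorial) = m.factorial := by
      rw [← Nat.mul_assoc]; exact Nat.choose_mul_factorial_mul_factorial hkm
    have h2 : ((k.factorial * (m-k).factorial : ℕ) : ℝ) ≠ 0 := by positivity
    have h3 : ((m.factorial : ℕ) : ℝ) ≠ 0 := by positivity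
    rw [div_eq_div_iff h2 h3, ← h1]
    push_cast
    ring
  rw [Finset.sum_congr rfl (fun k hk => hfact k hk (a^k * b^(m-k))),
    Finset.sum_congr rfl (fun k hk => hfact k hk (((a+b)/2)^m))]
  have := key_pair m l a b ha hb
  rw [show ∀ S : Finset ℕ, ∀ f : ℕ → ℝ, ∑ k ∈ S, f k / (m.factorial : ℝ)
      = (∑ k ∈ S, f k) / (m.factorial : ℝ) from fun S f => (Finset.sum_div S f _).symm,
    show ∀ S : Finset ℕ, ∀ f : ℕ → ℝ, ∑ k ∈ S, f k / (m.factorial : ℝ)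
      = (∑ k ∈ S, f k) / (m.factorial : ℝ) from fun S f => (Finset.sum_div S f _).symm]
  gcongr

private def Pref (s k : ℕ) : Finset (Fin s) := Finset.univ.filter (fun i : Fin s => (i : ℕ) < k)

private lemma card_Pref {s k : ℕ} (hks : k ≤ s) : (Pref s k).card = k := by
  rcases lt_or_eq_of_le hks with h | h
  · have : Pref s k = Finset.Iio (⟨k, h⟩ : Fin s) := by
      ext i
      simp [Pref, Finset.mem_Iio, Fin.lt_def]
    rw [this, Fin.card_Iio]
  · subst h
    have : Pref k k = Finset.univ := by
      ext i
      simp [Pref, i.isLt]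
    rw [this]
    simp

private lemma card_Pref_le (s k : ℕ) : (Pref s k).card ≤ k := by
  rcases le_or_gt k s with h | h
  · exact le_of_eq (card_Pref h)
  · calc (Pref s k).card ≤ (Finset.univ : Finset (Fin s)).card := Finset.card_le_univ _
      _ = s := by simp
      _ ≤ k := le_of_lt h

private lemma Pref_mono (s : ℕ) {k k' : ℕ} (h : k ≤ k') : Pref s k ⊆ Pref s k' := by
  intro i hi
  simp only [Pref, Finset.mem_filter] at hi ⊢
  exact ⟨hi.1, lt_of_lt_of_le hi.2 h⟩

private lemma sorted_top {s : ℕ} (v : Fin s → ℕ) (hv : ∀ a b : Fin s, a ≤ b → v b ≤ v a)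
    (T : Finset (Fin s)) : ∑ l ∈ T, v l ≤ ∑ l ∈ Pref s T.card, v l := by
  set k := T.card with hk
  set F := Pref s k with hF
  have hks : k ≤ s := by
    rw [hk]
    calc T.card ≤ Finset.univ.card := Finset.card_le_univ T
      _ = s := by simp
  have hcardF : F.card = k := card_Pref hks
  have hsplitT : ∑ l ∈ T, v l = ∑ l ∈ T ∩ F, v l + ∑ l ∈ T \ F, v l :=
    (Finset.sum_inter_add_sum_sdiff T F v).symm
  have hsplitF : ∑ l ∈ F, v l = ∑ l ∈ F ∩ T, v l + ∑ l ∈ F \ T, v l :=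
    (Finset.sum_inter_add_sum_sdiff F T v).symm
  have hcards : (T \ F).card = (F \ T).card := by
    have h1 := Finset.card_sdiff_add_card_inter T F
    have h2 := Finset.card_sdiff_add_card_inter F T
    rw [Finset.inter_comm F T] at h2
    omega
  have hkey : ∑ l ∈ T \ F, v l ≤ ∑ l ∈ F \ T, v l := by
    rcases Finset.eq_empty_or_nonempty (F \ T) with he | hne
    · have : (T \ F) = ∅ := Finset.card_eq_zero.mp (by rw [hcards, he]; simp)
      rw [this, he]
    · set b0 := (F \ T).max' hne with hb0
      have hb0F : b0 ∈ F \ T := (F \ T).max'_mem hne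
      have hb0lt : (b0 : ℕ) < k := by
        have := (Finset.mem_sdiff.mp hb0F).1
        simp only [hF, Pref, Finset.mem_filter] at this
        exact this.2
      have h1 : ∑ l ∈ T \ F, v l ≤ (T \ F).card * v b0 := by
        have : ∀ l ∈ T \ F, v l ≤ v b0 := by
          intro l hl
          apply hv
          have : ¬ ((l : ℕ) < k) := by
            intro hlt
            exact (Finset.mem_sdiff.mp hl).2 (by simp [hF, Pref, hlt])
          exact Fin.le_def.mpr (by omega)
        calc ∑ l ∈ T \ F, v l ≤ ∑ _l ∈ T \ F, v b0 := Finset.sum_le_sum this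
          _ = (T \ F).card * v b0 := by rw [Finset.sum_const]; ring
      have h2 : (F \ T).card * v b0 ≤ ∑ l ∈ F \ T, v l := by
        have : ∀ l ∈ F \ T, v b0 ≤ v l := by
          intro l hl
          exact hv l b0 (Finset.le_max' _ l hl)
        calc (F \ T).card * v b0 = ∑ _l ∈ F \ T, v b0 := by rw [Finset.sum_const]; ring
          _ ≤ ∑ l ∈ F \ T, v l := Finset.sum_le_sum this
      calc ∑ l ∈ T \ F, v l ≤ (T \ F).card * v b0 := h1
        _ = (F \ T).card * v b0 := by rw [hcards]
        _ ≤ ∑ l ∈ F \ T, v l := h2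
  rw [hsplitT, hsplitF, Finset.inter_comm F T]
  omega

private lemma sum_le_sorted {s : ℕ} (d : Fin s → ℕ) (σ : Equiv.Perm (Fin s))
    (hmono : ∀ a b : Fin s, a ≤ b → d (σ b) ≤ d (σ a)) (T : Finset (Fin s)) :
    ∑ l ∈ T, d l ≤ ∑ l ∈ Pref s T.card, d (σ l) := by
  have h1 : ∑ l ∈ T, d l = ∑ l ∈ T.map σ.symm.toEmbedding, d (σ l) := by
    rw [Finset.sum_map]
    apply Finset.sum_congr rfl
    intro l _
    simp
  have h2 : (T.map σ.symm.toEmbedding).card = T.card := Finset.card_map _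
  rw [h1, ← h2]
  exact sorted_top (fun l => d (σ l)) hmono _

private lemma exists_antitone_perm {n : ℕ} (w : Fin n → ℕ) :
    ∃ σ : Equiv.Perm (Fin n), ∀ a b : Fin n, a ≤ b → w (σ b) ≤ w (σ a) := by
  refine ⟨(Fin.revPerm : Equiv.Perm (Fin n)).trans (Tuple.sort w), ?_⟩
  intro a b hab
  have hmono := Tuple.monotone_sort w
  have : b.rev ≤ a.rev := Fin.rev_le_rev.mpr hab
  simpa using hmono this

private lemma sum_split_two {s : ℕ} (d : Fin s → ℕ) {i j : Fin s} (hij : i ≠ j)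
    (T : Finset (Fin s)) (hi : i ∈ T) (hj : j ∈ T) :
    ∑ l ∈ T, d l = d i + d j + ∑ l ∈ (T.erase i).erase j, d l := by
  have hjT : j ∈ T.erase i := Finset.mem_erase.mpr ⟨Ne.symm hij, hj⟩
  rw [← Finset.add_sum_erase T d hi, ← Finset.add_sum_erase (T.erase i) d hjT]
  ring

private lemma move_le {s : ℕ} (d d' : Fin s → ℕ) (i j : Fin s) (hij : i ≠ j)
    (hpair : d' i + d' j = d i + d j)
    (hoff : ∀ l, l ≠ i → l ≠ j → d' l = d l)
    (hmax : max (d' i) (d' j) ≤ max (d i) (d j))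
    (T : Finset (Fin s)) :
    ∃ T' : Finset (Fin s), T'.card = T.card ∧ ∑ l ∈ T, d' l ≤ ∑ l ∈ T', d l := by
  have hoff' : ∀ U : Finset (Fin s), i ∉ U → j ∉ U → ∑ l ∈ U, d' l = ∑ l ∈ U, d l := by
    intro U hiU hjU
    apply Finset.sum_congr rfl
    intro l hl
    exact hoff l (fun h => hiU (h ▸ hl)) (fun h => hjU (h ▸ hl))
  by_cases hiT : i ∈ T <;> by_cases hjT : j ∈ T
  · -- both in T
    refine ⟨T, rfl, le_of_eq ?_⟩
    rw [sum_split_two d' hij T hiT hjT, sum_split_two d hij T hiT hjT, hpair,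
      hoff' _ (fun h => (Finset.mem_erase.mp (Finset.mem_erase.mp h).2).1 rfl)
        (fun h => (Finset.mem_erase.mp h).1 rfl)]
  · -- i ∈ T, j ∉ T
    have hsplit : ∑ l ∈ T, d' l = d' i + ∑ l ∈ T.erase i, d l := by
      rw [← Finset.add_sum_erase T d' hiT]
      congr 1
      exact hoff' _ (Finset.notMem_erase i T) (fun h => hjT (Finset.mem_of_mem_erase h))
    have hd'i : d' i ≤ max (d i) (d j) := le_trans (le_max_left _ _) hmax
    rcases le_or_gt (d j) (d i) with hc | hc
    · refine ⟨T, rfl, ?_⟩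
      rw [hsplit, ← Finset.add_sum_erase T d hiT]
      have : d' i ≤ d i := by omega
      omega
    · refine ⟨insert j (T.erase i), ?_, ?_⟩
      · rw [Finset.card_insert_of_notMem
          (fun h => hjT (Finset.mem_of_mem_erase h)), Finset.card_erase_of_mem hiT]
        have : 0 < T.card := Finset.card_pos.mpr ⟨i, hiT⟩
        omega
      · rw [hsplit, Finset.sum_insert (fun h => hjT (Finset.mem_of_mem_erase h))]
        have : d' i ≤ d j := by omega
        omega
  · -- j ∈ T, i ∉ T
    have hsplit : ∑ l ∈ T, d' l = d' j + ∑ l ∈ T.erase j, d l := by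
      rw [← Finset.add_sum_erase T d' hjT]
      congr 1
      exact hoff' _ (fun h => hiT (Finset.mem_of_mem_erase h)) (Finset.notMem_erase j T)
    have hd'j : d' j ≤ max (d i) (d j) := le_trans (le_max_right _ _) hmax
    rcases le_or_gt (d i) (d j) with hc | hc
    · refine ⟨T, rfl, ?_⟩
      rw [hsplit, ← Finset.add_sum_erase T d hjT]
      have : d' j ≤ d j := by omega
      omega
    · refine ⟨insert i (T.erase j), ?_, ?_⟩
      · rw [Finset.card_insert_of_notMem
          (fun h => hiT (Finset.mem_of_mem_erase h)), Finset.card_erase_of_mem hjT]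
        have : 0 < T.card := Finset.card_pos.mpr ⟨j, hjT⟩
        omega
      · rw [hsplit, Finset.sum_insert (fun h => hiT (Finset.mem_of_mem_erase h))]
        have : d' j ≤ d i := by omega
        omega
  · refine ⟨T, rfl, le_of_eq (hoff' T hiT hjT)⟩

private lemma balance {r s : ℕ} {A : Set (Fin s → ℕ)} (hA : A ⊆ Pset r s)
    (hdc : DownClosed r s A) (d d' : Fin s → ℕ) (i j : Fin s) (hij : i ≠ j)
    (hpair : d' i + d' j = d i + d j)
    (hoff : ∀ l, l ≠ i → l ≠ j → d' l = d l)
    (hmax : max (d' i) (d' j) ≤ max (d i) (d j))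
    (hex : ∃ σ : Equiv.Perm (Fin s), d ∘ σ ∈ A) :
    ∃ σ : Equiv.Perm (Fin s), d' ∘ σ ∈ A := by
  obtain ⟨σ₀, h0⟩ := hex
  have he : d ∘ σ₀ ∈ Pset r s := hA h0
  have hmono0 : ∀ a b : Fin s, a ≤ b → d (σ₀ b) ≤ d (σ₀ a) := fun a b hab => he.1 a b hab
  have hsumd : ∑ l, d l = r := by
    have := he.2
    rwa [show ∑ l, (d ∘ σ₀) l = ∑ l, d l from Equiv.sum_comp σ₀ d] at this
  have hsumd' : ∑ l, d' l = r := by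
    have hiu : i ∈ (Finset.univ : Finset (Fin s)) := Finset.mem_univ i
    have hju : j ∈ (Finset.univ : Finset (Fin s)) := Finset.mem_univ j
    rw [sum_split_two d' hij _ hiu hju, hpair,
      Finset.sum_congr rfl (fun l hl => hoff l
        (Finset.mem_erase.mp (Finset.mem_erase.mp hl).2).1
        (Finset.mem_erase.mp hl).1),
      ← sum_split_two d hij _ hiu hju]
    exact hsumd
  obtain ⟨σ₁, h1⟩ := exists_antitone_perm d'
  have hsum1 : ∑ l, (d' ∘ σ₁) l = r := by
    rw [show ∑ l, (d' ∘ σ₁) l = ∑ l, d' l from Equiv.sum_comp σ₁ d']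
    exact hsumd'
  have hPset1 : d' ∘ σ₁ ∈ Pset r s := ⟨fun a b hab => h1 a b hab, hsum1⟩
  have hdom : Dominates (d ∘ σ₀) (d' ∘ σ₁) := by
    intro k
    have e1 : ∑ l ∈ Finset.univ.filter (fun i : Fin s => (i : ℕ) < k), (d' ∘ σ₁) l
        = ∑ l ∈ (Pref s k).map σ₁.toEmbedding, d' l := by
      rw [Finset.sum_map]
      rfl
    rw [e1]
    set T := (Pref s k).map σ₁.toEmbedding with hT
    obtain ⟨T', hcard, hle⟩ := move_le d d' i j hij hpair hoff hmax T
    have h2 : ∑ l ∈ T', d l ≤ ∑ l ∈ Pref s T'.card, d (σ₀ l) := sum_le_sorted d σ₀ hmono0 T'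
    have h3 : T'.card ≤ k := by
      rw [hcard, hT, Finset.card_map]
      exact card_Pref_le s k
    have h4 : ∑ l ∈ Pref s T'.card, d (σ₀ l) ≤ ∑ l ∈ Pref s k, d (σ₀ l) :=
      Finset.sum_le_sum_of_subset (Pref_mono s h3)
    calc ∑ l ∈ T, d' l ≤ ∑ l ∈ T', d l := hle
      _ ≤ ∑ l ∈ Pref s T'.card, d (σ₀ l) := h2
      _ ≤ ∑ l ∈ Pref s k, d (σ₀ l) := h4
      _ = ∑ l ∈ Finset.univ.filter (fun i : Fin s => (i : ℕ) < k), (d ∘ σ₀) l := rfl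
  exact ⟨σ₁, hdc (d ∘ σ₀) h0 (d' ∘ σ₁) hPset1 hdom⟩

private lemma prod_split_two {s : ℕ} (g : Fin s → ℝ) {i j : Fin s} (hij : i ≠ j) :
    ∏ l, g l = g i * g j * ∏ l ∈ (Finset.univ.erase i).erase j, g l := by
  have hj : j ∈ Finset.univ.erase i := Finset.mem_erase.mpr ⟨Ne.symm hij, Finset.mem_univ j⟩
  rw [← Finset.mul_prod_erase Finset.univ g (Finset.mem_univ i),
      ← Finset.mul_prod_erase (Finset.univ.erase i) g hj, mul_assoc]

open Classical in
private lemma lamA_avg_le (r s : ℕ) (A : Set (Fin s → ℕ)) (hA : A ⊆ Pset r s)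
    (hdc : DownClosed r s A) (x : Fin s → ℝ) (hx : ∀ l, 0 ≤ x l) (i j : Fin s) (hij : i ≠ j) :
    lamA r s A x ≤ lamA r s A
      (Function.update (Function.update x i ((x i + x j)/2)) j ((x i + x j)/2)) := by
  set c2 : ℝ := (x i + x j)/2 with hc2
  set y : Fin s → ℝ := Function.update (Function.update x i c2) j c2 with hy
  have hyi : y i = c2 := by rw [hy, Function.update_of_ne hij, Function.update_self]
  have hyj : y j = c2 := by rw [hy, Function.update_self]
  have hyoff : ∀ l, l ≠ i → l ≠ j → y l = x l := by
    intro l hli hlj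
    rw [hy, Function.update_of_ne hlj, Function.update_of_ne hli]
  have hc2nn : 0 ≤ c2 := by
    rw [hc2]
    have h1 := hx i
    have h2 := hx j
    linarith
  have hy0 : ∀ l, 0 ≤ y l := by
    intro l
    by_cases h1 : l = j
    · rw [h1, hyj]; exact hc2nn
    by_cases h2 : l = i
    · rw [h2, hyi]; exact hc2nn
    · rw [hyoff l h2 h1]; exact hx l
  set f : (Fin s → ℝ) → (Fin s → Fin (r+1)) → ℝ := fun w d =>
    if (∑ l, (d l : ℕ)) = r ∧ (∃ σ : Equiv.Perm (Fin s), (fun l => (d (σ l) : ℕ)) ∈ A) then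
      (r.factorial : ℝ) * ∏ l, (w l) ^ (d l : ℕ) / ((d l : ℕ).factorial : ℝ)
    else 0 with hf
  have hlam : ∀ w, lamA r s A w = ∑ d : Fin s → Fin (r+1), f w d := fun w => rfl
  set π : (Fin s → Fin (r+1)) → (Fin s → Fin (r+1)) :=
    fun d => Function.update (Function.update d i 0) j 0 with hπ
  have hfib : ∀ w, lamA r s A w
      = ∑ e : Fin s → Fin (r+1), ∑ d ∈ Finset.univ.filter (fun d => π d = e), f w d := by
    intro w
    rw [hlam w, ← Finset.sum_fiberwise Finset.univ π (f w)]
  rw [hfib x, hfib y]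
  apply Finset.sum_le_sum
  intro e _
  by_cases he : e i = 0 ∧ e j = 0
  case neg =>
    have hempty : Finset.univ.filter (fun d => π d = e) = ∅ := by
      apply Finset.filter_eq_empty_iff.mpr
      intro d _
      intro hd
      apply he
      constructor
      · rw [← hd]
        simp only [hπ, Function.update_of_ne hij, Function.update_self]
      · rw [← hd]
        simp only [hπ, Function.update_self]
    rw [hempty]
    simp
  case pos =>
  obtain ⟨hei, hej⟩ := he
  set upd : Fin (r+1) → Fin (r+1) → (Fin s → Fin (r+1)) :=
    fun a b => Function.update (Function.update e i a) j b with hupd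
  have hupd_i : ∀ a b, upd a b i = a := by
    intro a b
    simp only [hupd, Function.update_of_ne hij, Function.update_self]
  have hupd_j : ∀ a b, upd a b j = b := by
    intro a b
    simp only [hupd, Function.update_self]
  have hupd_off : ∀ a b, ∀ l, l ≠ i → l ≠ j → upd a b l = e l := by
    intro a b l hli hlj
    simp only [hupd, Function.update_of_ne hlj, Function.update_of_ne hli]
  have hfix : ∀ d : Fin s → Fin (r+1), π d = e → upd (d i) (d j) = d := by
    intro d hd
    funext l
    by_cases h1 : l = j
    · rw [h1]; exact hupd_j _ _
    by_cases h2 : l = i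
    · rw [h2]; exact hupd_i _ _
    · rw [hupd_off _ _ l h2 h1, ← hd]
      simp only [hπ, Function.update_of_ne h1, Function.update_of_ne h2]
  have hπupd : ∀ a b, π (upd a b) = e := by
    intro a b
    funext l
    by_cases h1 : l = j
    · rw [h1]
      simp only [hπ, Function.update_self]
      exact hej.symm
    by_cases h2 : l = i
    · rw [h2]
      simp only [hπ, Function.update_of_ne hij, Function.update_self]
      exact hei.symm
    · simp only [hπ, Function.update_of_ne h1, Function.update_of_ne h2]
      exact hupd_off _ _ l h2 h1
  have hbij : ∀ w, ∑ d ∈ Finset.univ.filter (fun d => π d = e), f w d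
      = ∑ ab : Fin (r+1) × Fin (r+1), f w (upd ab.1 ab.2) := by
    intro w
    apply Finset.sum_bij' (i := fun d _ => ((d i, d j) : Fin (r+1) × Fin (r+1)))
      (j := fun ab _ => upd ab.1 ab.2)
    · intro d _; exact Finset.mem_univ _
    · intro ab _
      simp only [Finset.mem_filter]
      exact ⟨Finset.mem_univ _, hπupd ab.1 ab.2⟩
    · intro d hd
      simp only [Finset.mem_filter] at hd
      exact hfix d hd.2
    · intro ab _
      show (upd ab.1 ab.2 i, upd ab.1 ab.2 j) = ab
      rw [hupd_i, hupd_j]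
    · intro d hd
      simp only [Finset.mem_filter] at hd
      exact congrArg (f w) (hfix d hd.2).symm
  rw [hbij x, hbij y]
  set S : ℕ := ∑ l ∈ (Finset.univ.erase i).erase j, (e l : ℕ) with hS
  have hsum_upd : ∀ a b : Fin (r+1),
      (∑ l, ((upd a b l : Fin (r+1)) : ℕ)) = (a : ℕ) + (b : ℕ) + S := by
    intro a b
    rw [sum_split_two (fun l => ((upd a b l : Fin (r+1)) : ℕ)) hij Finset.univ
      (Finset.mem_univ i) (Finset.mem_univ j), hupd_i, hupd_j]
    congr 1
    rw [hS]
    apply Finset.sum_congr rfl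
    intro l hl
    have h1 : l ≠ j := (Finset.mem_erase.mp hl).1
    have h2 : l ≠ i := (Finset.mem_erase.mp (Finset.mem_erase.mp hl).2).1
    rw [hupd_off a b l h2 h1]
  clear_value S
  clear hS
  by_cases hSr : S ≤ r
  case neg =>
    have hzero : ∀ w, ∀ ab : Fin (r+1) × Fin (r+1), f w (upd ab.1 ab.2) = 0 := by
      intro w ab
      simp only [hf]
      apply if_neg
      intro hcond
      have := hcond.1
      rw [hsum_upd ab.1 ab.2] at this
      omega
    rw [Finset.sum_congr rfl (fun ab _ => hzero x ab),
      Finset.sum_congr rfl (fun ab _ => hzero y ab)]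
  case pos =>
  obtain ⟨m, hmS⟩ : ∃ m, m + S = r := ⟨r - S, by omega⟩
  have hmr : m ≤ r := by omega
  set D : ℕ → (Fin s → Fin (r+1)) := fun k => upd (Fin.ofNat (r+1) k) (Fin.ofNat (r+1) (m - k))
    with hD
  have hDval_i : ∀ k, k ≤ m → ((D k i : Fin (r+1)) : ℕ) = k := by
    intro k hk
    simp only [hD, hupd_i]
    show k % (r+1) = k
    exact Nat.mod_eq_of_lt (by omega)
  have hDval_j : ∀ k, k ≤ m → ((D k j : Fin (r+1)) : ℕ) = m - k := by
    intro k hk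
    simp only [hD, hupd_j]
    show (m - k) % (r+1) = m - k
    exact Nat.mod_eq_of_lt (by omega)
  have hDab : ∀ ab : Fin (r+1) × Fin (r+1), (ab.1 : ℕ) + (ab.2 : ℕ) = m →
      upd ab.1 ab.2 = D ((ab.1 : ℕ)) := by
    intro ab hab
    simp only [hD]
    have h1 : Fin.ofNat (r+1) ((ab.1 : ℕ)) = ab.1 := by
      apply Fin.ext
      show (ab.1 : ℕ) % (r+1) = (ab.1 : ℕ)
      exact Nat.mod_eq_of_lt ab.1.isLt
    have h2 : Fin.ofNat (r+1) (m - (ab.1 : ℕ)) = ab.2 := by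
      apply Fin.ext
      show (m - (ab.1 : ℕ)) % (r+1) = (ab.2 : ℕ)
      rw [Nat.mod_eq_of_lt (by omega)]
      have := ab.2.isLt
      omega
    rw [h1, h2]
  have hreindex : ∀ w, ∑ ab : Fin (r+1) × Fin (r+1), f w (upd ab.1 ab.2)
      = ∑ k ∈ Finset.range (m+1), f w (D k) := by
    intro w
    have hne_side : ∀ ab ∈ (Finset.univ : Finset (Fin (r+1) × Fin (r+1))),
        f w (upd ab.1 ab.2) ≠ 0 → (ab.1 : ℕ) + (ab.2 : ℕ) = m := by
      intro ab _ hne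
      by_contra hcon
      apply hne
      simp only [hf]
      apply if_neg
      intro hcond
      apply hcon
      have := hcond.1
      rw [hsum_upd ab.1 ab.2] at this
      omega
    rw [← Finset.sum_filter_of_ne (p := fun ab : Fin (r+1) × Fin (r+1) =>
        (ab.1 : ℕ) + (ab.2 : ℕ) = m) (s := Finset.univ)
        (f := fun ab : Fin (r+1) × Fin (r+1) => f w (upd ab.1 ab.2)) hne_side]
    apply Finset.sum_bij' (i := fun (ab : Fin (r+1) × Fin (r+1)) _ => ((ab.1 : ℕ)))
      (j := fun k hk => (((⟨k, by
          simp only [Finset.mem_range] at hk; omega⟩ : Fin (r+1)),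
        (⟨m - k, by omega⟩ : Fin (r+1))) : Fin (r+1) × Fin (r+1)))
    case hi =>
      intro ab hab
      simp only [Finset.mem_filter] at hab
      simp only [Finset.mem_range]
      omega
    case hj =>
      intro k hk
      simp only [Finset.mem_filter]
      refine ⟨Finset.mem_univ _, ?_⟩
      simp only [Finset.mem_range] at hk
      show k + (m - k) = m
      omega
    case left_neg =>
      intro ab hab
      simp only [Finset.mem_filter] at hab
      have h2 : (ab.1 : ℕ) < r + 1 := ab.1.isLt
      rcases ab with ⟨a, b⟩
      simp only [Prod.mk.injEq]
      constructor
      · trivial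
      · apply Fin.ext
        show m - (a : ℕ) = (b : ℕ)
        simp only at hab
        omega
    case right_neg =>
      intro k hk
      rfl
    case h =>
      intro ab hab
      simp only [Finset.mem_filter] at hab
      exact congrArg (f w) (hDab ab hab.2)
  rw [hreindex x, hreindex y]
  set P : ℕ → Prop := fun k =>
    ∃ σ : Equiv.Perm (Fin s), (fun l => ((D k (σ l) : Fin (r+1)) : ℕ)) ∈ A with hP
  have hcond_iff : ∀ k ∈ Finset.range (m+1),
      (((∑ l, ((D k l : Fin (r+1)) : ℕ)) = r
        ∧ (∃ σ : Equiv.Perm (Fin s), (fun l => ((D k (σ l) : Fin (r+1)) : ℕ)) ∈ A)) ↔ P k) := by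
    intro k hk
    simp only [Finset.mem_range] at hk
    have h1 : (∑ l, ((D k l : Fin (r+1)) : ℕ)) = r := by
      simp only [hD]
      rw [hsum_upd]
      show k % (r+1) + (m-k) % (r+1) + S = r
      rw [Nat.mod_eq_of_lt (by omega : k < r+1), Nat.mod_eq_of_lt (by omega : m - k < r+1)]
      omega
    rw [hP]
    simp [h1]
  have hsum_ite : ∀ w, ∑ k ∈ Finset.range (m+1), f w (D k)
      = ∑ k ∈ (Finset.range (m+1)).filter P,
          (r.factorial : ℝ) * ∏ l, (w l) ^ ((D k l : Fin (r+1)) : ℕ)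
            / (((D k l : Fin (r+1)) : ℕ).factorial : ℝ) := by
    intro w
    rw [Finset.sum_filter]
    apply Finset.sum_congr rfl
    intro k hk
    simp only [hf]
    by_cases hPk : P k
    · rw [if_pos ((hcond_iff k hk).mpr hPk), if_pos hPk]
    · rw [if_neg (fun hc => hPk ((hcond_iff k hk).mp hc)), if_neg hPk]
  rw [hsum_ite x, hsum_ite y]
  set K : Finset ℕ := (Finset.range (m+1)).filter P with hK
  rcases Finset.eq_empty_or_nonempty K with hKe | hKne
  · rw [hKe]
    simp
  have hKmem : ∀ k₁ ∈ K, ∀ k₂, k₂ ≤ m → max k₂ (m - k₂) ≤ max k₁ (m - k₁) → k₂ ∈ K := by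
    intro k₁ hk₁ k₂ hk₂m hmaxle
    simp only [hK, Finset.mem_filter, Finset.mem_range] at hk₁ ⊢
    obtain ⟨hk₁r, hPk₁⟩ := hk₁
    have hk₁m : k₁ ≤ m := by omega
    refine ⟨by omega, ?_⟩
    rw [hP] at hPk₁ ⊢
    have hballed := balance hA hdc (fun l => ((D k₁ l : Fin (r+1)) : ℕ))
      (fun l => ((D k₂ l : Fin (r+1)) : ℕ)) i j hij ?_ ?_ ?_ hPk₁
    · exact hballed
    · show ((D k₂ i : Fin (r+1)) : ℕ) + ((D k₂ j : Fin (r+1)) : ℕ)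
        = ((D k₁ i : Fin (r+1)) : ℕ) + ((D k₁ j : Fin (r+1)) : ℕ)
      rw [hDval_i k₂ hk₂m, hDval_j k₂ hk₂m, hDval_i k₁ hk₁m, hDval_j k₁ hk₁m]
      omega
    · intro l hli hlj
      show ((D k₂ l : Fin (r+1)) : ℕ) = ((D k₁ l : Fin (r+1)) : ℕ)
      simp only [hD, hupd_off _ _ l hli hlj]
    · show max ((D k₂ i : Fin (r+1)) : ℕ) ((D k₂ j : Fin (r+1)) : ℕ)
        ≤ max ((D k₁ i : Fin (r+1)) : ℕ) ((D k₁ j : Fin (r+1)) : ℕ)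
      rw [hDval_i k₂ hk₂m, hDval_j k₂ hk₂m, hDval_i k₁ hk₁m, hDval_j k₁ hk₁m]
      exact hmaxle
  set l₀ : ℕ := K.min' hKne with hl₀
  have hl₀K : l₀ ∈ K := K.min'_mem hKne
  have hl₀m : l₀ ≤ m := by
    have := hl₀K
    simp only [hK, Finset.mem_filter, Finset.mem_range] at this
    omega
  have hrefl : m - l₀ ∈ K := by
    apply hKmem l₀ hl₀K (m - l₀) (by omega)
    have h1 : m - (m - l₀) = l₀ := by omega
    rw [h1]
    omega
  have hl₀half : l₀ ≤ m - l₀ := K.min'_le _ hrefl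
  have hKIcc : K = Finset.Icc l₀ (m - l₀) := by
    ext k
    constructor
    · intro hk
      have hkm : k ≤ m := by
        have := hk
        simp only [hK, Finset.mem_filter, Finset.mem_range] at this
        omega
      have hmk : m - k ∈ K := by
        apply hKmem k hk (m - k) (by omega)
        have h1 : m - (m - k) = k := by omega
        rw [h1]
        omega
      have h1 : l₀ ≤ k := K.min'_le k hk
      have h2 : l₀ ≤ m - k := K.min'_le _ hmk
      simp only [Finset.mem_Icc]
      omega
    · intro hk
      simp only [Finset.mem_Icc] at hk
      apply hKmem l₀ hl₀K k (by omega)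
      omega
  rw [hKIcc]
  set CP : ℝ := ∏ l ∈ (Finset.univ.erase i).erase j, (x l) ^ (e l : ℕ) / ((e l : ℕ).factorial : ℝ)
    with hCP
  have hCPnn : 0 ≤ CP := by
    rw [hCP]
    apply Finset.prod_nonneg
    intro l _
    have := hx l
    positivity
  have hprod : ∀ (w : Fin s → ℝ), (∀ l, l ≠ i → l ≠ j → w l = x l) → ∀ k, k ≤ m →
      ∏ l, (w l) ^ ((D k l : Fin (r+1)) : ℕ) / (((D k l : Fin (r+1)) : ℕ).factorial : ℝ)
      = (w i)^k / (k.factorial : ℝ) * ((w j)^(m-k) / ((m-k).factorial : ℝ)) * CP := by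
    intro w hw k hk
    rw [prod_split_two _ hij, hDval_i k hk, hDval_j k hk]
    congr 1
    rw [hCP]
    apply Finset.prod_congr rfl
    intro l hl
    have h1 : l ≠ j := (Finset.mem_erase.mp hl).1
    have h2 : l ≠ i := (Finset.mem_erase.mp (Finset.mem_erase.mp hl).2).1
    rw [hw l h2 h1]
    simp only [hD, hupd_off _ _ l h2 h1]
  have hmemk : ∀ k ∈ Finset.Icc l₀ (m - l₀), k ≤ m := by
    intro k hk
    simp only [Finset.mem_Icc] at hk
    omega
  have hxterm : ∀ k ∈ Finset.Icc l₀ (m - l₀),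
      (r.factorial : ℝ) * ∏ l, (x l) ^ ((D k l : Fin (r+1)) : ℕ)
        / (((D k l : Fin (r+1)) : ℕ).factorial : ℝ)
      = ((r.factorial : ℝ) * CP)
        * ((x i)^k * (x j)^(m-k) / ((k.factorial * (m-k).factorial : ℕ) : ℝ)) := by
    intro k hk
    rw [hprod x (fun l _ _ => rfl) k (hmemk k hk)]
    push_cast
    field_simp
  have hyterm : ∀ k ∈ Finset.Icc l₀ (m - l₀),
      (r.factorial : ℝ) * ∏ l, (y l) ^ ((D k l : Fin (r+1)) : ℕ)
        / (((D k l : Fin (r+1)) : ℕ).factorial : ℝ)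
      = ((r.factorial : ℝ) * CP)
        * (((x i + x j)/2)^m / ((k.factorial * (m-k).factorial : ℕ) : ℝ)) := by
    intro k hk
    have hpow : c2^k * c2^(m-k) = c2^m := by
      rw [← pow_add]
      congr 1
      exact Nat.add_sub_cancel' (hmemk k hk)
    rw [hprod y hyoff k (hmemk k hk), hyi, hyj,
      show ((x i + x j)/2 : ℝ) = c2 from hc2.symm, ← hpow]
    push_cast
    field_simp
  rw [Finset.sum_congr rfl hxterm, Finset.sum_congr rfl hyterm, ← Finset.mul_sum, ← Finset.mul_sum]
  apply mul_le_mul_of_nonneg_left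
  · exact key_pair' m l₀ (x i) (x j) (hx i) (hx j)
  · positivity

private lemma sum_split_two_real {s : ℕ} (g : Fin s → ℝ) {i j : Fin s} (hij : i ≠ j) :
    ∑ l, g l = g i + g j + ∑ l ∈ (Finset.univ.erase i).erase j, g l := by
  have hj : j ∈ Finset.univ.erase i := Finset.mem_erase.mpr ⟨Ne.symm hij, Finset.mem_univ j⟩
  rw [← Finset.add_sum_erase Finset.univ g (Finset.mem_univ i),
      ← Finset.add_sum_erase (Finset.univ.erase i) g hj, add_assoc]

open Classical in
private lemma lamA_continuous (r s : ℕ) (A : Set (Fin s → ℕ)) : Continuous (lamA r s A) := by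
  show Continuous fun x : Fin s → ℝ => ∑ d : Fin s → Fin (r + 1),
    if (∑ i, (d i : ℕ)) = r ∧ (∃ σ : Equiv.Perm (Fin s), (fun i => (d (σ i) : ℕ)) ∈ A) then
      (r.factorial : ℝ) * ∏ i, (x i) ^ (d i : ℕ) / ((d i : ℕ).factorial : ℝ)
    else 0
  apply continuous_finset_sum
  intro d _
  by_cases h : (∑ i, (d i : ℕ)) = r ∧ (∃ σ : Equiv.Perm (Fin s), (fun i => (d (σ i) : ℕ)) ∈ A)
  · simp only [if_pos h]
    apply Continuous.mul continuous_const
    apply continuous_finset_prod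
    intro l _
    exact ((continuous_apply l).pow _).div_const _
  · simp only [if_neg h]
    exact continuous_const

/-- For a down-closed `A ⊆ 𝒫_{r,s}`, the maximum of `λ_A` over the standard simplex is
attained at the uniform point: `Λ_A = λ_A(1/s, …, 1/s)`. -/
theorem stmt6 (r s : ℕ) (hr : 2 ≤ r) (hs : 2 ≤ s)
    (A : Set (Fin s → ℕ)) (hA : A ⊆ Pset r s) (hdc : DownClosed r s A) :
    LamA r s A = lamA r s A (fun _ => 1 / (s : ℝ)) := by
  have hs0 : 0 < s := by omega
  have hsR : (0:ℝ) < (s : ℝ) := by exact_mod_cast hs0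
  set u : Fin s → ℝ := fun _ => 1/(s:ℝ) with hu
  have huS : u ∈ stdSimplex ℝ (Fin s) := by
    refine ⟨fun l => ?_, ?_⟩
    · rw [hu]; positivity
    · rw [hu]
      rw [Finset.sum_const, Finset.card_univ, Fintype.card_fin, nsmul_eq_mul]
      field_simp
  have hcont : Continuous (lamA r s A) := lamA_continuous r s A
  have hcomp : IsCompact (stdSimplex ℝ (Fin s)) := isCompact_stdSimplex _ _
  obtain ⟨z, hzS, hzmax⟩ := hcomp.exists_isMaxOn ⟨u, huS⟩ hcont.continuousOn
  set M : Set (Fin s → ℝ) := stdSimplex ℝ (Fin s) ∩ {w | lamA r s A w = lamA r s A z} with hM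
  have hMcomp : IsCompact M := hcomp.inter_right (isClosed_eq hcont continuous_const)
  have hMne : M.Nonempty := ⟨z, hzS, rfl⟩
  have hgcont : Continuous (fun w : Fin s → ℝ => ∑ l, (w l)^2) :=
    continuous_finset_sum _ fun l _ => (continuous_apply l).pow 2
  obtain ⟨z', hz'M, hz'min⟩ := hMcomp.exists_isMinOn hMne hgcont.continuousOn
  have hz'S : z' ∈ stdSimplex ℝ (Fin s) := hz'M.1
  have hz'eq : lamA r s A z' = lamA r s A z := hz'M.2
  have hconst : ∀ i j : Fin s, z' i = z' j := by
    by_contra hcon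
    push_neg at hcon
    obtain ⟨i, j, hij'⟩ := hcon
    have hij : i ≠ j := fun h => hij' (by rw [h])
    set c2 : ℝ := (z' i + z' j)/2 with hc2
    set w : Fin s → ℝ := Function.update (Function.update z' i c2) j c2 with hw
    have hwi : w i = c2 := by rw [hw, Function.update_of_ne hij, Function.update_self]
    have hwj : w j = c2 := by rw [hw, Function.update_self]
    have hwoff : ∀ l, l ≠ i → l ≠ j → w l = z' l := by
      intro l hli hlj
      rw [hw, Function.update_of_ne hlj, Function.update_of_ne hli]
    have hc2nn : 0 ≤ c2 := by
      rw [hc2]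
      have h1 := hz'S.1 i
      have h2 := hz'S.1 j
      linarith
    have hwS : w ∈ stdSimplex ℝ (Fin s) := by
      refine ⟨fun l => ?_, ?_⟩
      · by_cases h1 : l = j
        · rw [h1, hwj]; exact hc2nn
        by_cases h2 : l = i
        · rw [h2, hwi]; exact hc2nn
        · rw [hwoff l h2 h1]; exact hz'S.1 l
      · rw [sum_split_two_real w hij, hwi, hwj,
          Finset.sum_congr rfl (fun l hl => hwoff l
            (Finset.mem_erase.mp (Finset.mem_erase.mp hl).2).1
            (Finset.mem_erase.mp hl).1)]
        have := hz'S.2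
        rw [sum_split_two_real z' hij] at this
        rw [hc2]
        linarith
    have hle : lamA r s A z' ≤ lamA r s A w := lamA_avg_le r s A hA hdc z' hz'S.1 i j hij
    have hge : lamA r s A w ≤ lamA r s A z := (isMaxOn_iff.mp hzmax) w hwS
    have hwM : w ∈ M := ⟨hwS, le_antisymm hge (by rw [← hz'eq] at *; linarith)⟩
    have hgmin : ∑ l, (z' l)^2 ≤ ∑ l, (w l)^2 := (isMinOn_iff.mp hz'min) w hwM
    have hsq : ∑ l, (w l)^2 < ∑ l, (z' l)^2 := by
      rw [sum_split_two_real (fun l => (w l)^2) hij, sum_split_two_real (fun l => (z' l)^2) hij]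
      simp only [hwi, hwj]
      have hrest : ∑ l ∈ (Finset.univ.erase i).erase j, (w l)^2
          = ∑ l ∈ (Finset.univ.erase i).erase j, (z' l)^2 := by
        apply Finset.sum_congr rfl
        intro l hl
        rw [hwoff l (Finset.mem_erase.mp (Finset.mem_erase.mp hl).2).1
          (Finset.mem_erase.mp hl).1]
      rw [hrest]
      have hne : z' i - z' j ≠ 0 := sub_ne_zero.mpr hij'
      have hpos : 0 < (z' i - z' j)^2 := by positivity
      rw [hc2]
      nlinarith
    linarith
  have hz'u : z' = u := by
    funext l
    have hsum1 : ∑ l', z' l' = 1 := hz'S.2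
    rw [Finset.sum_congr rfl (fun l' _ => hconst l' l), Finset.sum_const, Finset.card_univ,
      Fintype.card_fin, nsmul_eq_mul] at hsum1
    rw [hu]
    field_simp
    linarith [hsum1]
  have hmain : IsGreatest (lamA r s A '' stdSimplex ℝ (Fin s)) (lamA r s A u) := by
    constructor
    · exact ⟨u, huS, rfl⟩
    · rintro v ⟨x', hx'S, rfl⟩
      calc lamA r s A x' ≤ lamA r s A z := (isMaxOn_iff.mp hzmax) x' hx'S
        _ = lamA r s A z' := hz'eq.symm
        _ = lamA r s A u := by rw [hz'u]
  rw [LamA, hmain.csSup_eq]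
end

section
/- Let r ≥ 1 and t ≥ 0 be integers and let S = { j ∈ {0,1,…,r} : |2j − r| ≤ t }. Then for all reals x, y ≥ 0: (Σ_{j∈S} binom(r,j)) · ((x+y)/2)^r ≥ Σ_{j∈S} binom(r,j) · x^j y^{r−j}. -/
lemma keypow (x y : ℝ) (hx : 0 ≤ x) (hy : 0 ≤ y) (k e d : ℕ) :
    x^(k+e) * y^(k+e+d) + x^(k+e+d) * y^(k+e) ≤
      x^k * y^(k+2*e+d) + x^(k+2*e+d) * y^k := by
  have h0 : 0 ≤ (x^e - y^e) * (x^(d+e) - y^(d+e)) := by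
    rcases le_total x y with h | h
    · nlinarith [pow_le_pow_left₀ hx h e, pow_le_pow_left₀ hx h (d+e)]
    · nlinarith [pow_le_pow_left₀ hy h e, pow_le_pow_left₀ hy h (d+e)]
  have h1 : 0 ≤ x^k * y^k * ((x^e - y^e) * (x^(d+e) - y^(d+e))) :=
    mul_nonneg (mul_nonneg (pow_nonneg hx k) (pow_nonneg hy k)) h0
  have hid : x^k * y^(k+2*e+d) + x^(k+2*e+d) * y^k
      - (x^(k+e) * y^(k+e+d) + x^(k+e+d) * y^(k+e))
      = x^k * y^k * ((x^e - y^e) * (x^(d+e) - y^(d+e))) := by ring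
  linarith

lemma B0 (x y : ℝ) (hx : 0 ≤ x) (hy : 0 ≤ y) (r j k : ℕ)
    (hj : 2*j ≤ r) (hk : 2*k ≤ r) (hkj : k ≤ j) :
    x^j * y^(r-j) + x^(r-j) * y^j ≤ x^k * y^(r-k) + x^(r-k) * y^k := by
  obtain ⟨e, rfl⟩ : ∃ e, j = k + e := ⟨j - k, by omega⟩
  obtain ⟨d, rfl⟩ : ∃ d, r = 2*k + 2*e + d := ⟨r - 2*k - 2*e, by omega⟩
  have h2 : 2*k + 2*e + d - (k + e) = k + e + d := by omega
  have h3 : 2*k + 2*e + d - k = k + 2*e + d := by omega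
  rw [h2, h3]
  exact keypow x y hx hy k e d

lemma B (x y : ℝ) (hx : 0 ≤ x) (hy : 0 ≤ y) (r j k : ℕ) (hj : j ≤ r) (hk : k ≤ r)
    (h : |2 * (j : ℤ) - (r : ℤ)| ≤ |2 * (k : ℤ) - (r : ℤ)|) :
    x^j * y^(r-j) + x^(r-j) * y^j ≤ x^k * y^(r-k) + x^(r-k) * y^k := by
  have ej : x^j * y^(r-j) + x^(r-j) * y^j
      = x^(r-j) * y^(r-(r-j)) + x^(r-(r-j)) * y^(r-j) := by
    rw [Nat.sub_sub_self hj]; ring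
  have ek : x^k * y^(r-k) + x^(r-k) * y^k
      = x^(r-k) * y^(r-(r-k)) + x^(r-(r-k)) * y^(r-k) := by
    rw [Nat.sub_sub_self hk]; ring
  rcases le_total (2*j) r with hj2 | hj2 <;> rcases le_total (2*k) r with hk2 | hk2
  · rw [abs_of_nonpos (by omega), abs_of_nonpos (by omega)] at h
    exact B0 x y hx hy r j k hj2 hk2 (by omega)
  · rw [abs_of_nonpos (by omega), abs_of_nonneg (by omega)] at h
    rw [ek]
    exact B0 x y hx hy r j (r-k) hj2 (by omega) (by omega)
  · rw [abs_of_nonneg (by omega), abs_of_nonpos (by omega)] at h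
    rw [ej]
    exact B0 x y hx hy r (r-j) k (by omega) hk2 (by omega)
  · rw [abs_of_nonneg (by omega), abs_of_nonneg (by omega)] at h
    rw [ej, ek]
    exact B0 x y hx hy r (r-j) (r-k) (by omega) (by omega) (by omega)

lemma core (r : ℕ) (x y : ℝ) (hx : 0 ≤ x) (hy : 0 ≤ y) (S T : Finset ℕ)
    (hSr : ∀ j ∈ S, j ≤ r) (hTr : ∀ k ∈ T, k ≤ r)
    (hSsym : ∀ j ∈ S, r - j ∈ S) (hTsym : ∀ k ∈ T, r - k ∈ T)
    (hST : ∀ j ∈ S, ∀ k ∈ T, |2 * (j : ℤ) - (r : ℤ)| ≤ |2 * (k : ℤ) - (r : ℤ)|) :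
    (∑ k ∈ T, (r.choose k : ℝ)) * (∑ j ∈ S, (r.choose j : ℝ) * x^j * y^(r-j))
      ≤ (∑ j ∈ S, (r.choose j : ℝ)) * (∑ k ∈ T, (r.choose k : ℝ) * x^k * y^(r-k)) := by
  rw [Finset.sum_mul_sum, Finset.sum_mul_sum, Finset.sum_comm]
  rw [← Finset.sum_product', ← Finset.sum_product' (s := S) (t := T)]
  have hbij : ∀ F : ℕ → ℕ → ℝ,
      ∑ p ∈ S ×ˢ T, F p.1 p.2 = ∑ p ∈ S ×ˢ T, F (r - p.1) (r - p.2) := by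
    intro F
    apply Finset.sum_nbij' (i := fun p => (r - p.1, r - p.2))
      (j := fun p => (r - p.1, r - p.2))
    · intro p hp
      rw [Finset.mem_product] at hp ⊢
      exact ⟨hSsym _ hp.1, hTsym _ hp.2⟩
    · intro p hp
      rw [Finset.mem_product] at hp ⊢
      exact ⟨hSsym _ hp.1, hTsym _ hp.2⟩
    · rintro ⟨a, b⟩ hp
      rw [Finset.mem_product] at hp
      have := hSr _ hp.1; have := hTr _ hp.2
      simp only [Prod.mk.injEq]
      omega
    · rintro ⟨a, b⟩ hp
      rw [Finset.mem_product] at hp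
      have := hSr _ hp.1; have := hTr _ hp.2
      simp only [Prod.mk.injEq]
      omega
    · rintro ⟨a, b⟩ hp
      rw [Finset.mem_product] at hp
      have ha := hSr _ hp.1; have hb := hTr _ hp.2
      simp only [Nat.sub_sub_self ha, Nat.sub_sub_self hb]
  have hpt : ∀ p ∈ S ×ˢ T,
      (r.choose p.2 : ℝ) * ((r.choose p.1 : ℝ) * x^p.1 * y^(r-p.1))
        + (r.choose (r - p.2) : ℝ) * ((r.choose (r - p.1) : ℝ) * x^(r-p.1) * y^(r-(r-p.1)))
      ≤ (r.choose p.1 : ℝ) * ((r.choose p.2 : ℝ) * x^p.2 * y^(r-p.2))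
        + (r.choose (r - p.1) : ℝ) * ((r.choose (r - p.2) : ℝ) * x^(r-p.2) * y^(r-(r-p.2))) := by
    intro p hp
    rw [Finset.mem_product] at hp
    have hjr := hSr _ hp.1
    have hkr := hTr _ hp.2
    rw [Nat.choose_symm hjr, Nat.choose_symm hkr, Nat.sub_sub_self hjr, Nat.sub_sub_self hkr]
    have hCC : (0:ℝ) ≤ (r.choose p.1 : ℝ) * (r.choose p.2 : ℝ) := by positivity
    have key := mul_le_mul_of_nonneg_left
      (B x y hx hy r p.1 p.2 hjr hkr (hST _ hp.1 _ hp.2)) hCC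
    nlinarith [key]
  have h1 := Finset.sum_le_sum hpt
  rw [Finset.sum_add_distrib, Finset.sum_add_distrib] at h1
  rw [← hbij (fun a b => (r.choose b : ℝ) * ((r.choose a : ℝ) * x^a * y^(r-a))),
      ← hbij (fun a b => (r.choose a : ℝ) * ((r.choose b : ℝ) * x^b * y^(r-b)))] at h1
  linarith

/-- Bunched Muirhead inequality: for `S = {j ∈ {0,…,r} : |2j − r| ≤ t}` and `x, y ≥ 0`,
`(Σ_{j∈S} C(r,j)) · ((x+y)/2)^r ≥ Σ_{j∈S} C(r,j) · x^j y^{r−j}`. -/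
theorem stmt7 (r t : ℕ) (hr : 1 ≤ r) (x y : ℝ) (hx : 0 ≤ x) (hy : 0 ≤ y) :
    ∑ j ∈ (Finset.range (r + 1)).filter (fun j : ℕ => |2 * (j : ℤ) - (r : ℤ)| ≤ (t : ℤ)),
        (r.choose j : ℝ) * x ^ j * y ^ (r - j) ≤
      (∑ j ∈ (Finset.range (r + 1)).filter (fun j : ℕ => |2 * (j : ℤ) - (r : ℤ)| ≤ (t : ℤ)),
        (r.choose j : ℝ)) * ((x + y) / 2) ^ r := by
  classical
  set A := Finset.range (r + 1) with hA
  set S := A.filter (fun j : ℕ => |2 * (j : ℤ) - (r : ℤ)| ≤ (t : ℤ)) with hS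
  set T := A.filter (fun j : ℕ => ¬ |2 * (j : ℤ) - (r : ℤ)| ≤ (t : ℤ)) with hT
  -- basic facts
  have hSr : ∀ j ∈ S, j ≤ r := by
    intro j hj; rw [hS, Finset.mem_filter, Finset.mem_range] at hj; omega
  have hTr : ∀ k ∈ T, k ≤ r := by
    intro k hk; rw [hT, Finset.mem_filter, Finset.mem_range] at hk; omega
  have habsneg : ∀ j : ℕ, j ≤ r → |2 * ((r - j : ℕ) : ℤ) - (r : ℤ)| = |2 * (j : ℤ) - (r : ℤ)| := by
    intro j hj
    have heq : 2 * ((r - j : ℕ) : ℤ) - (r : ℤ) = -(2 * (j : ℤ) - (r : ℤ)) := by omega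
    rw [heq, abs_neg]
  have hSsym : ∀ j ∈ S, r - j ∈ S := by
    intro j hj
    rw [hS, Finset.mem_filter, Finset.mem_range] at hj ⊢
    exact ⟨by omega, by rw [habsneg j (by omega)]; exact hj.2⟩
  have hTsym : ∀ k ∈ T, r - k ∈ T := by
    intro k hk
    rw [hT, Finset.mem_filter, Finset.mem_range] at hk ⊢
    exact ⟨by omega, by rw [habsneg k (by omega)]; exact hk.2⟩
  have hST : ∀ j ∈ S, ∀ k ∈ T, |2 * (j : ℤ) - (r : ℤ)| ≤ |2 * (k : ℤ) - (r : ℤ)| := by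
    intro j hj k hk
    rw [hS, Finset.mem_filter] at hj
    rw [hT, Finset.mem_filter] at hk
    exact hj.2.trans (le_of_lt (lt_of_not_ge hk.2))
  have hcore := core r x y hx hy S T hSr hTr hSsym hTsym hST
  -- split sums over A
  have hsplitC : ∑ j ∈ S, (r.choose j : ℝ) + ∑ j ∈ T, (r.choose j : ℝ)
      = ∑ j ∈ A, (r.choose j : ℝ) :=
    Finset.sum_filter_add_sum_filter_not A _ _
  have hsplitF : ∑ j ∈ S, (r.choose j : ℝ) * x^j * y^(r-j)
      + ∑ j ∈ T, (r.choose j : ℝ) * x^j * y^(r-j)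
      = ∑ j ∈ A, (r.choose j : ℝ) * x^j * y^(r-j) :=
    Finset.sum_filter_add_sum_filter_not A _ _
  have h2r : ∑ j ∈ A, (r.choose j : ℝ) = 2 ^ r := by
    rw [hA]
    rw [← Nat.cast_sum]
    rw [Nat.sum_range_choose]
    push_cast
    ring
  have hpow : ((x + y) / 2) ^ r = (∑ j ∈ A, (r.choose j : ℝ) * x^j * y^(r-j)) / 2 ^ r := by
    rw [div_pow, add_pow]
    congr 1
    apply Finset.sum_congr rfl
    intro j hj
    ring
  rw [hpow]
  rw [mul_div_assoc', le_div_iff₀ (by positivity)]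
  -- goal: Σ_S f * 2^r ≤ Σ_S c * Σ_A f
  rw [← h2r, ← hsplitC, ← hsplitF]
  nlinarith [hcore]
end

section
/- Let r ≥ 2, s ≥ 3 and 0 ≤ j ≤ r be integers, and let A ⊆ 𝒫_{r,s} be down-closed with respect to the dominance order. Define A∖j ⊆ 𝒫_{r−j, s−1} to consist of those y ∈ 𝒫_{r−j,s−1} such that ⟨y, j⟩ ∈ A, where ⟨y, j⟩ is the non-increasing rearrangement of the s-tuple obtained from y by inserting the entry j. Then A∖j is down-closed in 𝒫_{r−j, s−1}. -/

def psum {n : ℕ} (z : Fin n → ℕ) (k : ℕ) : ℕ :=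
  ∑ i ∈ Finset.univ.filter (fun i : Fin n => (i : ℕ) < k), z i

lemma psum_mono {n : ℕ} (z : Fin n → ℕ) {k k' : ℕ} (h : k ≤ k') : psum z k ≤ psum z k' := by
  apply Finset.sum_le_sum_of_subset
  intro i hi
  simp only [Finset.mem_filter, Finset.mem_univ, true_and] at *
  omega

lemma card_filter_lt {n k : ℕ} : (Finset.univ.filter (fun i : Fin n => (i : ℕ) < k)).card ≤ k := by
  classical
  have := Finset.card_le_card_of_injOn (fun i : Fin n => (i : ℕ))
    (s := Finset.univ.filter (fun i : Fin n => (i : ℕ) < k)) (t := Finset.range k)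
    (by intro i hi; simp only [Finset.mem_coe, Finset.mem_filter] at hi; simpa using hi.2)
    (by intro a _ b _ h; exact Fin.ext h)
  simpa using this

lemma strictMono_le {c n : ℕ} (f : Fin c → Fin n) (hf : StrictMono f) :
    ∀ m : Fin c, (m : ℕ) ≤ (f m : ℕ) := by
  intro m
  induction' hm : (m : ℕ) with v ih generalizing m
  · omega
  · have hv : v < c := by omega
    have := ih ⟨v, hv⟩ rfl
    have hlt : f ⟨v, hv⟩ < f m := hf (by simp [Fin.lt_def, hm])
    simp only [Fin.lt_def] at hlt
    omega

/-- Sum over any finset is at most the sum of the `card` largest entries, for antitone `z`. -/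
lemma sum_le_psum_card {n : ℕ} (z : Fin n → ℕ) (hz : ∀ i j : Fin n, i ≤ j → z j ≤ z i)
    (T : Finset (Fin n)) : ∑ i ∈ T, z i ≤ psum z T.card := by
  classical
  set c := T.card with hc
  have hcn : c ≤ n := by simpa using (Finset.card_le_card (Finset.subset_univ T))
  have e := T.orderIsoOfFin hc.symm
  have hT : ∑ i ∈ T, z i = ∑ m : Fin c, z (e m) := by
    rw [← Finset.sum_attach T z]
    exact (Equiv.sum_comp e.toEquiv (fun i => z i)).symm
  have hstep : ∀ m : Fin c, z ((e m : Fin n)) ≤ z ⟨(m : ℕ), lt_of_lt_of_le m.2 hcn⟩ := by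
    intro m
    apply hz
    have := strictMono_le (fun m => (e m : Fin n)) (fun a b hab => e.strictMono hab) m
    simpa [Fin.le_def] using this
  calc ∑ i ∈ T, z i ≤ ∑ m : Fin c, z ⟨(m : ℕ), lt_of_lt_of_le m.2 hcn⟩ := by
        rw [hT]; exact Finset.sum_le_sum (fun m _ => hstep m)
    _ = psum z c := by
        unfold psum
        apply Finset.sum_bij (fun (m : Fin c) _ => (⟨(m : ℕ), lt_of_lt_of_le m.2 hcn⟩ : Fin n))
        · intro m _; simp [m.2]
        · intro a _ b _ h
          have : (a : ℕ) = (b : ℕ) := by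
            have := congrArg Fin.val h
            simpa using this
          exact Fin.ext this
        · intro i hi
          simp only [Finset.mem_filter, Finset.mem_univ, true_and] at hi
          exact ⟨⟨(i : ℕ), hi⟩, Finset.mem_univ _, rfl⟩
        · intro m _; rfl


lemma sum_le_psum {n : ℕ} (z : Fin n → ℕ) (hz : ∀ i j : Fin n, i ≤ j → z j ≤ z i)
    (T : Finset (Fin n)) {k : ℕ} (hk : T.card ≤ k) : ∑ i ∈ T, z i ≤ psum z k :=
  le_trans (sum_le_psum_card z hz T) (psum_mono z hk)

lemma sum_cons_decomp {n : ℕ} (j : ℕ) (x : Fin n → ℕ) (T : Finset (Fin (n + 1))) :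
    ∑ i ∈ T, Fin.cons j x i =
      (if (0 : Fin (n + 1)) ∈ T then j else 0) +
        ∑ i ∈ Finset.univ.filter (fun i : Fin n => i.succ ∈ T), x i := by
  classical
  have h1 : ∑ i ∈ T, Fin.cons j x i
      = ∑ i : Fin (n + 1), if i ∈ T then Fin.cons j x i else 0 := by
    rw [Finset.sum_ite_mem, Finset.univ_inter]
  rw [h1, Fin.sum_univ_succ]
  simp only [Fin.cons_zero, Fin.cons_succ]
  congr 1
  rw [Finset.sum_filter]

lemma card_cons_decomp {n : ℕ} (T : Finset (Fin (n + 1))) :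
    T.card = (if (0 : Fin (n + 1)) ∈ T then 1 else 0) +
      (Finset.univ.filter (fun i : Fin n => i.succ ∈ T)).card := by
  classical
  have h1 : T.card = ∑ i : Fin (n + 1), if i ∈ T then 1 else 0 := by
    rw [Finset.sum_ite_mem, Finset.univ_inter, Finset.card_eq_sum_ones]
  rw [h1, Fin.sum_univ_succ, Finset.card_filter]

/-- Upper bound: top-(k+1) sum of a rearrangement of `cons j x`. -/
lemma claimA {n : ℕ} (j k : ℕ) (x : Fin n → ℕ) (hx : ∀ i j : Fin n, i ≤ j → x j ≤ x i)
    (σ : Equiv.Perm (Fin (n + 1))) :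
    psum (Fin.cons j x ∘ σ) (k + 1) ≤ max (j + psum x k) (psum x (k + 1)) := by
  classical
  set F := Finset.univ.filter (fun i : Fin (n + 1) => (i : ℕ) < k + 1) with hF
  set T := F.image σ with hT
  have hsum : psum (Fin.cons j x ∘ σ) (k + 1) = ∑ i ∈ T, Fin.cons j x i := by
    rw [hT, Finset.sum_image (fun a _ b _ h => σ.injective h)]
    rfl
  have hcardT : T.card ≤ k + 1 := by
    rw [hT, Finset.card_image_of_injective _ σ.injective]
    exact card_filter_lt
  rw [hsum, sum_cons_decomp]
  set S := Finset.univ.filter (fun i : Fin n => i.succ ∈ T) with hS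
  have hcard := card_cons_decomp (n := n) T
  rw [← hS] at hcard
  by_cases h0 : (0 : Fin (n + 1)) ∈ T
  · simp only [h0, if_true] at hcard ⊢
    have hSk : S.card ≤ k := by omega
    exact le_max_of_le_left (by
      have := sum_le_psum x hx S hSk
      omega)
  · simp only [h0, if_false] at hcard ⊢
    have hSk : S.card ≤ k + 1 := by omega
    exact le_max_of_le_right (by
      have := sum_le_psum x hx S hSk
      omega)

/-- Lower bounds: for an antitone rearrangement `z` of `cons j x`. -/
lemma sum_comp_perm {n : ℕ} (f : Fin n → ℕ) (σ : Equiv.Perm (Fin n)) (T : Finset (Fin n)) :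
    ∑ i ∈ T, f i = ∑ i ∈ T.image σ.symm, (f ∘ σ) i := by
  classical
  rw [Finset.sum_image (fun a _ b _ h => σ.symm.injective h)]
  exact Finset.sum_congr rfl (fun i _ => by simp)

lemma claimB1 {n : ℕ} (j k : ℕ) (x : Fin n → ℕ) (σ : Equiv.Perm (Fin (n + 1)))
    (hz : ∀ a b : Fin (n + 1), a ≤ b → (Fin.cons j x ∘ σ) b ≤ (Fin.cons j x ∘ σ) a) :
    j + psum x k ≤ psum (Fin.cons j x ∘ σ) (k + 1) := by
  classical
  set T : Finset (Fin (n + 1)) :=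
    insert 0 ((Finset.univ.filter (fun i : Fin n => (i : ℕ) < k)).image Fin.succ) with hT
  have h0 : (0 : Fin (n + 1)) ∈ T := Finset.mem_insert_self _ _
  have hSfix : Finset.univ.filter (fun i : Fin n => i.succ ∈ T)
      = Finset.univ.filter (fun i : Fin n => (i : ℕ) < k) := by
    ext i
    simp [hT, Fin.succ_ne_zero, Fin.succ_injective n |>.eq_iff]
  have hsum : ∑ i ∈ T, Fin.cons j x i = j + psum x k := by
    rw [sum_cons_decomp, if_pos h0, hSfix]; rfl
  have hcardT : T.card ≤ k + 1 := by
    calc T.card ≤ ((Finset.univ.filter (fun i : Fin n => (i : ℕ) < k)).image Fin.succ).card + 1 :=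
          Finset.card_insert_le _ _
      _ ≤ k + 1 := by
          rw [Finset.card_image_of_injective _ (Fin.succ_injective n)]
          exact Nat.add_le_add_right card_filter_lt 1
  calc j + psum x k = ∑ i ∈ T, Fin.cons j x i := hsum.symm
    _ = ∑ i ∈ T.image σ.symm, (Fin.cons j x ∘ σ) i := sum_comp_perm _ σ T
    _ ≤ psum (Fin.cons j x ∘ σ) (k + 1) := by
        apply sum_le_psum _ hz
        rw [Finset.card_image_of_injective _ σ.symm.injective]
        exact hcardT

lemma claimB2 {n : ℕ} (j k : ℕ) (x : Fin n → ℕ) (σ : Equiv.Perm (Fin (n + 1)))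
    (hz : ∀ a b : Fin (n + 1), a ≤ b → (Fin.cons j x ∘ σ) b ≤ (Fin.cons j x ∘ σ) a) :
    psum x (k + 1) ≤ psum (Fin.cons j x ∘ σ) (k + 1) := by
  classical
  set T : Finset (Fin (n + 1)) :=
    (Finset.univ.filter (fun i : Fin n => (i : ℕ) < k + 1)).image Fin.succ with hT
  have h0 : (0 : Fin (n + 1)) ∉ T := by
    simp [hT, (Fin.succ_ne_zero _).symm, fun i : Fin n => Fin.succ_ne_zero i]
  have hSfix : Finset.univ.filter (fun i : Fin n => i.succ ∈ T)
      = Finset.univ.filter (fun i : Fin n => (i : ℕ) < k + 1) := by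
    ext i
    simp [hT, Fin.succ_injective n |>.eq_iff]
  have hsum : ∑ i ∈ T, Fin.cons j x i = psum x (k + 1) := by
    rw [sum_cons_decomp, if_neg h0, hSfix, Nat.zero_add]; rfl
  have hcardT : T.card ≤ k + 1 := by
    rw [hT, Finset.card_image_of_injective _ (Fin.succ_injective n)]
    exact card_filter_lt
  calc psum x (k + 1) = ∑ i ∈ T, Fin.cons j x i := hsum.symm
    _ = ∑ i ∈ T.image σ.symm, (Fin.cons j x ∘ σ) i := sum_comp_perm _ σ T
    _ ≤ psum (Fin.cons j x ∘ σ) (k + 1) := by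
        apply sum_le_psum _ hz
        rw [Finset.card_image_of_injective _ σ.symm.injective]
        exact hcardT


/-- Statement for all `s ≥ 3`, written with `s + 1` (so `hs : 2 ≤ s` means `s + 1 ≥ 3`):
if `A ⊆ 𝒫_{r,s+1}` is down-closed and `0 ≤ j ≤ r`, then
`A∖j = {y ∈ 𝒫_{r-j,s} : the non-increasing rearrangement of y with entry j inserted lies in A}`
is down-closed in `𝒫_{r-j,s}`. -/
theorem stmt8 (r s j : ℕ) (hr : 2 ≤ r) (hs : 2 ≤ s) (hj : j ≤ r)
    (A : Set (Fin (s + 1) → ℕ)) (hA : A ⊆ Pset r (s + 1)) (hdc : DownClosed r (s + 1) A) :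
    DownClosed (r - j) s
      {y | y ∈ Pset (r - j) s ∧
        ∃ σ : Equiv.Perm (Fin (s + 1)), (Fin.cons j y ∘ σ) ∈ A} := by
  intro x hx y hy hxy
  obtain ⟨hxP, σ, hXA⟩ := hx
  refine ⟨hy, ?_⟩
  classical
  set f : Fin (s + 1) → ℕᵒᵈ := fun i => OrderDual.toDual ((Fin.cons j y : Fin (s + 1) → ℕ) i) with hf
  set τ := Tuple.sort f with hτ
  have hYanti : ∀ a b : Fin (s + 1), a ≤ b →
      (Fin.cons j y ∘ τ) b ≤ (Fin.cons j y ∘ τ) a := by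
    intro a b hab
    exact Tuple.monotone_sort f hab
  have hYP : (Fin.cons j y ∘ τ) ∈ Pset r (s + 1) := by
    refine ⟨hYanti, ?_⟩
    have h1 : ∑ i, (Fin.cons j y ∘ τ) i = ∑ i, Fin.cons j y i :=
      Equiv.sum_comp τ (Fin.cons j y)
    rw [h1, Fin.sum_cons, hy.2]
    omega
  have hXP := hA hXA
  have hXanti : ∀ a b : Fin (s + 1), a ≤ b →
      (Fin.cons j x ∘ σ) b ≤ (Fin.cons j x ∘ σ) a := hXP.1
  refine ⟨τ, hdc _ hXA _ hYP ?_⟩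
  intro k
  cases k with
  | zero => simp
  | succ k =>
    show psum (Fin.cons j y ∘ τ) (k + 1) ≤ psum (Fin.cons j x ∘ σ) (k + 1)
    calc psum (Fin.cons j y ∘ τ) (k + 1) ≤ max (j + psum y k) (psum y (k + 1)) :=
          claimA j k y hy.1 τ
      _ ≤ max (j + psum x k) (psum x (k + 1)) :=
          max_le_max (Nat.add_le_add_left (hxy k) j) (hxy (k + 1))
      _ ≤ psum (Fin.cons j x ∘ σ) (k + 1) :=
          max_le (claimB1 j k x σ hXanti) (claimB2 j k x σ hXanti)
end

section
/- For each integer r ≥ 1, let M_r be the maximum, over all multisets μ of non-negative integers of size r summing to r, of the proportion of functions f : [r] → [r] whose multiset of fibre sizes {|f^{-1}(1)|, …, |f^{-1}(r)|} equals μ, i.e., M_r = max_μ |{ f : [r] → [r] : the multiset of fibre sizes of f is μ }| / r^r. Then M_r → 0 as r → ∞. (Equivalently: when r balls are placed uniformly and independently into r urns, the probability of any particular ordered occupancy distribution tends to 0 uniformly as r → ∞.) -/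
open Real Finset Filter

lemma count_fiber {n : ℕ} {α : Type*} [DecidableEq α] (f : Fin n → α) (i : α) :
    (Finset.univ.val.map f).count i = (Finset.univ.filter (fun a => f a = i)).card := by
  rw [Multiset.count_map]
  simp [Finset.card, Finset.filter, eq_comm]

lemma exists_comp_perm {n : ℕ} {α : Type*} [DecidableEq α] (f g : Fin n → α)
    (h : Finset.univ.val.map f = Finset.univ.val.map g) :
    ∃ σ : Equiv.Perm (Fin n), f = g ∘ σ := by
  have hcard : ∀ i : α, Fintype.card {a // f a = i} = Fintype.card {a // g a = i} := by
    intro i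
    have hc := congrArg (Multiset.count i) h
    rw [count_fiber, count_fiber] at hc
    simpa [Fintype.card_subtype] using hc
  let e : ∀ i : α, {a // f a = i} ≃ {a // g a = i} := fun i => Fintype.equivOfCardEq (hcard i)
  refine ⟨((Equiv.sigmaFiberEquiv f).symm.trans
      ((Equiv.sigmaCongrRight e).trans (Equiv.sigmaFiberEquiv g))), ?_⟩
  funext a
  exact ((e (f a) ⟨a, rfl⟩).prop).symm

lemma words_card_mul_le {n : ℕ} {α : Type*} [DecidableEq α] (μ : Multiset α)
    (T : Finset (Fin n → α)) (hT : ∀ f ∈ T, Finset.univ.val.map f = μ) :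
    T.card * ∏ a ∈ μ.toFinset, (μ.count a).factorial ≤ n.factorial := by
  classical
  rcases T.eq_empty_or_nonempty with he | ⟨g, hg⟩
  · simp [he]
  have hgμ : Finset.univ.val.map g = μ := hT g hg
  set stab : Finset (Equiv.Perm (Fin n)) :=
    Finset.univ.filter (fun σ : Equiv.Perm (Fin n) => g ∘ σ = g) with hstabdef
  have hstab : stab.card = ∏ a ∈ μ.toFinset, (μ.count a).factorial := by
    have h1 : stab.card = Fintype.card {σ : Equiv.Perm (Fin n) // g ∘ σ = g} := by
      rw [Fintype.card_subtype]
    rw [h1, DomMulAct.stabilizer_card' g]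
    have himg : Finset.univ.image g = μ.toFinset := by
      rw [← hgμ]
      ext a
      simp [Multiset.mem_toFinset, Finset.mem_image, List.mem_ofFn, Set.range, eq_comm]
    rw [himg]
    refine Finset.prod_congr rfl fun a _ => ?_
    rw [← hgμ, count_fiber, Fintype.card_subtype]
  -- choice of permutations
  have hσ : ∀ f ∈ T, ∃ σ : Equiv.Perm (Fin n), f = g ∘ σ := fun f hf =>
    exists_comp_perm f g ((hT f hf).trans hgμ.symm)
  choose! σf hσf using hσ
  have key : (T ×ˢ stab).card ≤ (Finset.univ : Finset (Equiv.Perm (Fin n))).card := by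
    apply Finset.card_le_card_of_injOn (fun p => p.2 * σf p.1) (fun p _ => Finset.mem_univ _)
    rintro ⟨f₁, τ₁⟩ hp₁ ⟨f₂, τ₂⟩ hp₂ hp
    simp only [Finset.mem_coe, Finset.mem_product, hstabdef, Finset.mem_filter] at hp₁ hp₂
    have hfg : ∀ f ∈ T, ∀ τ : Equiv.Perm (Fin n), g ∘ τ = g → g ∘ (τ * σf f) = f := by
      intro f hf τ hτ
      funext a
      have h1 : g (τ (σf f a)) = g (σf f a) := congrFun hτ (σf f a)
      simpa [Equiv.Perm.mul_apply] using h1.trans (congrFun (hσf f hf).symm a)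
    have hf : f₁ = f₂ := by
      have e1 := hfg f₁ hp₁.1 τ₁ hp₁.2.2
      have e2 := hfg f₂ hp₂.1 τ₂ hp₂.2.2
      simp only at hp
      rw [hp] at e1
      exact e1.symm.trans e2
    subst hf
    simp only at hp
    have := mul_right_cancel hp
    simp [this]
  rw [Finset.card_product, hstab] at key
  simpa [Finset.card_univ, Fintype.card_perm, Fintype.card_fin] using key

lemma main_count {r : ℕ} (μ : Multiset ℕ) :
    (Finset.univ.filter (fun f : Fin r → Fin r =>
        Finset.univ.val.map
          (fun i : Fin r => (Finset.univ.filter (fun a : Fin r => f a = i)).card) = μ)).card *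
      ((μ.map Nat.factorial).prod * ∏ j ∈ μ.toFinset, (μ.count j).factorial)
      ≤ r.factorial * r.factorial := by
  classical
  set W : (Fin r → Fin r) → Multiset (Fin r) := fun f => Finset.univ.val.map f with hW
  set S := Finset.univ.filter (fun f : Fin r → Fin r =>
      Finset.univ.val.map
        (fun i : Fin r => (Finset.univ.filter (fun a : Fin r => f a = i)).card) = μ) with hS
  -- membership criterion via counts of W f
  have hmemS : ∀ f : Fin r → Fin r, f ∈ S ↔
      Finset.univ.val.map (fun i : Fin r => (W f).count i) = μ := by
    intro f
    simp only [hS, Finset.mem_filter, Finset.mem_univ, true_and, hW]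
    constructor
    · intro h; rw [← h]; congr 1; funext i; rw [count_fiber]
    · intro h; rw [← h]; congr 1; funext i; rw [count_fiber]
  -- fibers of W
  have hfib : ∀ w ∈ S.image W,
      (S.filter (fun f => W f = w)).card * (μ.map Nat.factorial).prod ≤ r.factorial := by
    intro w hw
    obtain ⟨f₀, hf₀S, hf₀⟩ := Finset.mem_image.mp hw
    have hprod : ∏ i ∈ w.toFinset, (w.count i).factorial = (μ.map Nat.factorial).prod := by
      have h1 : ∏ i ∈ w.toFinset, (w.count i).factorial
          = ∏ i : Fin r, (w.count i).factorial := by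
        apply Finset.prod_subset (Finset.subset_univ _)
        intro i _ hi
        rw [Multiset.mem_toFinset] at hi
        simp [Multiset.count_eq_zero_of_notMem hi]
      have h2 : ∏ i : Fin r, (w.count i).factorial
          = ((Finset.univ.val.map (fun i : Fin r => w.count i)).map Nat.factorial).prod := by
        rw [Multiset.map_map]
        rfl
      rw [h1, h2, ← hf₀, (hmemS f₀).mp hf₀S]
    have := words_card_mul_le w (S.filter (fun f => W f = w)) (by
      intro f hf
      rw [Finset.mem_filter] at hf
      exact hf.2)
    rwa [hprod] at this
  -- number of fibers
  have himg : (S.image W).card * ∏ j ∈ μ.toFinset, (μ.count j).factorial ≤ r.factorial := by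
    set φ : Multiset (Fin r) → (Fin r → ℕ) := fun w i => w.count i with hφ
    have hinj : Set.InjOn φ (S.image W) := by
      intro w₁ h₁ w₂ h₂ h
      ext i
      exact congrFun h i
    have hsub : (S.image W).image φ ⊆
        ((S.image W).image φ) := le_refl _
    have hcard : ((S.image W).image φ).card = (S.image W).card :=
      Finset.card_image_of_injOn hinj
    rw [← hcard]
    apply words_card_mul_le μ
    intro v hv
    obtain ⟨w, hw, rfl⟩ := Finset.mem_image.mp hv
    obtain ⟨f₀, hf₀S, rfl⟩ := Finset.mem_image.mp hw
    exact (hmemS f₀).mp hf₀S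
  -- combine
  have hsum : S.card = ∑ w ∈ S.image W, (S.filter (fun f => W f = w)).card :=
    Finset.card_eq_sum_card_image W S
  calc S.card * ((μ.map Nat.factorial).prod * ∏ j ∈ μ.toFinset, (μ.count j).factorial)
      = (∑ w ∈ S.image W, (S.filter (fun f => W f = w)).card * (μ.map Nat.factorial).prod)
          * ∏ j ∈ μ.toFinset, (μ.count j).factorial := by
        rw [← Finset.sum_mul, ← hsum]; ring
    _ ≤ (∑ _w ∈ S.image W, r.factorial) * ∏ j ∈ μ.toFinset, (μ.count j).factorial := by
        apply Nat.mul_le_mul_right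
        exact Finset.sum_le_sum hfib
    _ = ((S.image W).card * ∏ j ∈ μ.toFinset, (μ.count j).factorial) * r.factorial := by
        rw [Finset.sum_const, smul_eq_mul]; ring
    _ ≤ r.factorial * r.factorial := Nat.mul_le_mul_right _ himg

lemma stirling_ge (n : ℕ) (hn : 1 ≤ n) : Real.sqrt π ≤ Stirling.stirlingSeq n := by
  obtain ⟨k, rfl⟩ := Nat.exists_eq_add_of_le hn
  have htend : Filter.Tendsto (Stirling.stirlingSeq ∘ Nat.succ) atTop (nhds (Real.sqrt π)) :=
    Stirling.tendsto_stirlingSeq_sqrt_pi.comp (Filter.tendsto_add_atTop_nat 1)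
  have := Stirling.stirlingSeq'_antitone.le_of_tendsto htend k
  simpa [Nat.add_comm] using this

lemma stirling_le (n : ℕ) (hn : 1 ≤ n) : Stirling.stirlingSeq n ≤ exp 1 / Real.sqrt 2 := by
  obtain ⟨k, rfl⟩ := Nat.exists_eq_add_of_le hn
  have := Stirling.stirlingSeq'_antitone (Nat.zero_le k)
  simpa [Nat.add_comm, Stirling.stirlingSeq_one] using this

lemma fact_lower (n : ℕ) (hn : 1 ≤ n) :
    Real.sqrt n * ((n : ℝ) / exp 1) ^ n ≤ (n.factorial : ℝ) := by
  have hpos : (0:ℝ) < Real.sqrt (2 * n) * ((n : ℝ) / exp 1) ^ n := by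
    have : (0:ℝ) < (n:ℝ) := by exact_mod_cast hn
    positivity
  have h1 : Real.sqrt π ≤ (n.factorial : ℝ) / (Real.sqrt (2 * n) * ((n : ℝ) / exp 1) ^ n) :=
    stirling_ge n hn
  have h2 : Real.sqrt π * (Real.sqrt (2 * n) * ((n : ℝ) / exp 1) ^ n) ≤ (n.factorial : ℝ) := by
    rw [← le_div_iff₀ hpos]; exact h1
  refine le_trans ?_ h2
  have hππ : (1:ℝ) ≤ Real.sqrt π := by
    rw [show (1:ℝ) = Real.sqrt 1 by simp]
    exact Real.sqrt_le_sqrt (by linarith [Real.pi_gt_three])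
  have hs : Real.sqrt (n:ℝ) ≤ Real.sqrt (2*n) := Real.sqrt_le_sqrt (by
    have : (0:ℝ) ≤ (n:ℝ) := Nat.cast_nonneg n
    linarith)
  have hp : (0:ℝ) ≤ ((n : ℝ) / exp 1) ^ n := by positivity
  nlinarith [Real.sqrt_nonneg (n:ℝ), Real.sqrt_nonneg ((2:ℝ)*n), mul_nonneg (Real.sqrt_nonneg ((2:ℝ)*n)) hp]

lemma fact_upper (n : ℕ) (hn : 1 ≤ n) :
    (n.factorial : ℝ) ≤ exp 1 * Real.sqrt n * ((n : ℝ) / exp 1) ^ n := by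
  have hpos : (0:ℝ) < Real.sqrt (2 * n) * ((n : ℝ) / exp 1) ^ n := by
    have : (0:ℝ) < (n:ℝ) := by exact_mod_cast hn
    positivity
  have h1 : (n.factorial : ℝ) / (Real.sqrt (2 * n) * ((n : ℝ) / exp 1) ^ n) ≤ exp 1 / Real.sqrt 2 :=
    stirling_le n hn
  have h2 : (n.factorial : ℝ) ≤ (exp 1 / Real.sqrt 2) * (Real.sqrt (2 * n) * ((n : ℝ) / exp 1) ^ n) := by
    rw [div_le_iff₀ hpos] at h1; exact h1
  refine h2.trans (le_of_eq ?_)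
  have h3 : Real.sqrt (2 * n) = Real.sqrt 2 * Real.sqrt n := by
    rw [← Real.sqrt_mul (by norm_num)]
  rw [h3]
  have h2pos : (0:ℝ) < Real.sqrt 2 := by positivity
  field_simp

lemma log_fact_lower' (m : ℕ) (hm : 1 ≤ m) :
    (m:ℝ) * Real.log m - m + Real.log m / 2 ≤ Real.log (m.factorial : ℝ) := by
  have hmp : (0:ℝ) < (m:ℝ) := by exact_mod_cast hm
  have h0 : (0:ℝ) < Real.sqrt m * ((m : ℝ) / exp 1) ^ m := by positivity
  have h := Real.log_le_log h0 (fact_lower m hm)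
  rw [Real.log_mul (by positivity) (by positivity), Real.log_pow, Real.log_div (ne_of_gt hmp)
    (ne_of_gt (exp_pos 1)), Real.log_exp, Real.log_sqrt (le_of_lt hmp)] at h
  calc (m:ℝ) * Real.log m - m + Real.log m / 2
      = Real.log m / 2 + m * (Real.log m - 1) := by ring
    _ ≤ _ := h

lemma log_fact_lower (m : ℕ) : (m:ℝ) * Real.log m - m ≤ Real.log (m.factorial : ℝ) := by
  rcases Nat.eq_zero_or_pos m with rfl | hm
  · simp
  have h := log_fact_lower' m hm
  have : (0:ℝ) ≤ Real.log m := Real.log_natCast_nonneg m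
  linarith

lemma log_fact_upper (r : ℕ) (hr : 1 ≤ r) :
    Real.log (r.factorial : ℝ) ≤ 1 + Real.log r / 2 + r * (Real.log r - 1) := by
  have hrp : (0:ℝ) < (r:ℝ) := by exact_mod_cast hr
  have h0 : (0:ℝ) < (r.factorial : ℝ) := by exact_mod_cast r.factorial_pos
  have h := Real.log_le_log h0 (fact_upper r hr)
  rw [Real.log_mul (by positivity) (by positivity), Real.log_mul (ne_of_gt (exp_pos 1))
    (by positivity), Real.log_pow, Real.log_div (ne_of_gt hrp) (ne_of_gt (exp_pos 1)),
    Real.log_exp, Real.log_sqrt (le_of_lt hrp)] at h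
  linarith

-- entropy-type pointwise bounds
lemma ent1 (x Y : ℝ) (hx : 0 < x) (hY : 0 < Y) : x - Y ≤ x * Real.log (x / Y) := by
  have h := Real.log_le_sub_one_of_pos (show (0:ℝ) < Y / x by positivity)
  have hlog : Real.log (x / Y) = - Real.log (Y / x) := by
    rw [← Real.log_inv]; congr 1; field_simp
  rw [hlog]
  have := mul_le_mul_of_nonneg_left h (le_of_lt hx)
  have hxx : x * (Y / x) = Y := by field_simp
  nlinarith

lemma ent2 (x Y : ℝ) (hx : 0 < x) (hY : 0 < Y) (h : x ≤ Y / 2) :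
    x - Y + (1/2 - exp (-1)) * Y ≤ x * Real.log (x / Y) := by
  set t := x / Y with ht
  have htpos : 0 < t := by positivity
  have hthalf : t ≤ 1/2 := by rw [ht, div_le_iff₀ hY]; linarith
  -- t * log t ≥ -exp (-1)
  have hlogle : Real.log (1/t) ≤ 1/(exp 1 * t) := by
    have h1 : Real.log (1/(exp 1 * t)) ≤ 1/(exp 1 * t) - 1 :=
      Real.log_le_sub_one_of_pos (by positivity)
    have h2 : Real.log (1/(exp 1 * t)) = - 1 - Real.log t := by
      rw [one_div, Real.log_inv, Real.log_mul (ne_of_gt (exp_pos 1)) (ne_of_gt htpos), Real.log_exp]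
      ring
    have h3 : Real.log (1/t) = - Real.log t := by rw [one_div, Real.log_inv]
    linarith
  have hkey : - exp (-1) ≤ t * Real.log t := by
    have h4 : t * Real.log (1/t) ≤ t * (1/(exp 1 * t)) :=
      mul_le_mul_of_nonneg_left hlogle (le_of_lt htpos)
    have h5 : t * (1/(exp 1 * t)) = exp (-1) := by
      rw [Real.exp_neg]; field_simp
    have h6 : t * Real.log (1/t) = - (t * Real.log t) := by
      rw [one_div, Real.log_inv]; ring
    linarith
  -- conclude
  have hid : x * Real.log (x / Y) - x + Y = Y * (t * Real.log t + 1 - t) := by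
    rw [ht]; field_simp; ring
  nlinarith [mul_le_mul_of_nonneg_left hthalf (le_of_lt hY)]

set_option maxHeartbeats 2000000 in
lemma main_est (r : ℕ) (hr : 11 ≤ r) (s : Finset ℕ) (m : ℕ → ℕ)
    (hm1 : ∀ j ∈ s, 1 ≤ m j) (hm0 : ∀ j, j ∉ s → m j = 0)
    (h1 : ∑ j ∈ s, m j = r) (h2 : ∑ j ∈ s, j * m j = r) :
    ((r.factorial : ℝ))^2 /
        ((r:ℝ)^r * ((∏ j ∈ s, ((j.factorial : ℝ))^(m j)) * ∏ j ∈ s, (((m j).factorial : ℝ))))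
      ≤ 270 / Real.sqrt r + Real.exp 2 * r * Real.exp (-(r:ℝ)/42) := by
  have hr1 : 1 ≤ r := le_trans (by norm_num) hr
  set R : ℝ := (r : ℝ) with hRdef
  have hR : (0:ℝ) < R := by
    rw [hRdef]; exact_mod_cast Nat.lt_of_lt_of_le (by norm_num) hr
  have hR11 : (11:ℝ) ≤ R := by rw [hRdef]; exact_mod_cast hr
  have hMpos : ∀ j ∈ s, (0:ℝ) < (m j : ℝ) := fun j hj => by exact_mod_cast hm1 j hj
  have hsumM : ∑ j ∈ s, (m j : ℝ) = R := by rw [hRdef, ← h1]; push_cast; rfl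
  -- positivity of denominator pieces
  have hDv : (0:ℝ) < ∏ j ∈ s, ((j.factorial : ℝ))^(m j) :=
    Finset.prod_pos fun j _ => pow_pos (by exact_mod_cast j.factorial_pos) _
  have hDm : (0:ℝ) < ∏ j ∈ s, (((m j).factorial : ℝ)) :=
    Finset.prod_pos fun j _ => by exact_mod_cast (m j).factorial_pos
  have hRr : (0:ℝ) < R ^ r := pow_pos hR r
  set Q : ℝ := ((r.factorial : ℝ))^2 /
      ((r:ℝ)^r * ((∏ j ∈ s, ((j.factorial : ℝ))^(m j)) * ∏ j ∈ s, (((m j).factorial : ℝ)))) with hQdef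
  have hQpos : 0 < Q := by
    apply div_pos
    · have : (0:ℝ) < (r.factorial : ℝ) := by exact_mod_cast r.factorial_pos
      positivity
    · exact mul_pos hRr (mul_pos hDv hDm)
  -- log decomposition
  have hlogQ : Real.log Q = 2 * Real.log (r.factorial : ℝ) - (r * Real.log R
      + ∑ j ∈ s, (m j : ℝ) * Real.log (j.factorial : ℝ)
      + ∑ j ∈ s, Real.log (((m j).factorial : ℝ))) := by
    rw [hQdef, Real.log_div (by positivity) (by positivity), Real.log_pow,
      Real.log_mul (ne_of_gt hRr) (ne_of_gt (mul_pos hDv hDm)),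
      Real.log_mul (ne_of_gt hDv) (ne_of_gt hDm), Real.log_pow,
      Real.log_prod (fun j _ => by positivity),
      Real.log_prod (fun j hj => by
        have : (0:ℝ) < (((m j).factorial : ℝ)) := by exact_mod_cast (m j).factorial_pos
        exact ne_of_gt this)]
    simp only [Real.log_pow]
    push_cast
    ring
  -- the comparison sequence
  set c : ℕ → ℝ := fun j => R * Real.exp (-1) / (j.factorial : ℝ) with hcdef
  have hcpos : ∀ j, 0 < c j := fun j => by
    have : (0:ℝ) < (j.factorial : ℝ) := by exact_mod_cast j.factorial_pos
    rw [hcdef]; positivity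
  set Δ : ℝ := ∑ j ∈ s, (m j : ℝ) * Real.log ((m j : ℝ) / c j) with hΔdef
  -- identity
  have hterm : ∀ j ∈ s, (m j : ℝ) * Real.log ((m j : ℝ) / c j)
      = ((m j : ℝ) * Real.log (m j) + (m j : ℝ) * Real.log (j.factorial : ℝ))
        - (m j : ℝ) * Real.log R + (m j : ℝ) := by
    intro j hj
    have hjf : (0:ℝ) < (j.factorial : ℝ) := by exact_mod_cast j.factorial_pos
    rw [Real.log_div (ne_of_gt (hMpos j hj)) (ne_of_gt (hcpos j)), hcdef]
    rw [Real.log_div (by positivity) (ne_of_gt hjf), Real.log_mul (ne_of_gt hR)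
      (ne_of_gt (Real.exp_pos _)), Real.log_exp]
    try ring
  have hS3 : Δ = (∑ j ∈ s, ((m j : ℝ) * Real.log (m j) + (m j : ℝ) * Real.log (j.factorial : ℝ)))
      - R * Real.log R + R := by
    rw [hΔdef, Finset.sum_congr rfl hterm, Finset.sum_add_distrib, Finset.sum_sub_distrib,
      ← Finset.sum_mul, hsumM]
    try ring
  -- range bound and sum of 1/j! over s
  have hrange : s ⊆ Finset.range (r + 1) := by
    intro j hj
    rw [Finset.mem_range]
    have : j * m j ≤ r := h2 ▸ Finset.single_le_sum (f := fun j => j * m j) (fun i _ => Nat.zero_le _) hj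
    have h1m := hm1 j hj
    nlinarith [this, h1m]
  have hsumc : ∀ t : Finset ℕ, t ⊆ Finset.range (r+1) → ∑ j ∈ t, (1 / (j.factorial : ℝ)) ≤ Real.exp 1 := by
    intro t ht
    calc ∑ j ∈ t, (1 / (j.factorial : ℝ))
        ≤ ∑ j ∈ Finset.range (r+1), (1 / (j.factorial : ℝ)) := by
          apply Finset.sum_le_sum_of_subset_of_nonneg ht
          intro j _ _
          positivity
      _ ≤ Real.exp 1 := by
          have := Real.sum_le_exp_of_nonneg (le_of_lt one_pos) (r+1)
          simpa using this
  have hceq : ∑ j ∈ s, c j = R * Real.exp (-1) * ∑ j ∈ s, (1 / (j.factorial : ℝ)) := by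
    rw [Finset.mul_sum]
    exact Finset.sum_congr rfl fun j _ => by rw [hcdef]; ring
  have hsumcs : ∑ j ∈ s, c j ≤ R := by
    rw [hceq]
    have h := hsumc s hrange
    have hpos : (0:ℝ) < R * Real.exp (-1) := by positivity
    calc R * Real.exp (-1) * ∑ j ∈ s, (1 / (j.factorial : ℝ))
        ≤ R * Real.exp (-1) * Real.exp 1 := by
          exact mul_le_mul_of_nonneg_left h (le_of_lt hpos)
      _ = R := by rw [mul_assoc, ← Real.exp_add]; norm_num
  -- Δ ≥ Σ (M - c) ≥ 0 pieces
  have hΔge : ∑ j ∈ s, ((m j : ℝ) - c j) ≤ Δ :=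
    Finset.sum_le_sum fun j hj => ent1 _ _ (hMpos j hj) (hcpos j)
  have hsMC : ∑ j ∈ s, ((m j : ℝ) - c j) = R - ∑ j ∈ s, c j := by
    rw [Finset.sum_sub_distrib, hsumM]
  -- numerical bounds on e
  have he_lt : Real.exp 1 < 2.7182818286 := Real.exp_one_lt_d9
  have he_gt : 2.7182818283 < Real.exp 1 := Real.exp_one_gt_d9
  have hepos : (0:ℝ) < Real.exp 1 := Real.exp_pos 1
  have hexpneg : Real.exp (-1) = 1 / Real.exp 1 := by
    rw [Real.exp_neg]; exact inv_eq_one_div _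
  have hSm_low : ∑ j ∈ s, ((m j:ℝ) * Real.log (m j) - (m j:ℝ))
      ≤ ∑ j ∈ s, Real.log (((m j).factorial : ℝ)) :=
    Finset.sum_le_sum fun j _ => log_fact_lower (m j)
  have h2fact : 2 * Real.log (r.factorial:ℝ) ≤ 2 + Real.log R + 2*(R * Real.log R - R) := by
    have h := log_fact_upper r hr1
    simp only [← hRdef] at h
    linarith
  have master : ∀ E : ℝ,
      (∑ j ∈ s, ((m j:ℝ) * Real.log (m j) - (m j:ℝ))) + E
        ≤ ∑ j ∈ s, Real.log (((m j).factorial : ℝ)) →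
      Real.log Q ≤ 2 + Real.log R - Δ - E := by
    intro E hE
    have hidentity : ∑ j ∈ s, (m j:ℝ) * Real.log (j.factorial:ℝ)
        = Δ + R * Real.log R - R - ∑ j ∈ s, (m j:ℝ) * Real.log ((m j:ℝ)) := by
      rw [Finset.sum_add_distrib] at hS3
      linarith
    have hsplit : ∑ j ∈ s, ((m j:ℝ) * Real.log (m j) - (m j:ℝ))
        = ∑ j ∈ s, (m j:ℝ) * Real.log ((m j:ℝ)) - R := by
      rw [Finset.sum_sub_distrib, hsumM]
    have hc2 : Real.log Q = 2 * Real.log (r.factorial:ℝ) - (R * Real.log R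
        + ∑ j ∈ s, (m j : ℝ) * Real.log (j.factorial : ℝ)
        + ∑ j ∈ s, Real.log (((m j).factorial : ℝ))) := by
      simp only [← hRdef] at hlogQ
      exact hlogQ
    rw [hc2, hidentity]
    rw [hsplit] at hE
    linarith
  have hΔ0 : 0 ≤ Δ := by
    have := hΔge
    rw [hsMC] at this
    linarith [hsumcs]
  have hsqrtRpos : (0:ℝ) < Real.sqrt R := Real.sqrt_pos.mpr hR
  by_cases hcase : ∀ j ≤ 2, R / 11 < (m j : ℝ)
  · -- Case 1 : all of m 0, m 1, m 2 are large
    have hjs : ∀ j ≤ 2, j ∈ s := by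
      intro j hj
      by_contra hns
      have h0 := hm0 j hns
      have h1' := hcase j hj
      rw [h0] at h1'
      simp only [Nat.cast_zero] at h1'
      nlinarith
    have h012 : ({0,1,2} : Finset ℕ) ⊆ s := by
      intro j hj
      have : j ≤ 2 := by fin_cases hj <;> norm_num
      exact hjs j this
    have hE : (∑ j ∈ s, ((m j:ℝ) * Real.log (m j) - (m j:ℝ))) + 3/2 * Real.log (R/11)
        ≤ ∑ j ∈ s, Real.log (((m j).factorial : ℝ)) := by
      have hterm2 : ∀ j ∈ ({0,1,2} : Finset ℕ), Real.log (R/11) / 2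
          ≤ Real.log (((m j).factorial : ℝ)) - ((m j:ℝ) * Real.log (m j) - (m j:ℝ)) := by
        intro j hj
        have hjle : j ≤ 2 := by fin_cases hj <;> norm_num
        have hm1j : 1 ≤ m j := hm1 j (hjs j hjle)
        have h := log_fact_lower' (m j) hm1j
        have hlogm : Real.log (R/11) ≤ Real.log ((m j:ℝ)) :=
          Real.log_le_log (by positivity) (le_of_lt (hcase j hjle))
        linarith
      have hsum1 := Finset.sum_le_sum hterm2
      have hcard : ∑ _j ∈ ({0,1,2} : Finset ℕ), Real.log (R/11) / 2
          = 3 * (Real.log (R/11) / 2) := by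
        rw [Finset.sum_const]
        norm_num
      have hsum012 : ∑ j ∈ ({0,1,2} : Finset ℕ),
            (Real.log (((m j).factorial : ℝ)) - ((m j:ℝ) * Real.log (m j) - (m j:ℝ)))
          ≤ ∑ j ∈ s, (Real.log (((m j).factorial : ℝ)) - ((m j:ℝ) * Real.log (m j) - (m j:ℝ))) := by
        apply Finset.sum_le_sum_of_subset_of_nonneg h012
        intro j hj _
        have := log_fact_lower (m j)
        linarith
      have hdiff : ∑ j ∈ s, (Real.log (((m j).factorial : ℝ)) - ((m j:ℝ) * Real.log (m j) - (m j:ℝ)))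
          = ∑ j ∈ s, Real.log (((m j).factorial : ℝ))
            - ∑ j ∈ s, ((m j:ℝ) * Real.log (m j) - (m j:ℝ)) := by
        rw [Finset.sum_sub_distrib]
      rw [hcard] at hsum1
      rw [hdiff] at hsum012
      linarith
    have hlog1 : Real.log Q ≤ 2 + Real.log R - 3/2 * Real.log (R/11) := by
      have := master (3/2 * Real.log (R/11)) hE
      linarith
    have hlogR11 : Real.log (R/11) = Real.log R - Real.log 11 :=
      Real.log_div (ne_of_gt hR) (by norm_num)
    have hexph : Real.exp (Real.log R / 2) = Real.sqrt R := by
      rw [← Real.log_sqrt (le_of_lt hR), Real.exp_log hsqrtRpos]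
    have hexp11 : Real.exp (Real.log 11 / 2) = Real.sqrt 11 := by
      rw [← Real.log_sqrt (by norm_num), Real.exp_log (Real.sqrt_pos.mpr (by norm_num))]
    have hQle : Q ≤ 270 / Real.sqrt R := by
      have hb : Real.log Q ≤ 2 + 3/2 * Real.log 11 - Real.log R / 2 := by
        rw [hlogR11] at hlog1
        linarith
      have hQe : Q = Real.exp (Real.log Q) := (Real.exp_log hQpos).symm
      rw [hQe]
      have h1' : Real.exp (Real.log Q) ≤ Real.exp (2 + 3/2 * Real.log 11 - Real.log R / 2) :=
        Real.exp_le_exp.mpr hb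
      have h2' : Real.exp (2 + 3/2 * Real.log 11 - Real.log R / 2)
          = Real.exp 2 * (Real.exp (Real.log 11) * Real.exp (Real.log 11 / 2))
            / Real.exp (Real.log R / 2) := by
        rw [← Real.exp_add, ← Real.exp_add, ← Real.exp_sub]
        ring_nf
      rw [h2', Real.exp_log (by norm_num : (0:ℝ) < 11), hexp11, hexph] at h1'
      refine h1'.trans ?_
      have h11 : Real.sqrt 11 ≤ 3.3167 := by
        rw [show (3.3167:ℝ) = Real.sqrt (3.3167^2) from (Real.sqrt_sq (by norm_num)).symm]
        exact Real.sqrt_le_sqrt (by norm_num)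
      have he2 : Real.exp 2 ≤ 7.3891 := by
        rw [show (2:ℝ) = 1 + 1 by norm_num, Real.exp_add]
        nlinarith [mul_pos (sub_pos.mpr he_lt) (show (0:ℝ) < 2.7182818286 + Real.exp 1 by positivity)]
      have hnum : Real.exp 2 * (11 * Real.sqrt 11) ≤ 270 := by
        nlinarith [Real.sqrt_nonneg (11:ℝ), Real.exp_pos 2]
      gcongr
    -- conclude case 1
    have hsecond : 0 ≤ Real.exp 2 * R * Real.exp (-R/42) := by positivity
    linarith
  · -- Case 2
    push_neg at hcase
    obtain ⟨j₀, hj₀2, hj₀le⟩ := hcase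
    have hj₀factpos : (0:ℝ) < (j₀.factorial : ℝ) := by exact_mod_cast j₀.factorial_pos
    have hj₀fact2 : (j₀.factorial : ℝ) ≤ 2 := by
      interval_cases j₀ <;> norm_num
    have hcj₀ : R * Real.exp (-1) / 2 ≤ c j₀ := by
      have hc0 : c j₀ = R * Real.exp (-1) / (j₀.factorial:ℝ) := rfl
      rw [hc0]
      gcongr
    have hu1 : (0.3678:ℝ) ≤ Real.exp (-1) := by
      rw [hexpneg, le_div_iff₀ hepos]
      nlinarith [he_lt]
    have hu2 : Real.exp (-1) ≤ 0.368 := by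
      rw [hexpneg, div_le_iff₀ hepos]
      nlinarith [he_gt]
    have hΔbig : R / 42 ≤ Δ := by
      by_cases hj₀s : j₀ ∈ s
      · -- refined term at j₀
        have hg : ∀ j ∈ s, 0 ≤ (m j:ℝ) * Real.log ((m j:ℝ)/c j) - ((m j:ℝ) - c j) := by
          intro j hj
          have := ent1 ((m j:ℝ)) (c j) (hMpos j hj) (hcpos j)
          linarith
        have hhalf : (m j₀:ℝ) ≤ c j₀ / 2 := by
          have h4e : R / 11 ≤ R * Real.exp (-1) / 4 := by
            nlinarith [mul_le_mul_of_nonneg_left hu1 (le_of_lt hR)]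
          linarith
        have hgj₀ : (1/2 - Real.exp (-1)) * c j₀
            ≤ (m j₀:ℝ) * Real.log ((m j₀:ℝ)/c j₀) - ((m j₀:ℝ) - c j₀) := by
          have := ent2 ((m j₀:ℝ)) (c j₀) (hMpos j₀ hj₀s) (hcpos j₀) hhalf
          linarith
        have hsumg : (1/2 - Real.exp (-1)) * c j₀
            ≤ ∑ j ∈ s, ((m j:ℝ) * Real.log ((m j:ℝ)/c j) - ((m j:ℝ) - c j)) :=
          le_trans hgj₀ (Finset.single_le_sum hg hj₀s)
        have hgsum : ∑ j ∈ s, ((m j:ℝ) * Real.log ((m j:ℝ)/c j) - ((m j:ℝ) - c j))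
            = Δ - ∑ j ∈ s, ((m j:ℝ) - c j) := by
          rw [hΔdef, Finset.sum_sub_distrib]
        have hnn : (0:ℝ) ≤ 1/2 - Real.exp (-1) := by linarith
        have hmono : (1/2 - Real.exp (-1)) * (R * Real.exp (-1) / 2)
            ≤ (1/2 - Real.exp (-1)) * c j₀ := mul_le_mul_of_nonneg_left hcj₀ hnn
        have hq : (1:ℝ)/42 ≤ (1/2 - Real.exp (-1)) * (Real.exp (-1) / 2) := by
          nlinarith [mul_le_mul_of_nonneg_left hu2 (le_trans (by norm_num) hu1)]
        have hqR : R/42 ≤ (1/2 - Real.exp (-1)) * (R * Real.exp (-1) / 2) := by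
          nlinarith [mul_le_mul_of_nonneg_left hq (le_of_lt hR)]
        rw [hsMC] at hgsum
        linarith [hsumcs]
      · -- j₀ not in support
        have hins : insert j₀ s ⊆ Finset.range (r+1) := by
          intro j hj
          rcases Finset.mem_insert.mp hj with rfl | hj'
          · rw [Finset.mem_range]; omega
          · exact hrange hj'
        have hsum2 := hsumc (insert j₀ s) hins
        rw [Finset.sum_insert hj₀s] at hsum2
        have hfrac : (1:ℝ)/2 ≤ 1/(j₀.factorial:ℝ) := by
          apply div_le_div_of_nonneg_left (by norm_num) hj₀factpos hj₀fact2
        have hcs : ∑ j ∈ s, c j ≤ R * Real.exp (-1) * (Real.exp 1 - 1/2) := by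
          rw [hceq]
          apply mul_le_mul_of_nonneg_left _ (by positivity)
          linarith
        have hval : R * Real.exp (-1) * (Real.exp 1 - 1/2) = R - R * Real.exp (-1)/2 := by
          rw [hexpneg]
          field_simp
        have hnum : R/42 ≤ R * Real.exp (-1)/2 := by
          nlinarith [mul_le_mul_of_nonneg_left hu1 (le_of_lt hR)]
        rw [hval] at hcs
        rw [hsMC] at hΔge
        linarith
    have hlog2 : Real.log Q ≤ 2 + Real.log R - R/42 := by
      have h := master 0 (by linarith [hSm_low])
      linarith
    have hQle : Q ≤ Real.exp 2 * R * Real.exp (-R/42) := by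
      have hQe : Q = Real.exp (Real.log Q) := (Real.exp_log hQpos).symm
      rw [hQe]
      calc Real.exp (Real.log Q) ≤ Real.exp (2 + Real.log R - R/42) := Real.exp_le_exp.mpr hlog2
        _ = Real.exp 2 * R * Real.exp (-R/42) := by
            rw [show (2 + Real.log R - R/42) = (2 + Real.log R) + (-R/42) by ring,
              Real.exp_add, Real.exp_add, Real.exp_log hR]
    have hfirst : 0 ≤ 270 / Real.sqrt R := by positivity
    linarith

lemma final_est (r : ℕ) (hr : 11 ≤ r) (μ : Multiset ℕ)
    (hc : Multiset.card μ = r) (hs : μ.sum = r) :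
    ((Finset.univ.filter (fun f : Fin r → Fin r =>
        Finset.univ.val.map
          (fun i : Fin r => (Finset.univ.filter (fun a : Fin r => f a = i)).card) = μ)).card : ℝ) /
      (r : ℝ) ^ r ≤ 270 / Real.sqrt r + Real.exp 2 * r * Real.exp (-(r:ℝ)/42) := by
  classical
  set S := Finset.univ.filter (fun f : Fin r → Fin r =>
      Finset.univ.val.map
        (fun i : Fin r => (Finset.univ.filter (fun a : Fin r => f a = i)).card) = μ) with hS
  set s := μ.toFinset with hsdef
  set m : ℕ → ℕ := fun j => μ.count j with hmdef
  have h1 : ∑ j ∈ s, m j = r := by rw [hsdef, hmdef, Multiset.toFinset_sum_count_eq, hc]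
  have h2 : ∑ j ∈ s, j * m j = r := by
    have hmm : μ.sum = ∑ j ∈ μ.toFinset, μ.count j * j := by
      have h := Finset.sum_multiset_map_count μ (id : ℕ → ℕ)
      simpa using h
    rw [hsdef, hmdef, ← hs, hmm]
    exact Finset.sum_congr rfl fun j _ => Nat.mul_comm _ _
  have hm1 : ∀ j ∈ s, 1 ≤ m j := fun j hj =>
    Multiset.one_le_count_iff_mem.mpr (Multiset.mem_toFinset.mp hj)
  have hm0 : ∀ j, j ∉ s → m j = 0 := fun j hj =>
    Multiset.count_eq_zero_of_notMem (fun h => hj (Multiset.mem_toFinset.mpr h))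
  have hDveq : (μ.map Nat.factorial).prod = ∏ j ∈ s, (j.factorial)^(m j) :=
    Finset.prod_multiset_map_count μ Nat.factorial
  have hcount := main_count (r := r) μ
  rw [hDveq] at hcount
  -- cast to ℝ
  have key : (S.card : ℝ) * ((∏ j ∈ s, ((j.factorial : ℝ))^(m j)) * ∏ j ∈ s, (((m j).factorial : ℝ)))
      ≤ ((r.factorial : ℝ))^2 := by
    have := hcount
    have hcast : ((S.card * ((∏ j ∈ s, (j.factorial)^(m j)) * ∏ j ∈ s, ((m j).factorial)) : ℕ) : ℝ)
        ≤ ((r.factorial * r.factorial : ℕ) : ℝ) := by exact_mod_cast this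
    push_cast at hcast
    calc (S.card : ℝ) * ((∏ j ∈ s, ((j.factorial : ℝ))^(m j)) * ∏ j ∈ s, (((m j).factorial : ℝ)))
        ≤ (r.factorial : ℝ) * (r.factorial : ℝ) := hcast
      _ = ((r.factorial : ℝ))^2 := by ring
  have hr1 : 1 ≤ r := le_trans (by norm_num) hr
  have hRr : (0:ℝ) < (r:ℝ)^r := by
    have : (0:ℝ) < (r:ℝ) := by exact_mod_cast Nat.lt_of_lt_of_le (by norm_num) hr
    positivity
  have hD : (0:ℝ) < (∏ j ∈ s, ((j.factorial : ℝ))^(m j)) * ∏ j ∈ s, (((m j).factorial : ℝ)) := by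
    apply mul_pos
    · exact Finset.prod_pos fun j _ => pow_pos (by exact_mod_cast j.factorial_pos) _
    · exact Finset.prod_pos fun j _ => by exact_mod_cast (m j).factorial_pos
  have hstep : (S.card : ℝ) / (r : ℝ) ^ r
      ≤ ((r.factorial : ℝ))^2 / ((r:ℝ)^r *
        ((∏ j ∈ s, ((j.factorial : ℝ))^(m j)) * ∏ j ∈ s, (((m j).factorial : ℝ)))) := by
    rw [div_le_div_iff₀ hRr (mul_pos hRr hD)]
    nlinarith [mul_le_mul_of_nonneg_right key (le_of_lt hRr)]
  exact hstep.trans (main_est r hr s m hm1 hm0 h1 h2)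

lemma bound_tendsto :
    Tendsto (fun r : ℕ => 270 / Real.sqrt r + Real.exp 2 * r * Real.exp (-(r:ℝ)/42))
      atTop (nhds 0) := by
  have t1 : Tendsto (fun r : ℕ => 270 / Real.sqrt r) atTop (nhds 0) := by
    have hsq : Tendsto (fun x : ℝ => Real.sqrt x) atTop atTop := by
      apply (tendsto_rpow_atTop (by norm_num : (0:ℝ) < 1/2)).congr'
      filter_upwards [eventually_ge_atTop (0:ℝ)] with x hx
      exact (Real.sqrt_eq_rpow x).symm
    have := (hsq.comp tendsto_natCast_atTop_atTop).inv_tendsto_atTop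
    have h2 := this.const_mul (270:ℝ)
    simp only [mul_zero] at h2
    apply h2.congr
    intro r
    simp [div_eq_mul_inv, Function.comp]
  have t2 : Tendsto (fun r : ℕ => Real.exp 2 * r * Real.exp (-(r:ℝ)/42)) atTop (nhds 0) := by
    have base := Real.tendsto_pow_mul_exp_neg_atTop_nhds_zero 1
    have hdiv : Tendsto (fun x : ℝ => x / 42) atTop atTop :=
      Tendsto.atTop_div_const (by norm_num) tendsto_id
    have comp := base.comp hdiv
    have h3 := comp.const_mul (42 * Real.exp 2)
    simp only [mul_zero] at h3
    have h4 := h3.comp (tendsto_natCast_atTop_atTop (R := ℝ))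
    apply h4.congr
    intro r
    simp only [Function.comp]
    rw [pow_one]
    have : -((r:ℝ)/42) = -(r:ℝ)/42 := by ring
    rw [this]
    ring
  have := t1.add t2
  simpa using this


/-- When `r` balls are placed uniformly and independently into `r` urns, the maximal
probability `M_r` of any particular occupancy multiset tends to `0` as `r → ∞`:
for every `ε > 0` there is `N` such that for all `r ≥ N` and every multiset `μ` of
non-negative integers of size `r` summing to `r`, the proportion of functions
`f : [r] → [r]` whose multiset of fibre sizes equals `μ` is less than `ε`. -/
theorem stmt10 :
    ∀ ε : ℝ, 0 < ε → ∃ N : ℕ, ∀ r : ℕ, N ≤ r → ∀ μ : Multiset ℕ,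
      Multiset.card μ = r → μ.sum = r →
      ((Finset.univ.filter (fun f : Fin r → Fin r =>
          Finset.univ.val.map
            (fun i : Fin r => (Finset.univ.filter (fun a : Fin r => f a = i)).card) = μ)).card : ℝ) /
        (r : ℝ) ^ r < ε := by
  intro ε hε
  have hev : ∀ᶠ r : ℕ in atTop,
      270 / Real.sqrt r + Real.exp 2 * r * Real.exp (-(r:ℝ)/42) < ε :=
    bound_tendsto.eventually_lt_const hε
  obtain ⟨N₀, hN₀⟩ := eventually_atTop.mp hev
  refine ⟨max N₀ 11, fun r hrN μ hc hs => ?_⟩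
  have hr11 : 11 ≤ r := le_trans (le_max_right _ _) hrN
  have hrN₀ : N₀ ≤ r := le_trans (le_max_left _ _) hrN
  exact lt_of_le_of_lt (final_est r hr11 μ hc hs) (hN₀ r hrN₀)
end

section
/- Let r ≥ 2 and m ≥ 1 be integers and P an r-pattern on [m]. There is a constant C (depending on r, m and P only) such that for every n ≥ 1 and every partition [n] = V_1 ∪ ⋯ ∪ V_m into disjoint parts, the number of edges of the blow-up satisfies | |P((V_1,…,V_m))| − λ_P(|V_1|/n, …, |V_m|/n) · binom(n,r) | ≤ C · n^{r−1}. -/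
/-- The Lagrange polynomial `λ_P(x) = r! · Σ_{D∈P} Π_i x_i^{D(i)}/D(i)!` of an
`r`-pattern `P` on `[m]`, where an `r`-multiset on `[m]` is encoded by its multiplicity
function `D : Fin m → ℕ` (with `Σ_i D(i) = r`). -/
noncomputable def lagrangePolyP (r m : ℕ) (P : Finset (Fin m → ℕ)) (x : Fin m → ℝ) : ℝ :=
  (r.factorial : ℝ) * ∑ D ∈ P, ∏ i, (x i) ^ (D i) / ((D i).factorial : ℝ)

lemma aux_pow_le (n : ℕ) : ∀ (d v : ℕ), v ≤ n → v ^ d ≤ v.descFactorial d + d ^ 2 * n ^ (d - 1)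
  | 0, v, _ => by simp
  | (d+1), v, h => by
    have ih := aux_pow_le n d v h
    have hdesc : v.descFactorial d ≤ n ^ d :=
      le_trans (Nat.descFactorial_le_pow v d) (Nat.pow_le_pow_left h d)
    have h1 : v * v.descFactorial d ≤ v.descFactorial (d+1) + d * n ^ d := by
      have : v * v.descFactorial d ≤ (v - d + d) * v.descFactorial d :=
        Nat.mul_le_mul_right _ (by omega)
      rw [Nat.descFactorial_succ]
      calc v * v.descFactorial d ≤ (v - d + d) * v.descFactorial d := this
        _ = (v - d) * v.descFactorial d + d * v.descFactorial d := by ring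
        _ ≤ (v - d) * v.descFactorial d + d * n ^ d := by
            exact Nat.add_le_add_left (Nat.mul_le_mul_left d hdesc) _
    have h2 : d ^ 2 * (v * n ^ (d - 1)) ≤ d ^ 2 * n ^ d := by
      rcases d with _ | d'
      · simp
      · refine Nat.mul_le_mul_left _ ?_
        calc v * n ^ (d' + 1 - 1) = v * n ^ d' := by norm_num
          _ ≤ n * n ^ d' := Nat.mul_le_mul_right _ h
          _ = n ^ (d' + 1) := by ring
    calc v ^ (d + 1) = v * v ^ d := by ring
      _ ≤ v * (v.descFactorial d + d ^ 2 * n ^ (d - 1)) := Nat.mul_le_mul_left v ih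
      _ = v * v.descFactorial d + d ^ 2 * (v * n ^ (d - 1)) := by ring
      _ ≤ (v.descFactorial (d+1) + d * n ^ d) + d ^ 2 * n ^ d := Nat.add_le_add h1 h2
      _ = v.descFactorial (d+1) + (d + d ^ 2) * n ^ d := by ring
      _ ≤ v.descFactorial (d+1) + (d+1) ^ 2 * n ^ ((d+1) - 1) := by
          simp only [Nat.add_sub_cancel]
          exact Nat.add_le_add_left (Nat.mul_le_mul_right _ (by nlinarith)) _

lemma prod_sub_prod_le {ι : Type*} [DecidableEq ι] (s : Finset ι) (a b M e : ι → ℝ)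
    (h0 : ∀ i ∈ s, 0 ≤ a i) (hab : ∀ i ∈ s, a i ≤ b i) (hbM : ∀ i ∈ s, b i ≤ M i)
    (he : ∀ i ∈ s, b i - a i ≤ e i) :
    ∏ i ∈ s, b i - ∏ i ∈ s, a i ≤ ∑ i ∈ s, e i * ∏ j ∈ s.erase i, M j := by
  induction s using Finset.induction_on with
  | empty => simp
  | @insert x s hx ih =>
    have h0' : ∀ i ∈ s, 0 ≤ a i := fun i hi => h0 i (Finset.mem_insert_of_mem hi)
    have hab' : ∀ i ∈ s, a i ≤ b i := fun i hi => hab i (Finset.mem_insert_of_mem hi)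
    have hbM' : ∀ i ∈ s, b i ≤ M i := fun i hi => hbM i (Finset.mem_insert_of_mem hi)
    have he' : ∀ i ∈ s, b i - a i ≤ e i := fun i hi => he i (Finset.mem_insert_of_mem hi)
    have IH := ih h0' hab' hbM' he'
    have hA : 0 ≤ ∏ i ∈ s, a i := Finset.prod_nonneg h0'
    have hAB : ∏ i ∈ s, a i ≤ ∏ i ∈ s, b i := Finset.prod_le_prod h0' hab'
    have hBM : ∏ i ∈ s, b i ≤ ∏ i ∈ s, M i :=
      Finset.prod_le_prod (fun i hi => le_trans (h0' i hi) (hab' i hi)) hbM'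
    have hxm := Finset.mem_insert_self x s
    rw [Finset.prod_insert hx, Finset.prod_insert hx, Finset.sum_insert hx,
      Finset.erase_insert hx]
    have hsum : ∑ i ∈ s, e i * ∏ j ∈ (insert x s).erase i, M j
        = M x * ∑ i ∈ s, e i * ∏ j ∈ s.erase i, M j := by
      rw [Finset.mul_sum]
      refine Finset.sum_congr rfl fun i hi => ?_
      have hne : x ≠ i := fun h => hx (h ▸ hi)
      rw [Finset.erase_insert_of_ne hne, Finset.prod_insert
        (fun h => hx (Finset.mem_of_mem_erase h))]
      ring
    rw [hsum]
    have h0x := h0 x hxm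
    have habx := hab x hxm
    have hbMx := hbM x hxm
    have hex := he x hxm
    nlinarith [Finset.prod_nonneg (fun i hi => le_trans (le_trans (h0' i hi) (hab' i hi)) (hbM' i hi) : ∀ i ∈ s, (0:ℝ) ≤ M i) ]

lemma count_profile {n m : ℕ} (V : Fin m → Finset (Fin n))
    (hdisj : ∀ i j, i ≠ j → Disjoint (V i) (V j))
    (hcover : Finset.univ.biUnion V = Finset.univ) (r : ℕ) (D : Fin m → ℕ)
    (hD : ∑ i, D i = r) :
    ((Finset.powersetCard r (Finset.univ : Finset (Fin n))).filter
      (fun X => (fun i => (X ∩ V i).card) = D)).card = ∏ i, (V i).card.choose (D i) := by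
  classical
  have key : ∀ X : Finset (Fin n), Finset.univ.biUnion (fun i => X ∩ V i) = X := by
    intro X
    ext x
    simp only [Finset.mem_biUnion, Finset.mem_univ, true_and, Finset.mem_inter]
    constructor
    · rintro ⟨i, hx, _⟩; exact hx
    · intro hx
      have : x ∈ Finset.univ.biUnion V := by rw [hcover]; exact Finset.mem_univ x
      obtain ⟨i, _, hi⟩ := Finset.mem_biUnion.mp this
      exact ⟨i, hx, hi⟩
  have inter_eq : ∀ (g : ∀ i : Fin m, i ∈ (Finset.univ : Finset (Fin m)) → Finset (Fin n)),
      (∀ i, g i (Finset.mem_univ i) ⊆ V i) → ∀ i,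
      (Finset.univ.biUnion (fun j => g j (Finset.mem_univ j))) ∩ V i = g i (Finset.mem_univ i) := by
    intro g hg i
    ext x
    simp only [Finset.mem_inter, Finset.mem_biUnion, Finset.mem_univ, true_and]
    constructor
    · rintro ⟨⟨j, hj⟩, hvi⟩
      rcases eq_or_ne j i with rfl | hne
      · exact hj
      · exact absurd hvi (Finset.disjoint_left.mp (hdisj j i hne) (hg j hj))
    · intro hx
      exact ⟨⟨i, hx⟩, hg i hx⟩
  have hc : ∏ i, (V i).card.choose (D i)
      = (Finset.univ.pi (fun i => (V i).powersetCard (D i))).card := by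
    rw [Finset.card_pi]
    exact Finset.prod_congr rfl fun i _ => (Finset.card_powersetCard _ _).symm
  rw [hc]
  refine Finset.card_bij' (fun X _ => fun i _ => X ∩ V i)
    (fun g _ => Finset.univ.biUnion (fun i => g i (Finset.mem_univ i))) ?_ ?_ ?_ ?_
  · intro X hX
    simp only [Finset.mem_filter, Finset.mem_powersetCard] at hX
    refine Finset.mem_pi.mpr fun i _ => Finset.mem_powersetCard.mpr
      ⟨Finset.inter_subset_right, ?_⟩
    exact congrFun hX.2 i
  · intro g hg
    have hg' : ∀ i, g i (Finset.mem_univ i) ⊆ V i ∧ (g i (Finset.mem_univ i)).card = D i := by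
      intro i
      have := Finset.mem_pi.mp hg i (Finset.mem_univ i)
      exact Finset.mem_powersetCard.mp this
    have hdisj' : ∀ i ∈ (Finset.univ : Finset (Fin m)), ∀ j ∈ (Finset.univ : Finset (Fin m)),
        i ≠ j → Disjoint (g i (Finset.mem_univ i)) (g j (Finset.mem_univ j)) := by
      intro i _ j _ hij
      exact Finset.disjoint_of_subset_left (hg' i).1
        (Finset.disjoint_of_subset_right (hg' j).1 (hdisj i j hij))
    simp only [Finset.mem_filter, Finset.mem_powersetCard]
    refine ⟨⟨Finset.subset_univ _, ?_⟩, ?_⟩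
    · rw [Finset.card_biUnion hdisj']
      simp only [(fun i => (hg' i).2)]
      exact hD
    · funext i
      rw [inter_eq g (fun i => (hg' i).1) i]
      exact (hg' i).2
  · intro X _
    exact key X
  · intro g hg
    have hg' : ∀ i, g i (Finset.mem_univ i) ⊆ V i := by
      intro i
      exact (Finset.mem_powersetCard.mp (Finset.mem_pi.mp hg i (Finset.mem_univ i))).1
    funext i hi
    exact inter_eq g hg' i

/-- For each partition `[n] = V_1 ∪ ⋯ ∪ V_m`, the number of edges of the blow-up
`P((V_1,…,V_m))` (the `r`-subsets `X ⊆ [n]` whose profile `i ↦ |X ∩ V_i|` lies in `P`)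
differs from `λ_P(|V_1|/n,…,|V_m|/n)·C(n,r)` by at most `C·n^{r−1}`, where the constant
`C` depends only on `r`, `m` and `P`. -/
theorem stmt11 (r m : ℕ) (hr : 2 ≤ r) (hm : 1 ≤ m)
    (P : Finset (Fin m → ℕ)) (hP : ∀ D ∈ P, ∑ i, D i = r) :
    ∃ C : ℝ, ∀ n : ℕ, 1 ≤ n → ∀ V : Fin m → Finset (Fin n),
      (∀ i j, i ≠ j → Disjoint (V i) (V j)) →
      Finset.univ.biUnion V = Finset.univ →
      |(((Finset.powersetCard r (Finset.univ : Finset (Fin n))).filter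
            (fun X : Finset (Fin n) => (fun i => (X ∩ V i).card) ∈ P)).card : ℝ) -
          lagrangePolyP r m P (fun i => ((V i).card : ℝ) / (n : ℝ)) * (n.choose r : ℝ)| ≤
        C * (n : ℝ) ^ (r - 1) := by
  classical
  refine ⟨(P.card : ℝ) * (2 * (r : ℝ) ^ 2), ?_⟩
  intro n hn V hdisj hcover
  have hnpos : (0 : ℝ) < (n : ℝ) := by exact_mod_cast hn
  have hCnn : (0 : ℝ) ≤ (P.card : ℝ) * (2 * (r : ℝ) ^ 2) * (n : ℝ) ^ (r - 1) := by positivity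
  rcases lt_or_ge n r with hnr | hrn
  · -- degenerate case n < r : both terms vanish
    have h1 : (Finset.powersetCard r (Finset.univ : Finset (Fin n))) = ∅ :=
      Finset.powersetCard_eq_empty.mpr (by simpa using hnr)
    have h2 : n.choose r = 0 := Nat.choose_eq_zero_of_lt hnr
    rw [h1, h2]
    simpa using hCnn
  -- main case r ≤ n
  have hv : ∀ i, (V i).card ≤ n := fun i => by
    simpa using Finset.card_le_card (Finset.subset_univ (V i))
  have hfac : ∀ d : ℕ, (0 : ℝ) < (d.factorial : ℝ) := fun d => by
    exact_mod_cast d.factorial_pos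
  -- the exact count
  have hcount : (((Finset.powersetCard r (Finset.univ : Finset (Fin n))).filter
        (fun X : Finset (Fin n) => (fun i => (X ∩ V i).card) ∈ P)).card : ℕ)
      = ∑ D ∈ P, ∏ i, (V i).card.choose (D i) := by
    rw [Finset.card_eq_sum_card_fiberwise
      (f := fun X : Finset (Fin n) => (fun i => (X ∩ V i).card)) (t := P)
      (s := (Finset.powersetCard r (Finset.univ : Finset (Fin n))).filter
        (fun X : Finset (Fin n) => (fun i => (X ∩ V i).card) ∈ P))
      (fun X hX => (Finset.mem_filter.mp hX).2)]
    refine Finset.sum_congr rfl fun D hD' => ?_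
    rw [← count_profile V hdisj hcover r D (hP D hD')]
    congr 1
    ext X
    simp only [Finset.mem_filter]
    constructor
    · rintro ⟨⟨h1, _⟩, h3⟩; exact ⟨h1, h3⟩
    · rintro ⟨h1, h3⟩; exact ⟨⟨h1, h3 ▸ hD'⟩, h3⟩
  -- rewrite the Lagrange-polynomial term
  set t : ℝ := (n.descFactorial r : ℝ) / (n : ℝ) ^ r with ht
  have hlam : lagrangePolyP r m P (fun i => ((V i).card : ℝ) / (n : ℝ)) * (n.choose r : ℝ)
      = ∑ D ∈ P, t * ∏ i, ((V i).card : ℝ) ^ (D i) / ((D i).factorial : ℝ) := by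
    rw [lagrangePolyP, Finset.mul_sum, Finset.sum_mul]
    refine Finset.sum_congr rfl fun D hD' => ?_
    have key : ∏ i, (((V i).card : ℝ) / (n : ℝ)) ^ (D i) / ((D i).factorial : ℝ)
        = (∏ i, ((V i).card : ℝ) ^ (D i) / ((D i).factorial : ℝ)) / (n : ℝ) ^ r := by
      rw [eq_div_iff (by positivity), ← hP D hD', ← Finset.prod_pow_eq_pow_sum,
        ← Finset.prod_mul_distrib]
      refine Finset.prod_congr rfl fun i _ => ?_
      rw [div_pow]
      field_simp
    rw [key]
    have hdesc : (n.descFactorial r : ℝ) = (r.factorial : ℝ) * (n.choose r : ℝ) := by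
      exact_mod_cast congrArg (Nat.cast : ℕ → ℝ) (Nat.descFactorial_eq_factorial_mul_choose n r)
    rw [ht, hdesc]
    ring
  -- per-pattern estimate
  have perD : ∀ D ∈ P,
      |(∏ i, ((V i).card.choose (D i) : ℝ))
          - t * ∏ i, ((V i).card : ℝ) ^ (D i) / ((D i).factorial : ℝ)|
        ≤ 2 * (r : ℝ) ^ 2 * (n : ℝ) ^ (r - 1) := by
    intro D hD'
    set a : Fin m → ℝ := fun i => ((V i).card.choose (D i) : ℝ) with ha
    set b : Fin m → ℝ := fun i => ((V i).card : ℝ) ^ (D i) / ((D i).factorial : ℝ) with hb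
    set Mf : Fin m → ℝ := fun i => (n : ℝ) ^ (D i) with hMf
    set ef : Fin m → ℝ := fun i => ((D i : ℝ)) ^ 2 * (n : ℝ) ^ (D i - 1) with hef
    have hDle : ∀ i, D i ≤ r := fun i => by
      rw [← hP D hD']
      exact Finset.single_le_sum (fun j _ => Nat.zero_le (D j)) (Finset.mem_univ i)
    have ha_eq : ∀ i, a i = ((V i).card.descFactorial (D i) : ℝ) / ((D i).factorial : ℝ) := by
      intro i
      simp only [ha]
      rw [eq_div_iff (ne_of_gt (hfac (D i))), mul_comm]
      exact_mod_cast congrArg (Nat.cast : ℕ → ℝ)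
        (Nat.descFactorial_eq_factorial_mul_choose (V i).card (D i)).symm
    have hdesc_le : ∀ i, ((V i).card.descFactorial (D i) : ℝ) ≤ ((V i).card : ℝ) ^ (D i) := by
      intro i; exact_mod_cast Nat.descFactorial_le_pow (V i).card (D i)
    have h0 : ∀ i ∈ Finset.univ, (0 : ℝ) ≤ a i := fun i _ => Nat.cast_nonneg _
    have hone_le_fac : ∀ d : ℕ, (1 : ℝ) ≤ (d.factorial : ℝ) := fun d => by
      exact_mod_cast d.factorial_pos
    have hab : ∀ i ∈ Finset.univ, a i ≤ b i := by
      intro i _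
      rw [ha_eq i]
      simp only [hb]
      gcongr
      exact hdesc_le i
    have hbM : ∀ i ∈ Finset.univ, b i ≤ Mf i := by
      intro i _
      simp only [hb, hMf]
      calc ((V i).card : ℝ) ^ (D i) / ((D i).factorial : ℝ)
          ≤ ((V i).card : ℝ) ^ (D i) := div_le_self (by positivity) (hone_le_fac _)
        _ ≤ (n : ℝ) ^ (D i) :=
            pow_le_pow_left₀ (Nat.cast_nonneg _) (by exact_mod_cast hv i) _
    have he : ∀ i ∈ Finset.univ, b i - a i ≤ ef i := by
      intro i _
      rw [ha_eq i]
      simp only [hb, hef]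
      rw [div_sub_div_same]
      have h1 : ((V i).card : ℝ) ^ (D i) - ((V i).card.descFactorial (D i) : ℝ)
          ≤ ((D i : ℝ)) ^ 2 * (n : ℝ) ^ (D i - 1) := by
        have h2 := (Nat.cast_le (α := ℝ)).mpr (aux_pow_le n (D i) (V i).card (hv i))
        push_cast at h2
        linarith
      calc (((V i).card : ℝ) ^ (D i) - ((V i).card.descFactorial (D i) : ℝ)) / ((D i).factorial : ℝ)
          ≤ ((V i).card : ℝ) ^ (D i) - ((V i).card.descFactorial (D i) : ℝ) :=
            div_le_self (by linarith [hdesc_le i]) (hone_le_fac _)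
        _ ≤ _ := h1
    have hBA := prod_sub_prod_le Finset.univ a b Mf ef h0 hab hbM he
    -- bound the error sum
    have herase : ∀ i : Fin m, ∑ j ∈ Finset.univ.erase i, D j = r - D i := by
      intro i
      have h1 := Finset.add_sum_erase Finset.univ D (Finset.mem_univ i)
      have h2 := hP D hD'
      clear hcount
      omega
    have hsumb : ∑ i, ef i * ∏ j ∈ Finset.univ.erase i, Mf j
        ≤ (r : ℝ) ^ 2 * (n : ℝ) ^ (r - 1) := by
      have hterm : ∀ i : Fin m, ef i * ∏ j ∈ Finset.univ.erase i, Mf j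
          ≤ ((D i : ℝ)) ^ 2 * (n : ℝ) ^ (r - 1) := by
        intro i
        simp only [hef, hMf]
        rw [Finset.prod_pow_eq_pow_sum, herase i]
        rcases Nat.eq_zero_or_pos (D i) with h | h
        · simp [h]
        · rw [mul_assoc, ← pow_add]
          have : D i - 1 + (r - D i) = r - 1 := by
            have := hDle i
            clear hcount
            omega
          rw [this]
      calc ∑ i, ef i * ∏ j ∈ Finset.univ.erase i, Mf j
          ≤ ∑ i, ((D i : ℝ)) ^ 2 * (n : ℝ) ^ (r - 1) :=
            Finset.sum_le_sum fun i _ => hterm i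
        _ = (∑ i, ((D i : ℝ)) ^ 2) * (n : ℝ) ^ (r - 1) := by rw [← Finset.sum_mul]
        _ ≤ (r : ℝ) ^ 2 * (n : ℝ) ^ (r - 1) := by
            have hnat : ∑ i, (D i) ^ 2 ≤ r ^ 2 := by
              calc ∑ i, (D i) ^ 2 ≤ ∑ i, D i * r := by
                    refine Finset.sum_le_sum fun i _ => ?_
                    rw [pow_two]
                    exact Nat.mul_le_mul_left (D i) (hDle i)
                _ = r ^ 2 := by rw [← Finset.sum_mul, hP D hD', pow_two]
            have hcast : (∑ i, ((D i : ℝ)) ^ 2) ≤ (r : ℝ) ^ 2 := by exact_mod_cast hnat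
            exact mul_le_mul_of_nonneg_right hcast (by positivity)
    -- bounds on products and t
    have hb_nonneg : (0 : ℝ) ≤ ∏ i, b i :=
      Finset.prod_nonneg fun i hi => le_trans (h0 i hi) (hab i hi)
    have ha_nonneg : (0 : ℝ) ≤ ∏ i, a i := Finset.prod_nonneg h0
    have hab_prod : ∏ i, a i ≤ ∏ i, b i := Finset.prod_le_prod h0 hab
    have hbM_prod : ∏ i, b i ≤ (n : ℝ) ^ r := by
      calc ∏ i, b i ≤ ∏ i, Mf i :=
            Finset.prod_le_prod (fun i hi => le_trans (h0 i hi) (hab i hi)) hbM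
        _ = (n : ℝ) ^ r := by
            simp only [hMf]
            rw [Finset.prod_pow_eq_pow_sum, hP D hD']
    have ht_le_one : t ≤ 1 := by
      rw [ht, div_le_one (by positivity)]
      exact_mod_cast Nat.descFactorial_le_pow n r
    have ht_nonneg : (0 : ℝ) ≤ t := by rw [ht]; positivity
    have hone_sub_t : (1 - t) * (n : ℝ) ^ r ≤ (r : ℝ) ^ 2 * (n : ℝ) ^ (r - 1) := by
      have hcast : (n : ℝ) ^ r ≤ (n.descFactorial r : ℝ) + (r : ℝ) ^ 2 * (n : ℝ) ^ (r - 1) := by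
        exact_mod_cast aux_pow_le n r n le_rfl
      have : (1 - t) * (n : ℝ) ^ r = (n : ℝ) ^ r - (n.descFactorial r : ℝ) := by
        rw [ht]; field_simp
      rw [this]
      linarith
    have hsecond : (1 - t) * ∏ i, b i ≤ (r : ℝ) ^ 2 * (n : ℝ) ^ (r - 1) := by
      calc (1 - t) * ∏ i, b i ≤ (1 - t) * (n : ℝ) ^ r :=
            mul_le_mul_of_nonneg_left hbM_prod (by linarith)
        _ ≤ _ := hone_sub_t
    have hfirst : ∏ i, b i - ∏ i, a i ≤ (r : ℝ) ^ 2 * (n : ℝ) ^ (r - 1) :=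
      le_trans hBA hsumb
    rw [abs_le]
    constructor
    · nlinarith
    · nlinarith
  -- assemble
  rw [hcount, hlam]
  push_cast
  rw [← Finset.sum_sub_distrib]
  calc |∑ D ∈ P, ((∏ i, ((V i).card.choose (D i) : ℝ))
          - t * ∏ i, ((V i).card : ℝ) ^ (D i) / ((D i).factorial : ℝ))|
      ≤ ∑ D ∈ P, |(∏ i, ((V i).card.choose (D i) : ℝ))
          - t * ∏ i, ((V i).card : ℝ) ^ (D i) / ((D i).factorial : ℝ)| :=
        Finset.abs_sum_le_sum_abs _ _
    _ ≤ ∑ _D ∈ P, 2 * (r : ℝ) ^ 2 * (n : ℝ) ^ (r - 1) := Finset.sum_le_sum perD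
    _ = (P.card : ℝ) * (2 * (r : ℝ) ^ 2) * (n : ℝ) ^ (r - 1) := by
        rw [Finset.sum_const, nsmul_eq_mul]; ring
end

section
/- Let r ≥ 2 and m ≥ 1 be integers, P an r-pattern on [m], and 𝓕 a family of r-graphs such that every blow-up P((V_1,…,V_m)) (over all choices of disjoint finite sets V_1,…,V_m) is 𝓕-free. Then π(𝓕) ≥ Λ_P. -/
open Filter Topology

/-- An `r`-graph: a finite vertex set (identified with `Fin n`) together with a set of
edges, each of which is an `r`-element subset of the vertex set. -/
structure RGraph (r : ℕ) where
  n : ℕ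
  edges : Finset (Finset (Fin n))
  card_eq : ∀ e ∈ edges, e.card = r

/-- `F` is a subgraph of `G`: there is an injection of the vertices of `F` into the
vertices of `G` carrying every edge of `F` to an edge of `G`. -/
def RGraph.IsSubgraph {r : ℕ} (F G : RGraph r) : Prop :=
  ∃ f : Fin F.n → Fin G.n, Function.Injective f ∧ ∀ e ∈ F.edges, e.image f ∈ G.edges

/-- `G` is `𝓕`-free: no member of `𝓕` is a subgraph of `G`. -/
def RGraph.Free {r : ℕ} (𝓕 : Set (RGraph r)) (G : RGraph r) : Prop :=
  ∀ F ∈ 𝓕, ¬ F.IsSubgraph G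

/-- The Turán function `ex(n, 𝓕)`: the maximum number of edges in an `𝓕`-free
`r`-graph on `n` vertices. -/
noncomputable def exNum (r : ℕ) (𝓕 : Set (RGraph r)) (n : ℕ) : ℕ :=
  sSup {k : ℕ | ∃ G : RGraph r, G.n = n ∧ RGraph.Free 𝓕 G ∧ G.edges.card = k}

/-- `Π_∞^(r)`: the set of Turán densities `π(𝓕) = lim_{n→∞} ex(n,𝓕)/C(n,r)` over all
(possibly infinite, possibly empty) families `𝓕` of `r`-graphs. -/
def turanDensities (r : ℕ) : Set ℝ :=
  {x : ℝ | ∃ 𝓕 : Set (RGraph r),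
    Tendsto (fun n : ℕ => (exNum r 𝓕 n : ℝ) / (n.choose r : ℝ)) atTop (𝓝 x)}

/-- The Lagrangian `Λ_P`: the maximum of `λ_P` over the standard simplex `𝕊_m`. -/
noncomputable def lagrangianP (r m : ℕ) (P : Finset (Fin m → ℕ)) : ℝ :=
  sSup (lagrangePolyP r m P '' stdSimplex ℝ (Fin m))

/-- The blow-up `P((V_1,…,V_m))` of an `r`-pattern `P` with respect to sets
`V_1,…,V_m ⊆ [n]`: the `r`-graph on `[n]` whose edges are the `r`-subsets `X` whose
profile `i ↦ |X ∩ V_i|` lies in `P`. -/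
def blowupGraph (r n m : ℕ) (P : Finset (Fin m → ℕ)) (V : Fin m → Finset (Fin n)) :
    RGraph r where
  n := n
  edges := (Finset.powersetCard r (Finset.univ : Finset (Fin n))).filter
    (fun X : Finset (Fin n) => (fun i => (X ∩ V i).card) ∈ P)
  card_eq := fun e he => (Finset.mem_powersetCard.mp (Finset.mem_filter.mp he).1).2

lemma card_interval (n a b : ℕ) (hb : b ≤ n) :
    (Finset.univ.filter (fun v : Fin n => a ≤ (v : ℕ) ∧ (v : ℕ) < b)).card = b - a := by
  have h : ∀ x ∈ Finset.Ico a b, x < n := fun x hx => lt_of_lt_of_le (Finset.mem_Ico.mp hx).2 hb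
  have heq : (Finset.univ.filter (fun v : Fin n => a ≤ (v : ℕ) ∧ (v : ℕ) < b))
      = (Finset.Ico a b).attachFin h := by
    ext v
    simp [Finset.mem_attachFin, Finset.mem_Ico]
  rw [heq, Finset.card_attachFin, Nat.card_Ico]

lemma pow_div_le_choose (a d : ℕ) (t : ℝ) (h0 : 0 ≤ t)
    (h1 : t ≠ 0 → t + d ≤ (a : ℝ) + 1) :
    t ^ d / (d.factorial : ℝ) ≤ (a.choose d : ℝ) := by
  rcases eq_or_lt_of_le h0 with h | h
  · rcases Nat.eq_zero_or_pos d with rfl | hd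
    · simp
    · rw [← h, zero_pow (by omega), zero_div]
      positivity
  · have h1' := h1 (ne_of_gt h)
    have hd : (d : ℝ) ≤ (a : ℝ) + 1 - t := by linarith
    have hda : d ≤ a + 1 := by
      have : (d : ℝ) ≤ (a:ℝ) + 1 := by linarith
      exact_mod_cast this
    have key : t ^ d ≤ ((a + 1 - d : ℕ) : ℝ) ^ d := by
      apply pow_le_pow_left₀ h.le
      rw [Nat.cast_sub hda]
      push_cast
      linarith
    have key2 : ((a + 1 - d) ^ d : ℕ) ≤ d.factorial * a.choose d := by
      rw [← Nat.descFactorial_eq_factorial_mul_choose]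
      exact Nat.pow_sub_le_descFactorial a d
    rw [div_le_iff₀ (by positivity)]
    calc t ^ d ≤ ((a + 1 - d : ℕ) : ℝ) ^ d := key
      _ = (((a + 1 - d) ^ d : ℕ) : ℝ) := by push_cast; ring
      _ ≤ ((d.factorial * a.choose d : ℕ) : ℝ) := by exact_mod_cast key2
      _ = (a.choose d : ℝ) * (d.factorial : ℝ) := by push_cast; ring

lemma exNum_ub (r : ℕ) (𝓕 : Set (RGraph r)) (n : ℕ) :
    n.choose r ∈ upperBounds
      {k : ℕ | ∃ G : RGraph r, G.n = n ∧ RGraph.Free 𝓕 G ∧ G.edges.card = k} := by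
  rintro k ⟨G, hGn, -, rfl⟩
  calc G.edges.card ≤ (Finset.powersetCard r (Finset.univ : Finset (Fin G.n))).card :=
        Finset.card_le_card fun e he =>
          Finset.mem_powersetCard.mpr ⟨Finset.subset_univ e, G.card_eq e he⟩
    _ = n.choose r := by
        rw [Finset.card_powersetCard, Finset.card_univ, Fintype.card_fin, hGn]

lemma blowup_card (r n m : ℕ) (P : Finset (Fin m → ℕ)) (hP : ∀ D ∈ P, ∑ i, D i = r)
    (V : Fin m → Finset (Fin n)) (hdisj : ∀ i j, i ≠ j → Disjoint (V i) (V j)) :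
    ∑ D ∈ P, ∏ i, ((V i).card.choose (D i)) ≤ (blowupGraph r n m P V).edges.card := by
  classical
  have hcard : (P.sigma fun D => Fintype.piFinset fun i => (V i).powersetCard (D i)).card
      = ∑ D ∈ P, ∏ i, ((V i).card.choose (D i)) := by
    rw [Finset.card_sigma]
    refine Finset.sum_congr rfl fun D _ => ?_
    rw [Fintype.card_piFinset]
    exact Finset.prod_congr rfl fun i _ => Finset.card_powersetCard _ _
  rw [← hcard]
  have hinter : ∀ (S : Fin m → Finset (Fin n)), (∀ i, S i ⊆ V i) →
      ∀ j, (Finset.univ.biUnion S) ∩ V j = S j := by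
    intro S hS j
    ext a
    simp only [Finset.mem_inter, Finset.mem_biUnion, Finset.mem_univ, true_and]
    constructor
    · rintro ⟨⟨i, hai⟩, haj⟩
      rcases eq_or_ne i j with rfl | hij
      · exact hai
      · exact absurd haj (Finset.disjoint_left.mp (hdisj i j hij) (hS i hai))
    · intro ha
      exact ⟨⟨j, ha⟩, hS j ha⟩
  apply Finset.card_le_card_of_injOn (fun p => Finset.univ.biUnion p.2)
  · rintro ⟨D, S⟩ hp
    rw [Finset.mem_coe, Finset.mem_sigma] at hp
    obtain ⟨hD, hS⟩ := hp
    rw [Fintype.mem_piFinset] at hS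
    have hsub : ∀ i, S i ⊆ V i := fun i => (Finset.mem_powersetCard.mp (hS i)).1
    have hcardS : ∀ i, (S i).card = D i := fun i => (Finset.mem_powersetCard.mp (hS i)).2
    show Finset.univ.biUnion S ∈ (Finset.powersetCard r (Finset.univ : Finset (Fin n))).filter (fun X : Finset (Fin n) => (fun i => (X ∩ V i).card) ∈ P)
    rw [Finset.mem_filter, Finset.mem_powersetCard]
    refine ⟨⟨Finset.subset_univ _, ?_⟩, ?_⟩
    · rw [Finset.card_biUnion]
      · rw [← hP D hD]
        exact Finset.sum_congr rfl fun i _ => hcardS i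
      · intro i _ j _ hij
        exact Finset.disjoint_of_subset_left (hsub i)
          (Finset.disjoint_of_subset_right (hsub j) (hdisj i j hij))
    · have heq : (fun i => ((Finset.univ.biUnion S) ∩ V i).card) = D := by
        funext j
        rw [hinter S hsub j]
        exact hcardS j
      rw [heq]; exact hD
  · rintro ⟨D1, S1⟩ h1 ⟨D2, S2⟩ h2 heq
    simp only [Finset.coe_sigma, Set.mem_sigma_iff, Finset.mem_coe, Fintype.mem_piFinset] at h1 h2
    have hsub1 : ∀ i, S1 i ⊆ V i := fun i => (Finset.mem_powersetCard.mp (h1.2 i)).1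
    have hsub2 : ∀ i, S2 i ⊆ V i := fun i => (Finset.mem_powersetCard.mp (h2.2 i)).1
    have hS : S1 = S2 := by
      funext j
      rw [← hinter S1 hsub1 j, ← hinter S2 hsub2 j]
      simp only at heq
      exact congrArg (· ∩ V j) heq
    have hD : D1 = D2 := by
      funext j
      rw [← (Finset.mem_powersetCard.mp (h1.2 j)).2, ← (Finset.mem_powersetCard.mp (h2.2 j)).2, hS]
    subst hD
    rw [hS]

lemma lagrange_cont (m : ℕ) (P : Finset (Fin m → ℕ)) (r : ℕ) (x : Fin m → ℝ) :
    Continuous (fun t : ℝ => lagrangePolyP r m P (fun i => max (x i - t) 0)) := by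
  unfold lagrangePolyP
  apply continuous_const.mul
  apply continuous_finset_sum
  intro D _
  apply continuous_finset_prod
  intro i _
  exact (((continuous_const.sub continuous_id).max continuous_const).pow _).div_const _

/-- If every blow-up of the `r`-pattern `P` (over all choices of disjoint sets
`V_1,…,V_m`) is `𝓕`-free, then the Turán density of `𝓕` is at least `Λ_P`. -/
theorem stmt12 (r m : ℕ) (hr : 2 ≤ r) (hm : 1 ≤ m)
    (P : Finset (Fin m → ℕ)) (hP : ∀ D ∈ P, ∑ i, D i = r)
    (𝓕 : Set (RGraph r))
    (hfree : ∀ n : ℕ, ∀ V : Fin m → Finset (Fin n),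
      (∀ i j, i ≠ j → Disjoint (V i) (V j)) →
      Finset.univ.biUnion V = Finset.univ →
      RGraph.Free 𝓕 (blowupGraph r n m P V)) :
    lagrangianP r m P ≤
      liminf (fun n : ℕ => (exNum r 𝓕 n : ℝ) / (n.choose r : ℝ)) atTop := by
  obtain ⟨m, rfl⟩ : ∃ m', m = m' + 1 := ⟨m - 1, (Nat.succ_pred_eq_of_pos hm).symm⟩
  set f : ℕ → ℝ := fun n => (exNum r 𝓕 n : ℝ) / (n.choose r : ℝ) with hfdef
  have hf0 : ∀ n, 0 ≤ f n := fun n => div_nonneg (Nat.cast_nonneg _) (Nat.cast_nonneg _)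
  have hf1 : ∀ n, f n ≤ 1 := by
    intro n
    rcases eq_or_ne ((n.choose r : ℝ)) 0 with h | h
    · simp [hfdef, h]
    · rw [hfdef]
      simp only
      rw [div_le_one (lt_of_le_of_ne (Nat.cast_nonneg _) (Ne.symm h))]
      exact_mod_cast csSup_le' (exNum_ub r 𝓕 n)
  have hcob : IsCoboundedUnder (· ≥ ·) atTop f := isCoboundedUnder_ge_of_le atTop hf1
  have key : ∀ x ∈ stdSimplex ℝ (Fin (m+1)), lagrangePolyP r (m+1) P x ≤ liminf f atTop := by
    intro x hx
    obtain ⟨hx0, hx1⟩ := hx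
    set g : ℕ → ℝ :=
      fun n => lagrangePolyP r (m+1) P (fun i => max (x i - ((r:ℝ)+2)/(n:ℝ)) 0) with hgdef
    have hgt : Tendsto g atTop (𝓝 (lagrangePolyP r (m+1) P x)) := by
      have h1 := (lagrange_cont (m+1) P r x).tendsto (0:ℝ)
      have h2 := h1.comp (tendsto_const_div_atTop_nhds_zero_nat ((r:ℝ)+2))
      have h3 : (fun i => max (x i - 0) 0) = x := by
        funext i
        rw [sub_zero, max_eq_left (hx0 i)]
      rw [h3] at h2
      exact h2
    have hev : ∀ᶠ n in atTop, g n ≤ f n := by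
      filter_upwards [eventually_ge_atTop (r+2)] with n hrn
      have hn0 : 0 < n := by omega
      have hnR : (0:ℝ) < n := by exact_mod_cast hn0
      set y : Fin (m+1) → ℝ := fun i => max (x i - ((r:ℝ)+2)/(n:ℝ)) 0 with hydef
      have hy0 : ∀ i, 0 ≤ y i := fun i => le_max_right _ _
      -- sizes
      set A : ℕ := ∑ j : Fin m, ⌊x (Fin.castSucc j) * n⌋₊ with hAdef
      have hxsum : ∑ j : Fin m, x (Fin.castSucc j) = 1 - x (Fin.last m) := by
        have h := hx1
        rw [Fin.sum_univ_castSucc] at h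
        linarith
      have hAle : (A:ℝ) ≤ (1 - x (Fin.last m)) * n := by
        rw [hAdef]
        push_cast
        calc ∑ j : Fin m, ((⌊x (Fin.castSucc j) * n⌋₊ : ℝ))
            ≤ ∑ j : Fin m, x (Fin.castSucc j) * n :=
              Finset.sum_le_sum fun j _ => Nat.floor_le (mul_nonneg (hx0 _) hnR.le)
          _ = (1 - x (Fin.last m)) * n := by rw [← Finset.sum_mul, hxsum]
      have hAn : A ≤ n := by
        have hlast : 0 ≤ x (Fin.last m) := hx0 _
        have h : (A:ℝ) ≤ (n:ℝ) := le_trans hAle (by nlinarith)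
        exact_mod_cast h
      set sizes : Fin (m+1) → ℕ := fun i => if i = Fin.last m then n - A else ⌊x i * n⌋₊
        with hsizesdef
      have hsum : ∑ i, sizes i = n := by
        rw [Fin.sum_univ_castSucc]
        have h1 : ∀ j : Fin m, sizes (Fin.castSucc j) = ⌊x (Fin.castSucc j) * n⌋₊ := by
          intro j
          rw [hsizesdef]
          simp only [if_neg (Fin.castSucc_lt_last j).ne]
        rw [Finset.sum_congr rfl (fun j _ => h1 j)]
        have h2 : sizes (Fin.last m) = n - A := by simp [hsizesdef]
        rw [h2, ← hAdef]
        omega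
      have hszR : ∀ i, x i * n - 1 ≤ (sizes i : ℝ) := by
        intro i
        rcases eq_or_ne i (Fin.last m) with rfl | hi
        · have h2 : sizes (Fin.last m) = n - A := by simp [hsizesdef]
          rw [h2, Nat.cast_sub hAn]
          nlinarith [hAle]
        · have h2 : sizes i = ⌊x i * n⌋₊ := by simp [hsizesdef, hi]
          rw [h2]
          exact (Nat.sub_one_lt_floor _).le
      -- intervals
      set c : Fin (m+1) → ℕ := fun i => ∑ j ∈ Finset.Iio i, sizes j with hcdef
      have hcadd : ∀ i, c i + sizes i = ∑ j ∈ Finset.Iic i, sizes j := by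
        intro i
        show (∑ j ∈ Finset.Iio i, sizes j) + sizes i = _
        rw [← Finset.Iio_insert, Finset.sum_insert (by simp)]
        omega
      have hcle : ∀ i, c i + sizes i ≤ n := by
        intro i
        rw [hcadd, ← hsum]
        exact Finset.sum_le_sum_of_subset (Finset.subset_univ _)
      have hmono : ∀ i j : Fin (m+1), i < j → c i + sizes i ≤ c j := by
        intro i j hij
        rw [hcadd, hcdef]
        apply Finset.sum_le_sum_of_subset
        intro k hk
        simp only [Finset.mem_Iic] at hk
        simp only [Finset.mem_Iio]
        exact lt_of_le_of_lt hk hij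
      set V : Fin (m+1) → Finset (Fin n) :=
        fun i => Finset.univ.filter (fun v : Fin n => c i ≤ (v:ℕ) ∧ (v:ℕ) < c i + sizes i)
        with hVdef
      have hVcard : ∀ i, (V i).card = sizes i := by
        intro i
        rw [hVdef]
        simp only
        rw [card_interval n _ _ (hcle i)]
        omega
      have hVdisj : ∀ i j, i ≠ j → Disjoint (V i) (V j) := by
        intro i j hij
        rw [Finset.disjoint_left]
        intro v hvi hvj
        rw [hVdef, Finset.mem_filter] at hvi hvj
        rcases lt_or_gt_of_ne hij with h | h
        · have := hmono i j h
          omega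
        · have := hmono j i h
          omega
      have hVcover : Finset.univ.biUnion V = Finset.univ := by
        apply Finset.eq_univ_of_forall
        intro v
        rw [Finset.mem_biUnion]
        set T := Finset.univ.filter (fun i : Fin (m+1) => c i ≤ (v:ℕ)) with hTdef
        have hT0 : (0 : Fin (m+1)) ∈ T := by
          rw [hTdef, Finset.mem_filter]
          refine ⟨Finset.mem_univ _, ?_⟩
          have h0 : Finset.Iio (0 : Fin (m+1)) = ∅ := by
            ext k
            simp [Finset.mem_Iio]
          rw [hcdef]
          simp only [h0, Finset.sum_empty]
          omega
        set i := T.max' ⟨0, hT0⟩ with hidef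
        have hile : c i ≤ (v:ℕ) := (Finset.mem_filter.mp (T.max'_mem _)).2
        refine ⟨i, Finset.mem_univ _, ?_⟩
        rw [hVdef, Finset.mem_filter]
        refine ⟨Finset.mem_univ _, hile, ?_⟩
        by_contra hcon
        push_neg at hcon
        rcases eq_or_ne i (Fin.last m) with hlast | hlast
        · have hn : c i + sizes i = n := by
            rw [hcadd, ← hsum, hlast]
            congr 1
            ext k
            simp [Finset.mem_Iic, Fin.le_last]
          have := v.isLt
          omega
        · have hlt : (i:ℕ) < m := by
            have := Fin.lt_last_iff_ne_last.mpr hlast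
            exact this
          set j : Fin (m+1) := ⟨(i:ℕ)+1, by omega⟩ with hjdef
          have hij : i < j := by
            rw [Fin.lt_def]
            simp [hjdef]
          have hIioIic : Finset.Iio j = Finset.Iic i := by
            ext k
            simp only [Finset.mem_Iio, Finset.mem_Iic, Fin.lt_def, Fin.le_def, hjdef]
            omega
          have hcj : c j ≤ (v:ℕ) := by
            have : c j = c i + sizes i := by
              rw [hcadd, hcdef]
              simp only
              rw [hIioIic]
            omega
          have hjT : j ∈ T := by
            rw [hTdef, Finset.mem_filter]
            exact ⟨Finset.mem_univ _, hcj⟩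
          have hji := Finset.le_max' T j hjT
          rw [← hidef] at hji
          exact absurd hij (not_lt.mpr hji)
      -- the blow-up is free and has many edges
      have hFree := hfree n V hVdisj hVcover
      have hE : (∑ D ∈ P, ∏ i, ((sizes i).choose (D i))) ≤ exNum r 𝓕 n := by
        calc (∑ D ∈ P, ∏ i, (sizes i).choose (D i))
            = ∑ D ∈ P, ∏ i, ((V i).card).choose (D i) :=
              Finset.sum_congr rfl fun D _ => Finset.prod_congr rfl fun i _ => by rw [hVcard]
          _ ≤ (blowupGraph r n (m+1) P V).edges.card := blowup_card r n (m+1) P hP V hVdisj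
          _ ≤ exNum r 𝓕 n := le_csSup ⟨n.choose r, exNum_ub r 𝓕 n⟩
              ⟨blowupGraph r n (m+1) P V, rfl, hFree, rfl⟩
      -- numeric estimates
      have hyle : ∀ i (d : ℕ), d ≤ r → (n:ℝ) * y i ≠ 0 →
          (n:ℝ) * y i + d ≤ (sizes i : ℝ) + 1 := by
        intro i d hd hne
        have hymax : y i = x i - ((r:ℝ)+2)/n := by
          rcases le_or_gt (x i - ((r:ℝ)+2)/n) 0 with h | h
          · exfalso
            apply hne
            rw [hydef]
            simp only
            rw [max_eq_right h, mul_zero]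
          · rw [hydef]
            simp only
            rw [max_eq_left h.le]
        rw [hymax, mul_sub, mul_div_cancel₀ _ (ne_of_gt hnR)]
        have h1 := hszR i
        have hdr : (d:ℝ) ≤ (r:ℝ) := by exact_mod_cast hd
        nlinarith [hx0 i]
      have hprod : ∀ D ∈ P,
          (n:ℝ)^r * ∏ i, (y i)^(D i) / ((D i).factorial : ℝ)
            ≤ ∏ i, ((sizes i).choose (D i) : ℝ) := by
        intro D hD
        have hDr : ∀ i, D i ≤ r := by
          intro i
          rw [← hP D hD]
          exact Finset.single_le_sum (fun j _ => Nat.zero_le _) (Finset.mem_univ i)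
        have h1 : ∀ i, ((n:ℝ) * y i)^(D i) / ((D i).factorial : ℝ)
            ≤ ((sizes i).choose (D i) : ℝ) := by
          intro i
          apply pow_div_le_choose
          · exact mul_nonneg hnR.le (hy0 i)
          · exact hyle i (D i) (hDr i)
        have hnpow : ∏ i, ((n:ℝ))^(D i) = (n:ℝ)^r := by
          rw [Finset.prod_pow_eq_pow_sum, hP D hD]
        calc (n:ℝ)^r * ∏ i, (y i)^(D i) / ((D i).factorial : ℝ)
            = (∏ i, ((n:ℝ))^(D i)) * ∏ i, (y i)^(D i) / ((D i).factorial : ℝ) := by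
              rw [hnpow]
          _ = ∏ i, ((n:ℝ) * y i)^(D i) / ((D i).factorial : ℝ) := by
              rw [← Finset.prod_mul_distrib]
              exact Finset.prod_congr rfl fun i _ => by rw [mul_pow]; ring
          _ ≤ ∏ i, ((sizes i).choose (D i) : ℝ) :=
              Finset.prod_le_prod (fun i _ => by positivity) (fun i _ => h1 i)
      set T : ℝ := ∑ D ∈ P, ∏ i, (y i)^(D i) / ((D i).factorial : ℝ) with hTdef2
      have hT0 : 0 ≤ T := by
        rw [hTdef2]
        apply Finset.sum_nonneg
        intro D _
        apply Finset.prod_nonneg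
        intro i _
        positivity
      have hsumle : (n:ℝ)^r * T ≤ (exNum r 𝓕 n : ℝ) := by
        rw [hTdef2, Finset.mul_sum]
        calc ∑ D ∈ P, (n:ℝ)^r * ∏ i, (y i)^(D i) / ((D i).factorial : ℝ)
            ≤ ∑ D ∈ P, ∏ i, ((sizes i).choose (D i) : ℝ) :=
              Finset.sum_le_sum hprod
          _ = ((∑ D ∈ P, ∏ i, (sizes i).choose (D i) : ℕ) : ℝ) := by push_cast; rfl
          _ ≤ (exNum r 𝓕 n : ℝ) := by exact_mod_cast hE
      have hrle : r ≤ n := le_trans (Nat.le_add_right r 2) hrn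
      have hC : 0 < n.choose r := Nat.choose_pos hrle
      have hCR : (0:ℝ) < (n.choose r : ℝ) := by exact_mod_cast hC
      have hfact : (n.choose r : ℝ) * (r.factorial : ℝ) ≤ (n:ℝ)^r := by
        have h : r.factorial * n.choose r ≤ n^r := by
          rw [← Nat.descFactorial_eq_factorial_mul_choose]
          exact Nat.descFactorial_le_pow n r
        calc (n.choose r : ℝ) * (r.factorial : ℝ)
            = ((r.factorial * n.choose r : ℕ) : ℝ) := by push_cast; ring
          _ ≤ ((n^r : ℕ) : ℝ) := by exact_mod_cast h
          _ = (n:ℝ)^r := by push_cast; ring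
      have hgn : g n = (r.factorial : ℝ) * T := by
        rw [hgdef, hTdef2, hydef]
        rfl
      rw [hfdef, hgn]
      simp only
      rw [le_div_iff₀ hCR]
      calc (r.factorial : ℝ) * T * (n.choose r : ℝ)
          = T * ((n.choose r : ℝ) * (r.factorial : ℝ)) := by ring
        _ ≤ T * (n:ℝ)^r := mul_le_mul_of_nonneg_left hfact hT0
        _ = (n:ℝ)^r * T := mul_comm _ _
        _ ≤ (exNum r 𝓕 n : ℝ) := hsumle
    calc lagrangePolyP r (m+1) P x = liminf g atTop := (hgt.liminf_eq).symm
      _ ≤ liminf f atTop := liminf_le_liminf hev (hgt.isBoundedUnder_ge) hcob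
  rw [lagrangianP]
  apply Real.sSup_le
  · rintro z ⟨x, hx, rfl⟩
    exact key x hx
  · exact le_liminf_of_le hcob (Eventually.of_forall hf0)
end

section
/- Let r ≥ 2 and m ≥ 1 be integers and P an r-pattern on [m]. Let 𝓕_P be the family of all r-graphs F such that every blow-up of P is F-free. Then π(𝓕_P) = Λ_P; in particular, Λ_P belongs to Π_∞^(r). -/
open Filter Topology

/-! ### Auxiliary lemmas -/

section Aux

lemma lagrange_continuous (r m : ℕ) (P : Finset (Fin m → ℕ)) :
    Continuous (lagrangePolyP r m P) := by
  unfold lagrangePolyP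
  fun_prop

lemma lagrange_nonneg (r m : ℕ) (P : Finset (Fin m → ℕ)) {x : Fin m → ℝ}
    (hx : ∀ i, 0 ≤ x i) : 0 ≤ lagrangePolyP r m P x := by
  unfold lagrangePolyP
  have : 0 ≤ ∑ D ∈ P, ∏ i, (x i) ^ (D i) / ((D i).factorial : ℝ) := by
    refine Finset.sum_nonneg fun D _ => Finset.prod_nonneg fun i _ => ?_
    exact div_nonneg (pow_nonneg (hx i) _) (Nat.cast_nonneg _)
  positivity

lemma lagrange_max (r m : ℕ) (hm : 1 ≤ m) (P : Finset (Fin m → ℕ)) :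
    ∃ x ∈ stdSimplex ℝ (Fin m), lagrangianP r m P = lagrangePolyP r m P x ∧
      ∀ y ∈ stdSimplex ℝ (Fin m), lagrangePolyP r m P y ≤ lagrangePolyP r m P x := by
  have hne : (stdSimplex ℝ (Fin m)).Nonempty := by
    haveI : Nonempty (Fin m) := ⟨⟨0, hm⟩⟩
    exact ⟨_, ite_eq_mem_stdSimplex ℝ (Classical.arbitrary (Fin m))⟩
  exact (isCompact_stdSimplex ℝ (Fin m)).exists_sSup_image_eq_and_ge hne
    (lagrange_continuous r m P).continuousOn

lemma le_lagrangian (r m : ℕ) (hm : 1 ≤ m) (P : Finset (Fin m → ℕ)) {x : Fin m → ℝ}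
    (hx : x ∈ stdSimplex ℝ (Fin m)) : lagrangePolyP r m P x ≤ lagrangianP r m P := by
  obtain ⟨z, hz, hz1, hz2⟩ := lagrange_max r m hm P
  rw [hz1]
  exact hz2 x hx

lemma lagrangian_nonneg (r m : ℕ) (hm : 1 ≤ m) (P : Finset (Fin m → ℕ)) :
    0 ≤ lagrangianP r m P := by
  obtain ⟨z, hz, hz1, _⟩ := lagrange_max r m hm P
  rw [hz1]
  exact lagrange_nonneg r m P hz.1

variable {r n' m : ℕ} {V : Fin m → Finset (Fin n')} {P : Finset (Fin m → ℕ)}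

lemma biUnion_inter_eq (hdis : ∀ i j, i ≠ j → Disjoint (V i) (V j))
    {A : Fin m → Finset (Fin n')} (hA : ∀ i, A i ⊆ V i) (i : Fin m) :
    (Finset.univ.biUnion A) ∩ V i = A i := by
  ext a
  simp only [Finset.mem_inter, Finset.mem_biUnion, Finset.mem_univ, true_and]
  constructor
  · rintro ⟨⟨j, hj⟩, hVi⟩
    rcases eq_or_ne j i with rfl | hne
    · exact hj
    · exact (Finset.disjoint_left.mp (hdis j i hne) (hA j hj) hVi).elim
  · intro ha
    exact ⟨⟨i, ha⟩, hA i ha⟩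

lemma eq_biUnion_inter (hcov : Finset.univ.biUnion V = Finset.univ)
    (X : Finset (Fin n')) : X = Finset.univ.biUnion (fun i => X ∩ V i) := by
  ext a
  simp only [Finset.mem_biUnion, Finset.mem_univ, true_and, Finset.mem_inter]
  constructor
  · intro ha
    have : a ∈ Finset.univ.biUnion V := by rw [hcov]; exact Finset.mem_univ a
    rcases Finset.mem_biUnion.mp this with ⟨i, _, hi⟩
    exact ⟨i, ha, hi⟩
  · rintro ⟨i, ha, _⟩; exact ha

lemma count_profile_le (hcov : Finset.univ.biUnion V = Finset.univ)
    (S : Finset (Fin n')) (D : Fin m → ℕ) :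
    ((Finset.powersetCard r (Finset.univ : Finset (Fin n'))).filter
      (fun X => X ⊆ S ∧ (fun i => (X ∩ V i).card) = D)).card
      ≤ ∏ i, ((S ∩ V i).card).choose (D i) := by
  classical
  have := Finset.card_le_card_of_injOn
    (f := fun X : Finset (Fin n') => fun i => X ∩ V i)
    (s := (Finset.powersetCard r (Finset.univ : Finset (Fin n'))).filter
      (fun X => X ⊆ S ∧ (fun i => (X ∩ V i).card) = D))
    (t := Fintype.piFinset (fun i => (S ∩ V i).powersetCard (D i)))
    (fun X hX => by
      rw [Finset.mem_coe, Finset.mem_filter] at hX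
      obtain ⟨-, hXS, hprof⟩ := hX
      rw [Finset.mem_coe, Fintype.mem_piFinset]
      intro i
      rw [Finset.mem_powersetCard]
      exact ⟨Finset.inter_subset_inter hXS le_rfl, congrFun hprof i⟩)
    (fun X hX Y hY hXY => by
      rw [eq_biUnion_inter hcov X, eq_biUnion_inter hcov Y]
      exact congrArg _ hXY)
  simpa [Fintype.card_piFinset] using this

lemma count_profile_ge (hdis : ∀ i j, i ≠ j → Disjoint (V i) (V j))
    (D : Fin m → ℕ) (hD : ∑ i, D i = r) :
    ∏ i, ((V i).card).choose (D i)
      ≤ ((Finset.powersetCard r (Finset.univ : Finset (Fin n'))).filter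
          (fun X => (fun i => (X ∩ V i).card) = D)).card := by
  classical
  have := Finset.card_le_card_of_injOn
    (f := fun A : Fin m → Finset (Fin n') => Finset.univ.biUnion A)
    (s := Fintype.piFinset (fun i => (V i).powersetCard (D i)))
    (t := (Finset.powersetCard r (Finset.univ : Finset (Fin n'))).filter
          (fun X => (fun i => (X ∩ V i).card) = D))
    (fun A hA => by
      rw [Finset.mem_coe, Fintype.mem_piFinset] at hA
      have hsub : ∀ i, A i ⊆ V i := fun i => (Finset.mem_powersetCard.mp (hA i)).1
      have hcard : ∀ i, (A i).card = D i := fun i => (Finset.mem_powersetCard.mp (hA i)).2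
      have hpd : ∀ i ∈ (Finset.univ : Finset (Fin m)), ∀ j ∈ Finset.univ, i ≠ j →
          Disjoint (A i) (A j) := fun i _ j _ hij =>
        (hdis i j hij).mono (hsub i) (hsub j)
      refine Finset.mem_filter.mpr ⟨Finset.mem_powersetCard.mpr ⟨Finset.subset_univ _, ?_⟩, ?_⟩
      · rw [Finset.card_biUnion hpd, ← hD]
        exact Finset.sum_congr rfl fun i _ => hcard i
      · funext i
        rw [biUnion_inter_eq hdis hsub i]
        exact hcard i)
    (fun A hA B hB hAB => by
      rw [Finset.mem_coe, Fintype.mem_piFinset] at hA hB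
      have hAB' : Finset.univ.biUnion A = Finset.univ.biUnion B := hAB
      funext i
      rw [← biUnion_inter_eq hdis (fun j => (Finset.mem_powersetCard.mp (hA j)).1) i, hAB',
        biUnion_inter_eq hdis (fun j => (Finset.mem_powersetCard.mp (hB j)).1) i])
  simpa [Fintype.card_piFinset] using this

lemma blowup_card_ge (hP : ∀ D ∈ P, ∑ i, D i = r)
    (hdis : ∀ i j, i ≠ j → Disjoint (V i) (V j)) :
    ∑ D ∈ P, ∏ i, ((V i).card).choose (D i) ≤ (blowupGraph r n' m P V).edges.card := by
  classical
  set cls : (Fin m → ℕ) → Finset (Finset (Fin n')) := fun D =>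
    (Finset.powersetCard r (Finset.univ : Finset (Fin n'))).filter
      (fun X => (fun i => (X ∩ V i).card) = D) with hcls
  have hdisj : ∀ D ∈ P, ∀ D' ∈ P, D ≠ D' → Disjoint (cls D) (cls D') := by
    intro D _ D' _ hne
    rw [Finset.disjoint_left]
    intro X hX hX'
    exact hne ((Finset.mem_filter.mp hX).2.symm.trans (Finset.mem_filter.mp hX').2)
  have hsub : P.biUnion cls ⊆ (blowupGraph r n' m P V).edges := by
    intro X hX
    rcases Finset.mem_biUnion.mp hX with ⟨D, hD, hXD⟩
    rcases Finset.mem_filter.mp hXD with ⟨h1, h2⟩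
    exact Finset.mem_filter.mpr ⟨h1, h2 ▸ hD⟩
  calc ∑ D ∈ P, ∏ i, ((V i).card).choose (D i)
      ≤ ∑ D ∈ P, (cls D).card :=
        Finset.sum_le_sum fun D hD => count_profile_ge hdis D (hP D hD)
    _ = (P.biUnion cls).card := (Finset.card_biUnion hdisj).symm
    _ ≤ _ := Finset.card_le_card hsub

lemma blowup_restrict_le (hcov : Finset.univ.biUnion V = Finset.univ) (S : Finset (Fin n')) :
    ((blowupGraph r n' m P V).edges.filter (· ⊆ S)).card
      ≤ ∑ D ∈ P, ∏ i, ((S ∩ V i).card).choose (D i) := by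
  classical
  set cls : (Fin m → ℕ) → Finset (Finset (Fin n')) := fun D =>
    (Finset.powersetCard r (Finset.univ : Finset (Fin n'))).filter
      (fun X => X ⊆ S ∧ (fun i => (X ∩ V i).card) = D) with hcls
  have hsub : (blowupGraph r n' m P V).edges.filter (· ⊆ S) ⊆ P.biUnion cls := by
    intro X hX
    rcases Finset.mem_filter.mp hX with ⟨hXe, hXS⟩
    rcases Finset.mem_filter.mp hXe with ⟨h1, h2⟩
    exact Finset.mem_biUnion.mpr ⟨_, h2, Finset.mem_filter.mpr ⟨h1, hXS, rfl⟩⟩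
  calc ((blowupGraph r n' m P V).edges.filter (· ⊆ S)).card
      ≤ (P.biUnion cls).card := Finset.card_le_card hsub
    _ ≤ ∑ D ∈ P, (cls D).card := Finset.card_biUnion_le
    _ ≤ _ := Finset.sum_le_sum fun D _ => count_profile_le hcov S D

lemma choose_le_real (s d : ℕ) : ((s.choose d : ℕ) : ℝ) ≤ (s:ℝ)^d / d.factorial := by
  rw [le_div_iff₀ (by positivity : (0:ℝ) < d.factorial)]
  have h : s.choose d * d.factorial ≤ s ^ d := by
    rw [mul_comm, ← Nat.descFactorial_eq_factorial_mul_choose]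
    exact Nat.descFactorial_le_pow s d
  calc ((s.choose d : ℕ) : ℝ) * d.factorial = ((s.choose d * d.factorial : ℕ) : ℝ) := by
        push_cast; ring
    _ ≤ ((s ^ d : ℕ) : ℝ) := by exact_mod_cast h
    _ = (s:ℝ)^d := by push_cast; ring

lemma choose_ge_real (r : ℕ) {s d : ℕ} (hd : d ≤ r) :
    (((s - r : ℕ) : ℝ))^d / d.factorial ≤ (s.choose d : ℕ) := by
  rw [div_le_iff₀ (by positivity : (0:ℝ) < d.factorial)]
  have h : (s - r) ^ d ≤ s.choose d * d.factorial := by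
    rw [mul_comm, ← Nat.descFactorial_eq_factorial_mul_choose,
      Nat.descFactorial_eq_prod_range]
    calc (s - r) ^ d = ∏ i ∈ Finset.range d, (s - r) := by
          rw [Finset.prod_const, Finset.card_range]
      _ ≤ ∏ i ∈ Finset.range d, (s - i) := by
          refine Finset.prod_le_prod' fun i hi => ?_
          exact Nat.sub_le_sub_left (le_trans (le_of_lt (Finset.mem_range.mp hi)) hd) s
  calc (((s - r : ℕ) : ℝ))^d = (((s - r)^d : ℕ) : ℝ) := by push_cast; ring
    _ ≤ ((s.choose d * d.factorial : ℕ) : ℝ) := by exact_mod_cast h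
    _ = (s.choose d : ℝ) * d.factorial := by push_cast; ring

lemma sum_prod_choose_le_lagrange (r m : ℕ) (P : Finset (Fin m → ℕ))
    (hP : ∀ D ∈ P, ∑ i, D i = r) (n : ℕ) (hn : 0 < n) (s : Fin m → ℕ) :
    ((∑ D ∈ P, ∏ i, (s i).choose (D i) : ℕ) : ℝ)
      ≤ lagrangePolyP r m P (fun i => (s i : ℝ) / n) * n ^ r / r.factorial := by
  have hnR : (0:ℝ) < n := by exact_mod_cast hn
  have key : ∀ D ∈ P, ((∏ i, (s i).choose (D i) : ℕ) : ℝ)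
      ≤ (n:ℝ)^r * ∏ i, ((s i : ℝ)/n) ^ (D i) / ((D i).factorial : ℝ) := by
    intro D hD
    push_cast
    calc (∏ i, ((s i).choose (D i) : ℝ))
        ≤ ∏ i, (s i : ℝ) ^ (D i) / ((D i).factorial : ℝ) := by
          refine Finset.prod_le_prod (fun i _ => by positivity) fun i _ => choose_le_real _ _
      _ = ∏ i, ((n:ℝ) ^ (D i) * (((s i : ℝ)/n) ^ (D i) / ((D i).factorial : ℝ))) := by
          refine Finset.prod_congr rfl fun i _ => ?_
          rw [div_pow]
          field_simp
      _ = (n:ℝ)^r * ∏ i, ((s i : ℝ)/n) ^ (D i) / ((D i).factorial : ℝ) := by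
          rw [Finset.prod_mul_distrib, Finset.prod_pow_eq_pow_sum, hP D hD]
  calc ((∑ D ∈ P, ∏ i, (s i).choose (D i) : ℕ) : ℝ)
      = ∑ D ∈ P, ((∏ i, (s i).choose (D i) : ℕ) : ℝ) := by push_cast; ring
    _ ≤ ∑ D ∈ P, (n:ℝ)^r * ∏ i, ((s i : ℝ)/n) ^ (D i) / ((D i).factorial : ℝ) :=
        Finset.sum_le_sum key
    _ = (n:ℝ)^r * ∑ D ∈ P, ∏ i, ((s i : ℝ)/n) ^ (D i) / ((D i).factorial : ℝ) := by
        rw [Finset.mul_sum]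
    _ = lagrangePolyP r m P (fun i => (s i : ℝ) / n) * n ^ r / r.factorial := by
        unfold lagrangePolyP
        field_simp

lemma lagrange_le_sum_prod_choose (r m : ℕ) (P : Finset (Fin m → ℕ))
    (hP : ∀ D ∈ P, ∑ i, D i = r) (n : ℕ) (hn : 0 < n) (s : Fin m → ℕ) :
    lagrangePolyP r m P (fun i => ((s i - r : ℕ) : ℝ) / n) * n ^ r / r.factorial
      ≤ ((∑ D ∈ P, ∏ i, (s i).choose (D i) : ℕ) : ℝ) := by
  have hnR : (0:ℝ) < n := by exact_mod_cast hn
  have key : ∀ D ∈ P, (n:ℝ)^r * ∏ i, (((s i - r : ℕ) : ℝ)/n) ^ (D i) / ((D i).factorial : ℝ)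
      ≤ ((∏ i, (s i).choose (D i) : ℕ) : ℝ) := by
    intro D hD
    have hd : ∀ i, D i ≤ r := by
      intro i
      rw [← hP D hD]
      exact Finset.single_le_sum (fun j _ => Nat.zero_le _) (Finset.mem_univ i)
    push_cast
    calc (n:ℝ)^r * ∏ i, (((s i - r : ℕ) : ℝ)/n) ^ (D i) / ((D i).factorial : ℝ)
        = ∏ i, ((n:ℝ) ^ (D i) * ((((s i - r : ℕ) : ℝ)/n) ^ (D i) / ((D i).factorial : ℝ))) := by
          rw [Finset.prod_mul_distrib, Finset.prod_pow_eq_pow_sum, hP D hD]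
      _ = ∏ i, ((s i - r : ℕ) : ℝ) ^ (D i) / ((D i).factorial : ℝ) := by
          refine Finset.prod_congr rfl fun i _ => ?_
          rw [div_pow]
          field_simp
      _ ≤ ∏ i, ((s i).choose (D i) : ℝ) := by
          refine Finset.prod_le_prod (fun i _ => by positivity) fun i _ =>
            choose_ge_real r (hd i)
  calc lagrangePolyP r m P (fun i => ((s i - r : ℕ) : ℝ) / n) * n ^ r / r.factorial
      = ∑ D ∈ P, (n:ℝ)^r * ∏ i, (((s i - r : ℕ) : ℝ)/n) ^ (D i) / ((D i).factorial : ℝ) := by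
        have habc : ∀ (a b : ℝ), ((r.factorial:ℝ) * a) * b / (r.factorial:ℝ) = b * a := by
          intro a b
          field_simp
        unfold lagrangePolyP
        rw [habc, Finset.mul_sum]
      _ ≤ ∑ D ∈ P, ((∏ i, (s i).choose (D i) : ℕ) : ℝ) := Finset.sum_le_sum key
      _ = ((∑ D ∈ P, ∏ i, (s i).choose (D i) : ℕ) : ℝ) := by push_cast; ring

lemma exists_partition {m : ℕ} (x : Fin m → ℝ) (hx : x ∈ stdSimplex ℝ (Fin m)) (n : ℕ) :
    ∃ V : Fin m → Finset (Fin n),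
      (∀ i j, i ≠ j → Disjoint (V i) (V j)) ∧
      Finset.univ.biUnion V = Finset.univ ∧
      (∀ i, x i * n - 1 ≤ ((V i).card : ℝ) ∧ ((V i).card : ℝ) ≤ x i * n + 1) := by
  classical
  set xe : ℕ → ℝ := fun j => if h : j < m then x ⟨j, h⟩ else 0 with hxe
  have hxe0 : ∀ j, 0 ≤ xe j := by
    intro j
    simp only [hxe]
    split
    · exact hx.1 _
    · exact le_refl 0
  set c : ℕ → ℕ := fun k => ⌈(∑ j ∈ Finset.range k, xe j) * n⌉₊ with hc
  have hcmono : Monotone c := by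
    intro k l hkl
    refine Nat.ceil_le_ceil (mul_le_mul_of_nonneg_right ?_ (Nat.cast_nonneg n))
    exact Finset.sum_le_sum_of_subset_of_nonneg (Finset.range_subset_range.mpr hkl)
      (fun j _ _ => hxe0 j)
  have hsum1 : ∑ j ∈ Finset.range m, xe j = 1 := by
    rw [← Fin.sum_univ_eq_sum_range]
    rw [← hx.2]
    exact Finset.sum_congr rfl fun i _ => by simp [hxe, i.isLt]
  have hcm : c m = n := by
    simp [hc, hsum1]
  have hc0 : c 0 = 0 := by simp [hc]
  have hlb : ∀ k, (∑ j ∈ Finset.range k, xe j) * n ≤ (c k : ℝ) := fun k => Nat.le_ceil _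
  have hub : ∀ k, (c k : ℝ) ≤ (∑ j ∈ Finset.range k, xe j) * n + 1 := by
    intro k
    have h0 : (0:ℝ) ≤ (∑ j ∈ Finset.range k, xe j) * n :=
      mul_nonneg (Finset.sum_nonneg fun j _ => hxe0 j) (Nat.cast_nonneg n)
    exact le_of_lt (Nat.ceil_lt_add_one h0)
  have hcle : ∀ i : Fin m, c (i.val + 1) ≤ n := fun i => hcm ▸ hcmono i.isLt
  set V : Fin m → Finset (Fin n) := fun i =>
    (Finset.Ico (c i.val) (c (i.val + 1))).attachFin
      (fun a ha => lt_of_lt_of_le (Finset.mem_Ico.mp ha).2 (hcle i)) with hV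
  have hmemV : ∀ (i : Fin m) (a : Fin n),
      a ∈ V i ↔ c i.val ≤ a.val ∧ a.val < c (i.val + 1) := by
    intro i a
    rw [hV]
    rw [Finset.mem_attachFin, Finset.mem_Ico]
  refine ⟨V, ?_, ?_, ?_⟩
  · have key : ∀ i j : Fin m, i.val < j.val → Disjoint (V i) (V j) := by
      intro i j hij
      rw [Finset.disjoint_left]
      intro a hai haj
      have h1 := (hmemV i a).mp hai
      have h2 := (hmemV j a).mp haj
      have : c (i.val + 1) ≤ c j.val := hcmono hij
      omega
    intro i j hij
    rcases lt_or_gt_of_ne (fun h => hij (Fin.val_injective h)) with h | h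
    · exact key i j h
    · exact (key j i h).symm
  · apply Finset.eq_univ_of_forall
    intro a
    rw [Finset.mem_biUnion]
    have hfind : ∀ k, a.val < c k → ∃ j, j < k ∧ c j ≤ a.val ∧ a.val < c (j + 1) := by
      intro k
      induction k with
      | zero => intro h; omega
      | succ k ih =>
        intro h
        by_cases hk : c k ≤ a.val
        · exact ⟨k, Nat.lt_succ_self k, hk, h⟩
        · rcases ih (by omega) with ⟨j, hj1, hj2, hj3⟩
          exact ⟨j, Nat.lt_succ_of_lt hj1, hj2, hj3⟩
    rcases hfind m (by rw [hcm]; exact a.isLt) with ⟨j, hj1, hj2, hj3⟩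
    exact ⟨⟨j, hj1⟩, Finset.mem_univ _, (hmemV ⟨j, hj1⟩ a).mpr ⟨hj2, hj3⟩⟩
  · intro i
    have hcard : (V i).card = c (i.val + 1) - c i.val := by
      rw [hV]
      rw [Finset.card_attachFin, Nat.card_Ico]
    have hle : c i.val ≤ c (i.val + 1) := hcmono (Nat.le_succ _)
    have hcardR : ((V i).card : ℝ) = (c (i.val + 1) : ℝ) - (c i.val : ℝ) := by
      rw [hcard]
      exact Nat.cast_sub hle
    have hstep : ∑ j ∈ Finset.range (i.val + 1), xe j
        = (∑ j ∈ Finset.range i.val, xe j) + x i := by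
      rw [Finset.sum_range_succ]
      congr 1
      simp [hxe, i.isLt]
    constructor
    · rw [hcardR]
      have h1 := hlb (i.val + 1)
      have h2 := hub i.val
      rw [hstep] at h1
      nlinarith [hxe0 i.val]
    · rw [hcardR]
      have h1 := hub (i.val + 1)
      have h2 := hlb i.val
      rw [hstep] at h1
      nlinarith

lemma edges_card_le {r : ℕ} (G : RGraph r) : G.edges.card ≤ (G.n).choose r := by
  have hsub : G.edges ⊆ Finset.powersetCard r (Finset.univ : Finset (Fin G.n)) := by
    intro e he
    exact Finset.mem_powersetCard.mpr ⟨Finset.subset_univ e, G.card_eq e he⟩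
  calc G.edges.card ≤ _ := Finset.card_le_card hsub
    _ = (G.n).choose r := by
        rw [Finset.card_powersetCard, Finset.card_univ, Fintype.card_fin]

end Aux

/-- Let `𝓕_P` be the family of all `r`-graphs `F` such that every blow-up of `P`
(over all choices of disjoint sets `V_1,…,V_m`) is `F`-free. Then
`π(𝓕_P) = Λ_P`; in particular, `Λ_P ∈ Π_∞^(r)`. -/
theorem stmt13 (r m : ℕ) (hr : 2 ≤ r) (hm : 1 ≤ m)
    (P : Finset (Fin m → ℕ)) (hP : ∀ D ∈ P, ∑ i, D i = r) :
    Tendsto (fun n : ℕ =>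
        (exNum r {F : RGraph r | ∀ n' : ℕ, ∀ V : Fin m → Finset (Fin n'),
            (∀ i j, i ≠ j → Disjoint (V i) (V j)) →
            Finset.univ.biUnion V = Finset.univ →
            ¬ F.IsSubgraph (blowupGraph r n' m P V)} n : ℝ) / (n.choose r : ℝ))
      atTop (𝓝 (lagrangianP r m P)) ∧
    lagrangianP r m P ∈ turanDensities r := by
  classical
  set 𝓕 : Set (RGraph r) := {F : RGraph r | ∀ n' : ℕ, ∀ V : Fin m → Finset (Fin n'),
      (∀ i j, i ≠ j → Disjoint (V i) (V j)) →
      Finset.univ.biUnion V = Finset.univ →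
      ¬ F.IsSubgraph (blowupGraph r n' m P V)} with h𝓕
  set Λ : ℝ := lagrangianP r m P with hΛ
  obtain ⟨xs, hxs, hxs1, hxs2⟩ := lagrange_max r m hm P
  -- the defining sets of exNum are nonempty and bounded
  have hbdd : ∀ n : ℕ, BddAbove {k : ℕ | ∃ G : RGraph r,
      G.n = n ∧ RGraph.Free 𝓕 G ∧ G.edges.card = k} := by
    intro n
    refine ⟨n.choose r, fun k hk => ?_⟩
    obtain ⟨G, hGn, _, hGc⟩ := hk
    rw [← hGc, ← hGn]
    exact edges_card_le G
  -- the empty graph is free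
  have hne : ∀ n : ℕ, (0 : ℕ) ∈ {k : ℕ | ∃ G : RGraph r,
      G.n = n ∧ RGraph.Free 𝓕 G ∧ G.edges.card = k} := by
    intro n
    refine ⟨⟨n, ∅, fun e he => absurd he (Finset.notMem_empty e)⟩, rfl, ?_, rfl⟩
    intro F hF hsubF
    obtain ⟨f, hfinj, hfmap⟩ := hsubF
    rcases Finset.eq_empty_or_nonempty F.edges with hFe | ⟨e, he⟩
    · -- edgeless graphs embed into a blow-up, so they are not in 𝓕
      set V : Fin m → Finset (Fin F.n) := fun i =>
        if i = (⟨0, hm⟩ : Fin m) then Finset.univ else ∅ with hVdef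
      refine hF F.n V ?_ ?_ ⟨id, Function.injective_id, ?_⟩
      · intro i j hij
        by_cases hi : i = (⟨0, hm⟩ : Fin m)
        · have hj : j ≠ (⟨0, hm⟩ : Fin m) := fun h => hij (hi.trans h.symm)
          simp [hVdef, hj]
        · simp [hVdef, hi]
      · apply Finset.eq_univ_of_forall
        intro a
        exact Finset.mem_biUnion.mpr ⟨⟨0, hm⟩, Finset.mem_univ _, by simp [hVdef]⟩
      · intro e he
        rw [hFe] at he
        exact absurd he (Finset.notMem_empty e)
    · exact absurd (hfmap e he) (Finset.notMem_empty _)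
  -- upper bound: a free graph on n ≥ 1 vertices has at most Λ n^r / r! edges
  have hupper : ∀ G : RGraph r, 0 < G.n → RGraph.Free 𝓕 G →
      (G.edges.card : ℝ) ≤ Λ * (G.n : ℝ) ^ r / r.factorial := by
    intro G hGn hGfree
    have hGG : G.IsSubgraph G := ⟨id, Function.injective_id, fun e he => by
      rwa [Finset.image_id]⟩
    have hGnot : G ∉ 𝓕 := fun h => hGfree G h hGG
    rw [h𝓕, Set.mem_setOf_eq] at hGnot
    push_neg at hGnot
    obtain ⟨n', V, hdis, hcov, f, hfinj, hfmap⟩ := hGnot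
    set S : Finset (Fin n') := Finset.univ.image f with hS
    have hScard : S.card = G.n := by
      rw [hS]; exact (Finset.card_image_of_injective _ hfinj).trans (by simp)
    set s : Fin m → ℕ := fun i => (S ∩ V i).card with hs
    have hsum : ∑ i, s i = G.n := by
      rw [← hScard]
      conv_rhs => rw [eq_biUnion_inter hcov S]
      rw [Finset.card_biUnion]
      intro i _ j _ hij
      exact (hdis i j hij).mono Finset.inter_subset_right Finset.inter_subset_right
    -- G.edges injects into edges of the blow-up inside S
    have hinj : G.edges.card ≤
        ((blowupGraph r n' m P V).edges.filter (· ⊆ S)).card := by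
      refine Finset.card_le_card_of_injOn (fun e => e.image f) (fun e he => ?_) ?_
      · refine Finset.mem_filter.mpr ⟨hfmap e he, ?_⟩
        intro a ha
        rcases Finset.mem_image.mp ha with ⟨b, _, rfl⟩
        exact Finset.mem_image.mpr ⟨b, Finset.mem_univ b, rfl⟩
      · intro e1 _ e2 _ h12
        exact Finset.image_injective hfinj h12
    have hx : (fun i => (s i : ℝ) / G.n) ∈ stdSimplex ℝ (Fin m) := by
      constructor
      · intro i
        positivity
      · rw [← Finset.sum_div]
        rw [show ∑ i, (s i : ℝ) = (G.n : ℝ) by exact_mod_cast congrArg Nat.cast hsum]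
        field_simp
    calc (G.edges.card : ℝ)
        ≤ (((blowupGraph r n' m P V).edges.filter (· ⊆ S)).card : ℝ) := by
          exact_mod_cast hinj
      _ ≤ ((∑ D ∈ P, ∏ i, (s i).choose (D i) : ℕ) : ℝ) := by
          exact_mod_cast blowup_restrict_le hcov S
      _ ≤ lagrangePolyP r m P (fun i => (s i : ℝ) / G.n) * (G.n : ℝ) ^ r / r.factorial :=
          sum_prod_choose_le_lagrange r m P hP G.n hGn s
      _ ≤ Λ * (G.n : ℝ) ^ r / r.factorial := by
          have := le_lagrangian r m hm P hx
          have hpos : (0:ℝ) ≤ (G.n : ℝ) ^ r / r.factorial := by positivity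
          rw [mul_div_assoc, mul_div_assoc]
          exact mul_le_mul_of_nonneg_right this hpos
  -- choose near-optimal partitions for the lower bound
  choose W hWdis hWcov hWcard using fun n => exists_partition xs hxs n
  set t : (n : ℕ) → Fin m → ℕ := fun n i => (W n i).card - r with ht
  set y : (n : ℕ) → Fin m → ℝ := fun n i => ((t n i : ℕ) : ℝ) / n with hy
  -- lower bound: exNum is at least the blow-up count
  have hlow : ∀ n : ℕ, 0 < n →
      lagrangePolyP r m P (y n) * (n : ℝ) ^ r / r.factorial
        ≤ (exNum r 𝓕 n : ℝ) := by
    intro n hn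
    have hfree : RGraph.Free 𝓕 (blowupGraph r n m P (W n)) := by
      intro F hF
      exact hF n (W n) (hWdis n) (hWcov n)
    have hmem : (blowupGraph r n m P (W n)).edges.card ∈ {k : ℕ | ∃ G : RGraph r,
        G.n = n ∧ RGraph.Free 𝓕 G ∧ G.edges.card = k} :=
      ⟨blowupGraph r n m P (W n), rfl, hfree, rfl⟩
    have h1 : (blowupGraph r n m P (W n)).edges.card ≤ exNum r 𝓕 n :=
      le_csSup (hbdd n) hmem
    calc lagrangePolyP r m P (y n) * (n : ℝ) ^ r / r.factorial
        ≤ ((∑ D ∈ P, ∏ i, ((W n i).card).choose (D i) : ℕ) : ℝ) :=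
          lagrange_le_sum_prod_choose r m P hP n hn (fun i => (W n i).card)
      _ ≤ ((blowupGraph r n m P (W n)).edges.card : ℝ) := by
          exact_mod_cast blowup_card_ge hP (hWdis n)
      _ ≤ (exNum r 𝓕 n : ℝ) := by exact_mod_cast h1
  -- y n → xs
  have hytendsto : Tendsto y atTop (𝓝 xs) := by
    rw [tendsto_pi_nhds]
    intro i
    have hlo : ∀ᶠ n : ℕ in atTop, xs i - ((r:ℝ) + 1) / n ≤ y n i := by
      filter_upwards [eventually_ge_atTop 1] with n hn
      have hnR : (0:ℝ) < n := by exact_mod_cast hn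
      have h1 := (hWcard n i).1
      have h2 : ((W n i).card : ℝ) - r ≤ ((t n i : ℕ) : ℝ) := by
        rw [ht]
        simp only
        rcases le_or_gt r ((W n i).card) with h | h
        · rw [Nat.cast_sub h]
        · have : (W n i).card - r = 0 := Nat.sub_eq_zero_of_le (le_of_lt h)
          rw [this]
          push_cast
          have : ((W n i).card : ℝ) < r := by exact_mod_cast h
          linarith
      have hnum : xs i * n - ((r:ℝ)+1) ≤ ((t n i : ℕ) : ℝ) := by linarith
      have hq : (xs i * n - ((r:ℝ)+1))/n ≤ ((t n i : ℕ) : ℝ)/n := by gcongr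
      rw [hy]
      simp only
      calc xs i - ((r:ℝ)+1)/n = (xs i * n - ((r:ℝ)+1))/n := by
            rw [sub_div, mul_div_cancel_right₀ _ (ne_of_gt hnR)]
        _ ≤ _ := hq
    have hhi : ∀ᶠ n : ℕ in atTop, y n i ≤ xs i + 1 / n := by
      filter_upwards [eventually_ge_atTop 1] with n hn
      have hnR : (0:ℝ) < n := by exact_mod_cast hn
      have h1 := (hWcard n i).2
      have h2 : ((t n i : ℕ) : ℝ) ≤ ((W n i).card : ℝ) := by
        exact_mod_cast Nat.sub_le _ _
      have hnum : ((t n i : ℕ) : ℝ) ≤ xs i * n + 1 := le_trans h2 h1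
      have hq : ((t n i : ℕ) : ℝ)/n ≤ (xs i * n + 1)/n := by gcongr
      rw [hy]
      simp only
      calc ((t n i : ℕ) : ℝ) / n ≤ (xs i * n + 1)/n := hq
        _ = xs i + 1/n := by rw [add_div, mul_div_cancel_right₀ _ (ne_of_gt hnR)]
    have hlot : Tendsto (fun n : ℕ => xs i - ((r:ℝ) + 1) / n) atTop (𝓝 (xs i)) := by
      have := tendsto_const_div_atTop_nhds_zero_nat ((r:ℝ) + 1)
      have h := (tendsto_const_nhds (x := xs i) (f := atTop (α := ℕ))).sub this
      simpa using h
    have hhit : Tendsto (fun n : ℕ => xs i + 1 / n) atTop (𝓝 (xs i)) := by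
      have := tendsto_const_div_atTop_nhds_zero_nat (1:ℝ)
      have h := (tendsto_const_nhds (x := xs i) (f := atTop (α := ℕ))).add this
      simpa using h
    exact tendsto_of_tendsto_of_tendsto_of_le_of_le' hlot hhit hlo hhi
  have hlagy : Tendsto (fun n => lagrangePolyP r m P (y n)) atTop (𝓝 Λ) := by
    rw [hΛ, hxs1]
    exact ((lagrange_continuous r m P).tendsto xs).comp hytendsto
  -- the correction factor n^r / (r! C(n,r)) tends to 1
  set g : ℕ → ℝ := fun n => (n : ℝ) ^ r / (r.factorial * n.choose r) with hg
  have hgt : Tendsto g atTop (𝓝 1) := by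
    have hprod : Tendsto (fun n : ℕ => ∏ j ∈ Finset.range r, ((n:ℝ) / ((n:ℝ) - j)))
        atTop (𝓝 (∏ j ∈ Finset.range r, (1:ℝ))) := by
      refine tendsto_finset_prod _ fun j hj => ?_
      have hbase : Tendsto (fun n : ℕ => 1 - (j:ℝ)/n) atTop (𝓝 (1 - 0)) :=
        (tendsto_const_nhds).sub (tendsto_const_div_atTop_nhds_zero_nat _)
      have hinv : Tendsto (fun n : ℕ => (1 - (j:ℝ)/n)⁻¹) atTop (𝓝 ((1 - 0:ℝ))⁻¹) :=
        hbase.inv₀ (by norm_num)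
      have heq : ∀ᶠ n : ℕ in atTop, (1 - (j:ℝ)/n)⁻¹ = (n:ℝ) / ((n:ℝ) - j) := by
        filter_upwards [eventually_gt_atTop j] with n hn
        have hn0 : 0 < n := Nat.lt_of_le_of_lt (Nat.zero_le j) hn
        have hnR : (0:ℝ) < n := by exact_mod_cast hn0
        have hnR' : (n:ℝ) ≠ 0 := ne_of_gt hnR
        have hnj : (0:ℝ) < (n:ℝ) - j := by
          have : (j:ℝ) < n := by exact_mod_cast hn
          linarith
        have h1 : (1 - (j:ℝ)/n) = ((n:ℝ) - j)/n := by field_simp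
        rw [h1, inv_div]
      have := hinv.congr' heq
      simpa using this
    have heq2 : ∀ᶠ n : ℕ in atTop, (∏ j ∈ Finset.range r, ((n:ℝ) / ((n:ℝ) - j))) = g n := by
      filter_upwards [eventually_ge_atTop r] with n hn
      have hfc : (r.factorial * n.choose r : ℝ) = ∏ j ∈ Finset.range r, ((n:ℝ) - j) := by
        have h1 : r.factorial * n.choose r = n.descFactorial r :=
          (Nat.descFactorial_eq_factorial_mul_choose n r).symm
        rw [show (r.factorial * n.choose r : ℝ) = ((r.factorial * n.choose r : ℕ) : ℝ) by
          push_cast; ring, h1, Nat.descFactorial_eq_prod_range]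
        push_cast
        refine Finset.prod_congr rfl fun j hj => ?_
        have hj' : j ≤ n := le_trans (le_of_lt (Finset.mem_range.mp hj)) hn
        rw [Nat.cast_sub hj']
      rw [hg]
      simp only
      rw [hfc, Finset.prod_div_distrib, Finset.prod_const, Finset.card_range]
    have := hprod.congr' heq2
    simpa using this
  -- main limit via squeeze
  have hmain : Tendsto (fun n : ℕ => (exNum r 𝓕 n : ℝ) / (n.choose r : ℝ)) atTop (𝓝 Λ) := by
    have hup : Tendsto (fun n : ℕ => Λ * g n) atTop (𝓝 Λ) := by
      have := (tendsto_const_nhds (x := Λ) (f := atTop (α := ℕ))).mul hgt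
      simpa using this
    refine tendsto_of_tendsto_of_tendsto_of_le_of_le' hlagy hup ?_ ?_
    · -- lower: λ(y n) ≤ exNum / C(n,r)
      filter_upwards [eventually_ge_atTop r, eventually_ge_atTop 1] with n hnr hn1
      have hn : 0 < n := hn1
      have hC : (0:ℝ) < (n.choose r : ℝ) := by
        exact_mod_cast Nat.choose_pos hnr
      have hfc : (r.factorial : ℝ) * n.choose r ≤ (n:ℝ)^r := by
        have h1 : r.factorial * n.choose r ≤ n ^ r := by
          rw [← Nat.descFactorial_eq_factorial_mul_choose]
          exact Nat.descFactorial_le_pow n r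
        calc (r.factorial : ℝ) * n.choose r = ((r.factorial * n.choose r : ℕ) : ℝ) := by
              push_cast; ring
          _ ≤ ((n ^ r : ℕ) : ℝ) := by exact_mod_cast h1
          _ = (n:ℝ)^r := by push_cast; ring
      have hlnn : 0 ≤ lagrangePolyP r m P (y n) := by
        refine lagrange_nonneg r m P fun i => ?_
        rw [hy]
        positivity
      have h1 := hlow n hn
      have key : lagrangePolyP r m P (y n) ≤
          lagrangePolyP r m P (y n) * (n : ℝ) ^ r / r.factorial / (n.choose r : ℝ) := by
        rw [le_div_iff₀ hC, le_div_iff₀ (by positivity : (0:ℝ) < (r.factorial : ℝ))]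
        calc lagrangePolyP r m P (y n) * (n.choose r : ℝ) * r.factorial
            = lagrangePolyP r m P (y n) * ((r.factorial : ℝ) * n.choose r) := by ring
          _ ≤ lagrangePolyP r m P (y n) * (n:ℝ)^r := mul_le_mul_of_nonneg_left hfc hlnn
      calc lagrangePolyP r m P (y n)
          ≤ lagrangePolyP r m P (y n) * (n : ℝ) ^ r / r.factorial / (n.choose r : ℝ) := key
        _ ≤ (exNum r 𝓕 n : ℝ) / (n.choose r : ℝ) := by gcongr
    · -- upper: exNum / C(n,r) ≤ Λ * g n
      filter_upwards [eventually_ge_atTop r, eventually_ge_atTop 1] with n hnr hn1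
      have hn : 0 < n := hn1
      have hC : (0:ℝ) < (n.choose r : ℝ) := by
        exact_mod_cast Nat.choose_pos hnr
      have hmem : exNum r 𝓕 n ∈ {k : ℕ | ∃ G : RGraph r,
          G.n = n ∧ RGraph.Free 𝓕 G ∧ G.edges.card = k} := Nat.sSup_mem ⟨0, hne n⟩ (hbdd n)
      obtain ⟨G, hGn, hGfree, hGcard⟩ := hmem
      have h1 : (exNum r 𝓕 n : ℝ) ≤ Λ * (n : ℝ) ^ r / r.factorial := by
        rw [← hGcard]
        have := hupper G (hGn ▸ hn) hGfree
        have hGnR : (G.n : ℝ) = (n : ℝ) := by rw [hGn]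
        rwa [hGnR] at this
      calc (exNum r 𝓕 n : ℝ) / (n.choose r : ℝ)
          ≤ (Λ * (n : ℝ) ^ r / r.factorial) / (n.choose r : ℝ) := by gcongr
        _ = Λ * g n := by
            simp only [hg]
            rw [div_div, mul_div_assoc]
  exact ⟨hmain, ⟨𝓕, hmain⟩⟩
end
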